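/- arXiv:1412.8418 — 11 statements merged into one kernel-verified Lean document; each statement's English description precedes it below -/
import Mathlib

section
/- Let G₁, …, G_s be finite RCC-groups such that for all i ≠ j, the only group homomorphism from G_i to G_j is the trivial one. Then the direct product G₁ × ⋯ × G_s is an RCC-group, i.e., every automorphism of G₁ × ⋯ × G_s has a regular cycle. -/
open Function

/-- If `G₁, …, G_s` are finite RCC-groups with only trivial homomorphisms between distinct
factors, then every automorphism of `G₁ × ⋯ × G_s` has a regular cycle. -/
theorem stmt1 {s : ℕ} (G : Fin s → Type*) [∀ i, Group (G i)] [∀ i, Fintype (G i)]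
    (hRCC : ∀ i, ∀ β : MulAut (G i), ∃ x : G i, Function.minimalPeriod (⇑β) x = orderOf β)
    (hHom : ∀ i j, i ≠ j → ∀ f : G i →* G j, f = 1) :
    ∀ α : MulAut (∀ i, G i), ∃ x : ∀ i, G i, Function.minimalPeriod (⇑α) x = orderOf α := by
  intro α
  classical
  -- key: any automorphism acts componentwise
  have key : ∀ (γ : MulAut (∀ i, G i)) (x : ∀ i, G i) (i : Fin s),
      γ x i = γ (Pi.mulSingle i (x i)) i := by
    intro γ
    have h : γ.toMonoidHom =
        { toFun := fun x i => γ (Pi.mulSingle i (x i)) i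
          map_one' := by funext i; simp
          map_mul' := fun x y => by
            funext i
            rw [Pi.mul_apply, Pi.mulSingle_mul, map_mul]
            rfl } := by
      apply MonoidHom.pi_ext
      intro i g
      funext j
      rcases eq_or_ne j i with rfl | hj
      · simp
      · have h1 : (Pi.evalMonoidHom G j).comp
            (γ.toMonoidHom.comp (MonoidHom.mulSingle G i)) = 1 := hHom i j (Ne.symm hj) _
        have h2 := DFunLike.congr_fun h1 g
        simp only [MonoidHom.coe_comp, Function.comp_apply, Pi.evalMonoidHom_apply,
          MonoidHom.mulSingle_apply, MonoidHom.one_apply] at h2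
        simp only [MonoidHom.coe_mk, OneHom.coe_mk, MulEquiv.coe_toMonoidHom]
        rw [Pi.mulSingle_eq_of_ne hj, Pi.mulSingle_one, map_one, Pi.one_apply]
        exact h2
    intro x i
    exact congrFun (DFunLike.congr_fun h x) i
  have leftinv : ∀ i (g : G i), α (Pi.mulSingle i (α.symm (Pi.mulSingle i g) i)) i = g := by
    intro i g
    rw [← key α (α.symm (Pi.mulSingle i g)) i, MulEquiv.apply_symm_apply, Pi.mulSingle_eq_same]
  have rightinv : ∀ i (g : G i), α.symm (Pi.mulSingle i (α (Pi.mulSingle i g) i)) i = g := by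
    intro i g
    rw [← key α.symm (α (Pi.mulSingle i g)) i, MulEquiv.symm_apply_apply, Pi.mulSingle_eq_same]
  set β : ∀ i, MulAut (G i) := fun i =>
    { toFun := fun g => α (Pi.mulSingle i g) i
      invFun := fun g => α.symm (Pi.mulSingle i g) i
      left_inv := fun g => rightinv i g
      right_inv := fun g => leftinv i g
      map_mul' := fun g h => by
        rw [Pi.mulSingle_mul, map_mul, Pi.mul_apply] } with hβ
  have hcomp : ∀ (x : ∀ i, G i) (i : Fin s), α x i = β i (x i) := fun x i => key α x i
  -- powers act componentwise
  have hpow : ∀ (n : ℕ) (x : ∀ i, G i) (i : Fin s), (α ^ n) x i = (β i ^ n) (x i) := by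
    intro n
    induction n with
    | zero => intro x i; simp
    | succ n ih =>
      intro x i
      rw [pow_succ', MulAut.mul_apply, hcomp, ih, pow_succ' (β i), MulAut.mul_apply]
  have hiter : ∀ (n : ℕ) (x : ∀ i, G i), (⇑α)^[n] x = (α ^ n) x := by
    intro n
    induction n with
    | zero => intro x; simp
    | succ n ih =>
      intro x
      rw [Function.iterate_succ_apply', ih, pow_succ', MulAut.mul_apply]
  have hiterβ : ∀ (i : Fin s) (n : ℕ) (g : G i), (⇑(β i))^[n] g = (β i ^ n) g := by
    intro i n
    induction n with
    | zero => intro g; simp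
    | succ n ih =>
      intro g
      rw [Function.iterate_succ_apply', ih, pow_succ', MulAut.mul_apply]
  -- pick regular points
  choose x hx using fun i => hRCC i (β i)
  refine ⟨x, ?_⟩
  set n := Function.minimalPeriod (⇑α) x with hn
  -- n divides orderOf α
  have hd1 : n ∣ orderOf α := by
    apply Function.IsPeriodicPt.minimalPeriod_dvd
    show (⇑α)^[orderOf α] x = x
    rw [hiter, pow_orderOf_eq_one]
    rfl
  -- orderOf α divides n
  have hper : (⇑α)^[n] x = x := Function.isPeriodicPt_minimalPeriod (⇑α) x
  have hd2 : orderOf α ∣ n := by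
    rw [orderOf_dvd_iff_pow_eq_one]
    ext y i
    rw [hpow]
    have hβn : β i ^ n = 1 := by
      rw [← orderOf_dvd_iff_pow_eq_one, ← hx i]
      apply Function.IsPeriodicPt.minimalPeriod_dvd
      show (⇑(β i))^[n] (x i) = x i
      rw [hiterβ, ← hpow, ← hiter, hper]
    rw [hβn]
    rfl
  exact Nat.dvd_antisymm hd1 hd2
end

section
/- Let p be a prime, n a positive integer, and α an automorphism of the elementary abelian group (ℤ/pℤ)^n. Then there exists an 𝔽_p-basis v₁, …, v_n of (ℤ/pℤ)^n such that for each i, the cycle length of v_i under α equals the order of α. -/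
open Polynomial Module Function DirectSum

section Aux

variable {R : Type} [CommRing R] [IsDomain R] [IsPrincipalIdealRing R]

lemma exists_coprime_cover {ι : Type} (s : Finset ι) (P : ι → R) (E : ι → ℕ) :
    ∃ J : Finset ι, J ⊆ s ∧
      (∀ j ∈ J, ∀ j' ∈ J, j ≠ j' → ¬ Associated (P j) (P j')) ∧
      (∀ i ∈ s, ∃ j ∈ J, P i ^ E i ∣ P j ^ E j) := by
  classical
  induction s using Finset.induction with
  | empty => exact ⟨∅, by simp⟩
  | @insert i0 s hi0 ih =>
    obtain ⟨J, hJs, hJpair, hJcov⟩ := ih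
    by_cases h : ∃ j ∈ J, Associated (P i0) (P j)
    · obtain ⟨j, hjJ, hassoc⟩ := h
      by_cases hE : E i0 ≤ E j
      · refine ⟨J, hJs.trans (Finset.subset_insert _ _), hJpair, ?_⟩
        intro i hi
        rcases Finset.mem_insert.mp hi with rfl | hi
        · exact ⟨j, hjJ, ((Associated.pow_pow (n := E i) hassoc).dvd).trans (pow_dvd_pow _ hE)⟩
        · exact hJcov i hi
      · push_neg at hE
        refine ⟨insert i0 (J.erase j), ?_, ?_, ?_⟩
        · intro x hx
          rcases Finset.mem_insert.mp hx with rfl | hx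
          · exact Finset.mem_insert_self _ _
          · exact Finset.mem_insert_of_mem (hJs (Finset.mem_of_mem_erase hx))
        · intro a ha b hb hab
          rcases Finset.mem_insert.mp ha with rfl | ha2
          · rcases Finset.mem_insert.mp hb with rfl | hb2
            · exact absurd rfl hab
            · exact fun hab2 => hJpair j hjJ b (Finset.mem_of_mem_erase hb2)
                (Ne.symm (Finset.ne_of_mem_erase hb2)) (hassoc.symm.trans hab2)
          · rcases Finset.mem_insert.mp hb with rfl | hb2
            · exact fun hab2 => hJpair j hjJ a (Finset.mem_of_mem_erase ha2)
                (Ne.symm (Finset.ne_of_mem_erase ha2)) (hassoc.symm.trans hab2.symm)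
            · exact hJpair a (Finset.mem_of_mem_erase ha2) b (Finset.mem_of_mem_erase hb2) hab
        · intro i hi
          rcases Finset.mem_insert.mp hi with rfl | hi
          · exact ⟨i, Finset.mem_insert_self _ _, dvd_rfl⟩
          · obtain ⟨j', hj', hdvd⟩ := hJcov i hi
            by_cases hjj : j' = j
            · subst hjj
              exact ⟨i0, Finset.mem_insert_self _ _, hdvd.trans
                (((Associated.pow_pow (n := E j') hassoc.symm).dvd).trans
                  (pow_dvd_pow _ hE.le))⟩
            · exact ⟨j', Finset.mem_insert_of_mem (Finset.mem_erase.mpr ⟨hjj, hj'⟩), hdvd⟩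
    · push_neg at h
      refine ⟨insert i0 J, Finset.insert_subset_insert _ hJs, ?_, ?_⟩
      · intro a ha b hb hab
        rcases Finset.mem_insert.mp ha with rfl | ha2
        · rcases Finset.mem_insert.mp hb with rfl | hb2
          · exact absurd rfl hab
          · exact h b hb2
        · rcases Finset.mem_insert.mp hb with rfl | hb2
          · exact fun hab2 => h a ha2 hab2.symm
          · exact hJpair a ha2 b hb2 hab
      · intro i hi
        rcases Finset.mem_insert.mp hi with rfl | hi
        · exact ⟨i, Finset.mem_insert_self _ _, dvd_rfl⟩
        · obtain ⟨j', hj', hdvd⟩ := hJcov i hi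
          exact ⟨j', Finset.mem_insert_of_mem hj', hdvd⟩

end Aux

section Span

variable {K : Type} [Field K] {M : Type} [AddCommGroup M] [Module K M] [Module.Finite K M]

set_option maxHeartbeats 1000000 in
theorem span_full_period (φ : M →ₗ[K] M) (hinj : Function.Injective φ) (m : ℕ) (hm : 0 < m)
    (hper : ∀ x : M, (φ ^ m) x = x)
    (hord : ∀ d : ℕ, (∀ x : M, (φ ^ d) x = x) → m ∣ d) :
    ⊤ ≤ Submodule.span K {x : M | ∀ q : ℕ, q.Prime → q ∣ m → (φ ^ (m / q)) x ≠ x} := by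
  classical
  -- the torsion `K[X]`-module structure
  have haev : ∀ (f : K[X]) (x : M), f • (AEval'.of φ x) = AEval'.of φ ((aeval φ f) x) := by
    intro f x
    rw [← Module.AEval.of_aeval_smul]
    rfl
  have htor : Module.IsTorsion K[X] (AEval' φ) := by
    intro y
    refine ⟨⟨X ^ m - 1, mem_nonZeroDivisors_of_ne_zero ?_⟩, ?_⟩
    · exact (Polynomial.monic_X_pow_sub_C (1 : K) hm.ne').ne_zero ∘ (by rw [C_1]; exact ·)
    · obtain ⟨x, rfl⟩ := (AEval'.of φ).surjective y
      rw [Submonoid.smul_def, haev]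
      simp only [map_sub, aeval_X_pow, map_one, LinearMap.sub_apply, Module.End.one_apply,
        hper x, sub_self, map_zero]
  obtain ⟨ι, fι, P, hP, E, ⟨e⟩⟩ :=
    Module.equiv_directSum_of_isTorsion (R := K[X]) (M := AEval' φ) htor
  haveI := fι
  -- the "kill" lemma: a polynomial divisible by all the prime powers annihilates everything
  have hkill : ∀ g : K[X], (∀ i, P i ^ E i ∣ g) →
      ∀ y : ⨁ i, K[X] ⧸ (Submodule.span K[X] {P i ^ E i}), g • y = 0 := by
    intro g hg y
    induction y using DirectSum.induction_on with
    | zero => rw [smul_zero]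
    | add a b ha hb => rw [smul_add, ha, hb, add_zero]
    | of i z =>
      obtain ⟨r, rfl⟩ := Submodule.Quotient.mk_surjective _ z
      rw [← DirectSum.lof_eq_of K[X], ← LinearMap.map_smul]
      have h1 : g • (Submodule.Quotient.mk r :
          K[X] ⧸ (Submodule.span K[X] {P i ^ E i})) = 0 := by
        rw [← Submodule.Quotient.mk_smul, Submodule.Quotient.mk_eq_zero]
        obtain ⟨c, hc⟩ := hg i
        exact Submodule.mem_span_singleton.mpr
          ⟨c * r, by rw [smul_eq_mul, smul_eq_mul, hc]; ring⟩
      rw [h1, map_zero]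
  have hzero : ∀ g : K[X], (∀ i, P i ^ E i ∣ g) → ∀ x : M, (aeval φ g) x = 0 := by
    intro g hg x
    have h3 : g • AEval'.of φ x = 0 := by
      apply e.injective
      rw [map_smul, hkill g hg, map_zero]
    rw [haev] at h3
    exact (AEval'.of φ).injective (by rw [h3, map_zero])
  have hmdvd : ∀ k d : ℕ, (∀ i, P i ^ E i ∣ X ^ k * ((X : K[X]) ^ d - 1)) → m ∣ d := by
    intro k d h
    refine hord d fun x => ?_
    have h0 := hzero _ h x
    rw [map_mul, aeval_X_pow, map_sub, aeval_X_pow, map_one, Module.End.mul_apply] at h0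
    have h3 : (φ ^ d - 1) x = 0 := by
      have hkinj : Function.Injective (φ ^ k : M →ₗ[K] M) := by
        rw [Module.End.coe_pow]; exact hinj.iterate k
      apply hkinj; rw [h0, map_zero]
    rw [LinearMap.sub_apply, Module.End.one_apply, sub_eq_zero] at h3
    exact h3
  -- choose a dominating pairwise-coprime subfamily
  obtain ⟨J, -, hJpair, hJcov⟩ := exists_coprime_cover (Finset.univ : Finset ι) P E
  have hcop : ∀ j ∈ J, ∀ j' ∈ J, j ≠ j' → IsCoprime (P j ^ E j) (P j' ^ E j') :=
    fun j hj j' hj' hne => IsCoprime.pow <| (hP j).coprime_iff_not_dvd.mpr fun hdvd =>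
      hJpair j hj j' hj' hne ((hP j).associated_of_dvd (hP j') hdvd)
  set v : ⨁ i, K[X] ⧸ (Submodule.span K[X] {P i ^ E i}) :=
    ∑ j ∈ J, DirectSum.lof K[X] ι _ j (Submodule.Quotient.mk 1) with hv
  have hvj : ∀ j ∈ J, v j = Submodule.Quotient.mk 1 := by
    intro j hj
    rw [hv, DFinsupp.finset_sum_apply, Finset.sum_eq_single_of_mem j hj]
    · rw [DirectSum.lof_eq_of, DirectSum.of_eq_same]
    · intro b hb hbj
      rw [DirectSum.lof_eq_of, DirectSum.of_eq_of_ne _ _ _ hbj.symm]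
  have hvnot : ∀ j ∉ J, v j = 0 := by
    intro j hj
    rw [hv, DFinsupp.finset_sum_apply]
    refine Finset.sum_eq_zero fun b hb => ?_
    rw [DirectSum.lof_eq_of, DirectSum.of_eq_of_ne _ _ _ (fun hbj => hj (by rw [hbj]; exact hb))]
  have hgvj : ∀ g : K[X], ∀ j ∈ J, (g • v) j = Submodule.Quotient.mk g := by
    intro g j hj
    rw [DFinsupp.smul_apply, hvj j hj, ← Submodule.Quotient.mk_smul, smul_eq_mul, mul_one]
  have hL1 : ∀ k d : ℕ, (X ^ k * ((X : K[X]) ^ d - 1)) • v = 0 → m ∣ d := by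
    intro k d h0
    refine hmdvd k d fun i => ?_
    obtain ⟨j, hj, hdvd⟩ := hJcov i (Finset.mem_univ i)
    refine hdvd.trans ?_
    have h1 : ((X ^ k * ((X : K[X]) ^ d - 1)) • v) j = 0 := by rw [h0]; rfl
    rw [hgvj _ j hj, Submodule.Quotient.mk_eq_zero] at h1
    obtain ⟨c, hc⟩ := Submodule.mem_span_singleton.mp h1
    exact ⟨c, by rw [← hc, smul_eq_mul, mul_comm]⟩
  have hnd : ∀ q' : ℕ, q'.Prime → q' ∣ m → ¬ m ∣ m / q' := by
    intro q' hq' hdq hmd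
    have hpos : 0 < m / q' := Nat.div_pos (Nat.le_of_dvd hm hdq) hq'.pos
    exact absurd (Nat.le_of_dvd hpos hmd) (not_le.mpr (Nat.div_lt_self hm hq'.one_lt))
  set S' : Set (⨁ i, K[X] ⧸ (Submodule.span K[X] {P i ^ E i})) :=
    {y | ∀ q' : ℕ, q'.Prime → q' ∣ m → ¬ ((X : K[X]) ^ (m / q') - 1) • y = 0} with hS'
  have hXkv : ∀ k : ℕ, ((X : K[X]) ^ k • v) ∈ S' := by
    intro k q' hq' hdq h0
    refine hnd q' hq' hdq (hL1 k (m / q') ?_)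
    rw [mul_comm, mul_smul]
    exact h0
  have hvS : v ∈ S' := by simpa using hXkv 0
  have hplus : ∀ i, i ∉ J → ∀ z, (DirectSum.lof K[X] ι
      (fun i => K[X] ⧸ (Submodule.span K[X] {P i ^ E i})) i z + v) ∈ S' := by
    intro i hiJ z q' hq' hdq h0
    have hv0 : ((X : K[X]) ^ (m / q') - 1) • v = 0 := by
      refine DFinsupp.ext fun j => ?_
      by_cases hj : j ∈ J
      · have h1 : (((X : K[X]) ^ (m / q') - 1) • (DirectSum.lof K[X] ι
            (fun i => K[X] ⧸ (Submodule.span K[X] {P i ^ E i})) i z + v)) j = 0 := by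
          rw [h0]; rfl
        rw [DFinsupp.smul_apply, DFinsupp.add_apply, DirectSum.lof_eq_of,
          DirectSum.of_eq_of_ne _ _ _ (fun hij => hiJ (by rw [← hij]; exact hj)), zero_add,
          ← DFinsupp.smul_apply] at h1
        rw [h1]; rfl
      · rw [DFinsupp.smul_apply, hvnot j hj, smul_zero]; rfl
    refine hnd q' hq' hdq (hL1 0 (m / q') ?_)
    rw [pow_zero, one_mul]
    exact hv0
  have hXv_mem : ∀ r : K[X], r • v ∈ Submodule.span K S' := by
    intro r
    induction r using Polynomial.induction_on' with
    | add f g hf hg => rw [add_smul]; exact Submodule.add_mem _ hf hg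
    | monomial k a =>
      rw [← C_mul_X_pow_eq_monomial, mul_smul]
      have hCa : (C a : K[X]) • ((X : K[X]) ^ k • v) = a • ((X : K[X]) ^ k • v) := by
        rw [← algebraMap_smul (K[X]) a ((X : K[X]) ^ k • v), Polynomial.algebraMap_eq]
      rw [hCa]
      exact Submodule.smul_mem _ a (Submodule.subset_span (hXkv k))
  have hspan' : ∀ y : ⨁ i, K[X] ⧸ (Submodule.span K[X] {P i ^ E i}),
      y ∈ Submodule.span K S' := by
    intro y
    induction y using DirectSum.induction_on with
    | zero => exact Submodule.zero_mem _
    | add a b ha hb => exact Submodule.add_mem _ ha hb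
    | of i z =>
      rw [← DirectSum.lof_eq_of K[X]]
      by_cases hiJ : i ∈ J
      · -- CRT : represent the element as r • v
        obtain ⟨r0, hr0⟩ := Submodule.Quotient.mk_surjective _ z
        have hcpr : IsCoprime (P i ^ E i) (∏ j ∈ J.erase i, P j ^ E j) :=
          IsCoprime.prod_right fun j hj => hcop i hiJ j (Finset.mem_of_mem_erase hj)
            (Ne.symm (Finset.ne_of_mem_erase hj))
        obtain ⟨a, b, hab⟩ := hcpr
        set r : K[X] := r0 * (b * ∏ j ∈ J.erase i, P j ^ E j) with hr
        have hrv : r • v = DirectSum.lof K[X] ι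
            (fun i => K[X] ⧸ (Submodule.span K[X] {P i ^ E i})) i z := by
          rw [hv, Finset.smul_sum, Finset.sum_eq_single_of_mem i hiJ]
          · rw [← LinearMap.map_smul]
            congr 1
            rw [← Submodule.Quotient.mk_smul, smul_eq_mul, mul_one, ← hr0]
            have hrr : r = r0 - (r0 * a) * (P i ^ E i) := by
              rw [hr]
              have : b * ∏ j ∈ J.erase i, P j ^ E j = 1 - a * P i ^ E i := by
                rw [← hab]; ring
              rw [this]; ring
            rw [hrr, ← sub_zero (Submodule.Quotient.mk r0 :
              K[X] ⧸ (Submodule.span K[X] {P i ^ E i}))]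
            rw [Submodule.Quotient.mk_sub]
            congr 1
            rw [Submodule.Quotient.mk_eq_zero]
            exact Submodule.mem_span_singleton.mpr ⟨r0 * a, by rw [smul_eq_mul]⟩
          · intro j hj hne
            have : r • (Submodule.Quotient.mk 1 :
                K[X] ⧸ (Submodule.span K[X] {P j ^ E j})) = 0 := by
              rw [← Submodule.Quotient.mk_smul, smul_eq_mul, mul_one,
                Submodule.Quotient.mk_eq_zero]
              have hdj : P j ^ E j ∣ r := by
                refine Dvd.dvd.trans (Finset.dvd_prod_of_mem (fun j => P j ^ E j)
                  (Finset.mem_erase.mpr ⟨hne, hj⟩)) ⟨r0 * b, by rw [hr]; ring⟩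
              obtain ⟨c, hc⟩ := hdj
              exact Submodule.mem_span_singleton.mpr ⟨c, by rw [smul_eq_mul, hc]; ring⟩
            rw [← LinearMap.map_smul, this]
            exact LinearMap.map_zero _
        rw [← hrv]
        exact hXv_mem r
      · have h2 := Submodule.sub_mem (Submodule.span K S') (Submodule.subset_span (hplus i hiJ z))
          (Submodule.subset_span hvS)
        exact (Submodule.add_mem_iff_left _ (Submodule.subset_span hvS)).mp
          (Submodule.subset_span (hplus i hiJ z))
  -- transport everything back to `M`
  set E' : M ≃ₗ[K] (⨁ i, K[X] ⧸ (Submodule.span K[X] {P i ^ E i})) :=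
    (AEval'.of φ).trans (e.restrictScalars K) with hE'
  have hcomm1 : ∀ x : M, E' (φ x) = (X : K[X]) • E' x := by
    intro x
    have h1 : AEval'.of φ (φ x) = (X : K[X]) • AEval'.of φ x :=
      (Module.AEval'.X_smul_of φ x).symm
    calc E' (φ x) = e (AEval'.of φ (φ x)) := rfl
      _ = e ((X : K[X]) • AEval'.of φ x) := by rw [h1]
      _ = (X : K[X]) • e (AEval'.of φ x) := by rw [map_smul]
      _ = (X : K[X]) • E' x := rfl
  have hcommd : ∀ (d : ℕ) (x : M), E' ((φ ^ d) x) = (X : K[X]) ^ d • E' x := by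
    intro d
    induction d with
    | zero => intro x; rw [pow_zero, pow_zero, one_smul, Module.End.one_apply]
    | succ d ih =>
      intro x
      have h1 : (φ ^ (d + 1)) x = φ ((φ ^ d) x) := by
        rw [pow_succ']; rfl
      rw [h1, hcomm1, ih, pow_succ', mul_smul]
  have hsub : E'.symm '' S' ⊆
      {x : M | ∀ q : ℕ, q.Prime → q ∣ m → (φ ^ (m / q)) x ≠ x} := by
    rintro x ⟨y, hy, rfl⟩ q' hq' hdq heq
    refine hy q' hq' hdq ?_
    have h1 : E' ((φ ^ (m / q')) (E'.symm y)) = E' (E'.symm y) := by rw [heq]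
    rw [hcommd, E'.apply_symm_apply] at h1
    exact (sub_smul _ _ y).trans (by rw [one_smul, h1, sub_self])
  intro x _
  have hy : E' x ∈ Submodule.span K S' := hspan' (E' x)
  have himg : x ∈ Submodule.span K (E'.symm '' S') := by
    rw [show (E'.symm '' S') = ⇑(E'.symm.toLinearMap) '' S' from rfl, ← Submodule.map_span]
    exact ⟨E' x, hy, E'.symm_apply_apply x⟩
  exact Submodule.span_mono hsub himg

end Span

/-- For every automorphism `α` of the elementary abelian group `(ℤ/pℤ)^n`, there is an
`𝔽_p`-basis whose vectors all have cycle length under `α` equal to the order of `α`. -/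
theorem stmt2 (p : ℕ) [Fact p.Prime] (n : ℕ) (hn : 0 < n)
    (α : AddAut (Fin n → ZMod p)) :
    ∃ v : Module.Basis (Fin n) (ZMod p) (Fin n → ZMod p),
      ∀ i : Fin n, Function.minimalPeriod (⇑α) (v i) = addOrderOf α := by
  classical
  haveI : Finite (AddAut (Fin n → ZMod p)) :=
    Finite.of_injective (fun a : AddAut (Fin n → ZMod p) => (a : (Fin n → ZMod p) → (Fin n → ZMod p)))
      fun a b h => by ext x : 1; exact congrFun h x
  set m := addOrderOf α with hmdef
  have hm : 0 < m := addOrderOf_pos α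
  set φ : (Fin n → ZMod p) →ₗ[ZMod p] (Fin n → ZMod p) :=
    AddMonoidHom.toZModLinearMap p α.toAddMonoidHom with hφdef
  have hφ : ∀ x, φ x = α x := fun _ => rfl
  have hAk : ∀ (k : ℕ) (x : Fin n → ZMod p), (φ ^ k) x = (k • α) x := by
    intro k
    induction k with
    | zero => intro x; rw [pow_zero, zero_nsmul, Module.End.one_apply, AddAut.zero_apply]
    | succ k ih =>
      intro x
      rw [pow_succ', Module.End.mul_apply, ih, succ_nsmul', AddAut.add_apply, hφ]
  have hiter : ∀ (k : ℕ) (x : Fin n → ZMod p), (⇑α)^[k] x = (k • α) x := by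
    intro k
    induction k with
    | zero => intro x; rw [Function.iterate_zero_apply, zero_nsmul, AddAut.zero_apply]
    | succ k ih =>
      intro x
      rw [Function.iterate_succ_apply', ih, succ_nsmul', AddAut.add_apply]
  have hinj : Function.Injective ⇑φ := α.injective
  have hper : ∀ x, (φ ^ m) x = x := by
    intro x; rw [hAk, addOrderOf_nsmul_eq_zero, AddAut.zero_apply]
  have hord : ∀ d : ℕ, (∀ x, (φ ^ d) x = x) → m ∣ d := by
    intro d h
    refine addOrderOf_dvd_of_nsmul_eq_zero ?_
    refine DFunLike.ext _ _ fun x => ?_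
    rw [AddAut.zero_apply, ← hAk]
    exact h x
  have hspan : ⊤ ≤ Submodule.span (ZMod p)
      {x : Fin n → ZMod p | ∀ q : ℕ, q.Prime → q ∣ m → (φ ^ (m / q)) x ≠ x} :=
    span_full_period φ hinj m hm hper hord
  set b0 := Basis.ofSpan hspan with hb0
  set eqv := b0.indexEquiv (Pi.basisFun (ZMod p) (Fin n)) with heqv
  refine ⟨b0.reindex eqv, fun i => ?_⟩
  have hmem : ((eqv.symm i : _) : Fin n → ZMod p) ∈
      {x : Fin n → ZMod p | ∀ q : ℕ, q.Prime → q ∣ m → (φ ^ (m / q)) x ≠ x} := by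
    have h1 := (linearIndepOn_empty (ZMod p) id).extend_subset
      (Set.empty_subset {x : Fin n → ZMod p | ∀ q : ℕ, q.Prime → q ∣ m → (φ ^ (m / q)) x ≠ x})
    exact h1 (eqv.symm i).2
  have hvb : (b0.reindex eqv) i = ((eqv.symm i : _) : Fin n → ZMod p) := by
    rw [Module.Basis.reindex_apply, hb0, Basis.ofSpan_apply_self]
  rw [hvb]
  set x : Fin n → ZMod p := ((eqv.symm i : _) : Fin n → ZMod p)
  have hperiodic : Function.IsPeriodicPt (⇑α) m x := by
    show (⇑α)^[m] x = x
    rw [hiter, addOrderOf_nsmul_eq_zero, AddAut.zero_apply]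
  have hdvd : Function.minimalPeriod (⇑α) x ∣ m := hperiodic.minimalPeriod_dvd
  by_contra hne
  set d := Function.minimalPeriod (⇑α) x with hd
  have hpos : 0 < d := hperiodic.minimalPeriod_pos hm
  obtain ⟨c, hc⟩ := hdvd
  have hc1 : c ≠ 1 := fun h => hne (by rw [hc, h, mul_one])
  obtain ⟨q, hq, hqc⟩ := Nat.exists_prime_and_dvd hc1
  have hqm : q ∣ m := hqc.trans ⟨d, by rw [hc, mul_comm]⟩
  have hddvd : d ∣ m / q := by
    obtain ⟨c', hc'⟩ := hqc
    refine ⟨c', ?_⟩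
    rw [hc, hc', show d * (q * c') = q * (d * c') by ring, Nat.mul_div_cancel_left _ hq.pos]
  have hpp : Function.IsPeriodicPt (⇑α) (m / q) x :=
    (Function.isPeriodicPt_minimalPeriod (⇑α) x).trans_dvd hddvd
  refine hmem q hq hqm ?_
  rw [hAk, ← hiter]
  exact hpp
end

section
/- Every finite vector space satisfies the RCC: if V is a finite vector space over a finite field k and α is a k-linear automorphism of V, then some vector v ∈ V has cycle length under α equal to the order of α. -/
open Polynomial UniqueFactorizationMonoid

section aux

variable {k V : Type*} [Field k] [AddCommGroup V] [Module k V] [Module.Finite k V]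

/-- Per-prime-power lemma. -/
theorem exists_ann_prime_pow (φ : Module.End k V) {p c : k[X]} {e : ℕ} (hp : Prime p)
    (he : 1 ≤ e) (hμ : minpoly k φ = p ^ e * c) (hpc : ¬ p ∣ c) :
    ∃ w : V, (aeval φ (p ^ e)) w = 0 ∧ ∀ q : k[X], (aeval φ q) w = 0 → p ^ e ∣ q := by
  classical
  have hint : IsIntegral k φ := Algebra.IsIntegral.isIntegral φ
  have hμ0 : minpoly k φ ≠ 0 := minpoly.ne_zero hint
  have hc0 : c ≠ 0 := by rintro rfl; rw [mul_zero] at hμ; exact hμ0 hμ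
  have hpe1 : p ^ e = p ^ (e-1) * p := by
    rw [← pow_succ, Nat.sub_add_cancel he]
  -- the endomorphism aeval φ (p^(e-1) * c) is nonzero
  have hne : aeval φ (p ^ (e - 1) * c) ≠ 0 := by
    intro h
    have hdvd : minpoly k φ ∣ p ^ (e-1) * c := minpoly.dvd k φ h
    rw [hμ] at hdvd
    have h2 : p ^ (e-1) * p ∣ p ^ (e-1) * 1 := by
      rw [← hpe1, mul_one]
      exact (mul_dvd_mul_iff_right hc0).mp hdvd
    have h3 : p ∣ 1 := (mul_dvd_mul_iff_left (pow_ne_zero _ hp.ne_zero)).mp h2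
    exact hp.not_unit (isUnit_of_dvd_one h3)
  obtain ⟨u, hu⟩ : ∃ u : V, (aeval φ (p ^ (e-1) * c)) u ≠ 0 := by
    by_contra h
    push_neg at h
    exact hne (LinearMap.ext fun x => by simpa using h x)
  refine ⟨(aeval φ c) u, ?_, ?_⟩
  · have h0 : (aeval φ (p ^ e * c)) u = 0 := by rw [← hμ]; simp [minpoly.aeval]
    rw [map_mul, Module.End.mul_apply] at h0
    exact h0
  · intro q hq
    by_contra hnd
    set d := gcd (p ^ e * c) (q * c) with hd
    have hdu : (aeval φ d) u = 0 := by
      obtain ⟨x, y, hxy⟩ := (gcd_dvd_iff_exists (p ^ e * c) (q * c)).mp (dvd_refl d)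
      have h1 : (aeval φ (p ^ e * c)) u = 0 := by rw [← hμ]; simp [minpoly.aeval]
      have h2 : (aeval φ (q * c)) u = 0 := by
        rw [map_mul, Module.End.mul_apply]; exact hq
      have e1 : (aeval φ (x * (p ^ e * c))) u = 0 := by
        rw [map_mul, Module.End.mul_apply, h1, map_zero]
      have e2 : (aeval φ (y * (q * c))) u = 0 := by
        rw [map_mul, Module.End.mul_apply, h2, map_zero]
      rw [hxy, mul_comm _ x, mul_comm _ y, map_add, LinearMap.add_apply, e1, e2, add_zero]
    -- d divides p^(e-1) * c
    have hgd : gcd (p ^ e) q ∣ p ^ (e-1) := by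
      obtain ⟨j, hj, hassoc⟩ := (dvd_prime_pow hp e).mp (gcd_dvd_left (p ^ e) q)
      rcases eq_or_lt_of_le hj with rfl | hjl
      · exact absurd (dvd_trans hassoc.symm.dvd (gcd_dvd_right _ _)) hnd
      · exact hassoc.dvd.trans (pow_dvd_pow p (Nat.le_pred_of_lt hjl))
    have hddvd : d ∣ p ^ (e-1) * c := by
      rw [hd, gcd_mul_right]
      exact mul_dvd_mul hgd (normalize_associated c).dvd
    obtain ⟨t, ht⟩ := hddvd
    rw [mul_comm d t] at ht
    have : (aeval φ (p ^ (e-1) * c)) u = 0 := by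
      rw [ht, map_mul, Module.End.mul_apply, hdu, map_zero]
    exact hu this


theorem exists_ann_eq_minpoly (φ : Module.End k V) :
    ∃ v : V, ∀ q : k[X], (aeval φ q) v = 0 → minpoly k φ ∣ q := by
  classical
  have hint : IsIntegral k φ := Algebra.IsIntegral.isIntegral φ
  have hμ0 : minpoly k φ ≠ 0 := minpoly.ne_zero hint
  set μ := minpoly k φ with hμdef
  set F := normalizedFactors μ with hF
  have hmonF : ∀ x ∈ F, Monic x := by
    intro x hx
    have h1 : normalize x = x := normalize_normalized_factor x hx
    have h2 : x ≠ 0 := (prime_of_normalized_factor x hx).ne_zero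
    rw [← h1]; exact monic_normalize h2
  have hprod : F.prod = μ := by
    have h1 : Associated F.prod μ := prod_normalizedFactors hμ0
    have h2 : F.prod.Monic := by
      have := monic_multiset_prod_of_monic F id (fun i hi => hmonF i hi)
      simpa using this
    exact Polynomial.eq_of_monic_of_associated h2 (minpoly.monic hint) h1
  set P := F.toFinset with hP
  have hμ_prod : μ = ∏ p ∈ P, p ^ F.count p := by
    rw [← hprod, Finset.prod_multiset_count]
  set c : k[X] → k[X] := fun p => ∏ p' ∈ P.erase p, p' ^ F.count p' with hc
  have hsplit : ∀ p ∈ P, μ = p ^ F.count p * c p := by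
    intro p hp
    rw [hμ_prod, ← Finset.mul_prod_erase P _ hp]
  have hprime : ∀ p ∈ P, Prime p := fun p hp =>
    prime_of_normalized_factor p (Multiset.mem_toFinset.mp hp)
  have hne : ∀ p ∈ P, ∀ p' ∈ P, p ∣ p' → p = p' := by
    intro p hp p' hp' hdvd
    have hass : Associated p p' := (hprime p hp).associated_of_dvd (hprime p' hp') hdvd
    have := normalize_eq_normalize hass.dvd hass.symm.dvd
    rwa [normalize_normalized_factor p (Multiset.mem_toFinset.mp hp),
      normalize_normalized_factor p' (Multiset.mem_toFinset.mp hp')] at this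
  have hndvd : ∀ p ∈ P, ¬ p ∣ c p := by
    intro p hp hdvd
    obtain ⟨p', hp', hpp'⟩ := (hprime p hp).exists_mem_finset_dvd hdvd
    have h1 : p ∣ p' := (hprime p hp).dvd_of_dvd_pow hpp'
    have h2 : p = p' := hne p hp p' (Finset.mem_of_mem_erase hp') h1
    exact (Finset.mem_erase.mp hp').1 h2.symm
  have hcount : ∀ p ∈ P, 1 ≤ F.count p := fun p hp =>
    Multiset.count_pos.mpr (Multiset.mem_toFinset.mp hp)
  have key : ∀ p ∈ P, ∃ w : V, (aeval φ (p ^ F.count p)) w = 0 ∧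
      ∀ q : k[X], (aeval φ q) w = 0 → p ^ F.count p ∣ q := fun p hp =>
    exists_ann_prime_pow φ (hprime p hp) (hcount p hp) (hsplit p hp) (hndvd p hp)
  choose w hw1 hw2 using key
  refine ⟨∑ p ∈ P.attach, w p p.2, ?_⟩
  intro q hq
  rw [hμ_prod]
  have hcop : ∀ p ∈ P, IsCoprime (p ^ F.count p) (c p) := by
    intro p hp
    apply IsCoprime.pow_left
    rw [(hprime p hp).coprime_iff_not_dvd]
    exact hndvd p hp
  apply Finset.prod_dvd_of_coprime
  · intro p hp p' hp' hnep
    have : ¬ p ∣ p' := fun h => hnep (hne p hp p' hp' h)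
    exact ((hprime p hp).coprime_iff_not_dvd.mpr this).pow
  · intro p hp
    -- compute aeval (c p) of the sum
    have hcv : (aeval φ (c p)) (∑ p' ∈ P.attach, w p' p'.2) = (aeval φ (c p)) (w p hp) := by
      rw [map_sum]
      apply Finset.sum_eq_single_of_mem (⟨p, hp⟩ : {x // x ∈ P}) (Finset.mem_attach _ _)
      intro b _ hb
      have hbne : (b : k[X]) ≠ p := fun h => hb (Subtype.ext h)
      have hdvd : (b : k[X]) ^ F.count (b : k[X]) ∣ c p :=
        Finset.dvd_prod_of_mem _ (Finset.mem_erase.mpr ⟨hbne, b.2⟩)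
      obtain ⟨t, ht⟩ := hdvd
      rw [mul_comm] at ht
      rw [ht, map_mul, Module.End.mul_apply, hw1 b b.2, map_zero]
    have hzero : (aeval φ (q * c p)) (w p hp) = 0 := by
      rw [map_mul, Module.End.mul_apply, ← hcv, ← Module.End.mul_apply, ← map_mul, mul_comm,
        map_mul, Module.End.mul_apply, hq, map_zero]
    exact (hcop p hp).dvd_of_dvd_mul_right (hw2 p hp (q * c p) hzero)


end aux

/-- Every finite vector space satisfies the RCC: every linear automorphism of a finite
vector space over a finite field has a regular cycle. -/
theorem stmt5 {k V : Type*} [Field k] [Fintype k] [AddCommGroup V] [Module k V] [Fintype V]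
    (α : V ≃ₗ[k] V) :
    ∃ v : V, Function.minimalPeriod (⇑α) v = orderOf α := by
  have hfinV : Module.Finite k V := Module.Finite.of_finite
  set φ : Module.End k V := (α : V →ₗ[k] V) with hφ
  obtain ⟨v, hv⟩ := exists_ann_eq_minpoly φ
  have hcoe : ⇑φ = ⇑α := by rw [hφ]; exact LinearEquiv.coe_coe α
  have key : ∀ m : ℕ, (⇑α)^[m] v = v → α ^ m = 1 := by
    intro m hm
    have h1 : (aeval φ ((X : k[X]) ^ m - 1)) v = 0 := by
      have hφm : (φ ^ m) v = v := by
        rw [Module.End.pow_apply, hcoe]; exact hm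
      rw [map_sub, map_pow, aeval_X, map_one, LinearMap.sub_apply, hφm, Module.End.one_apply,
        sub_self]
    obtain ⟨t, ht⟩ := hv _ h1
    have h3 : aeval φ ((X : k[X]) ^ m - 1) = 0 := by
      rw [ht, map_mul, minpoly.aeval, zero_mul]
    have h4 : φ ^ m = 1 := by
      rw [map_sub, map_pow, aeval_X, map_one, sub_eq_zero] at h3
      exact h3
    ext x
    have h5 : (φ ^ m) x = x := by rw [h4]; rfl
    rw [Module.End.pow_apply, hcoe] at h5
    rw [LinearEquiv.pow_apply]
    simpa using h5
  have hfin : Finite (V ≃ₗ[k] V) := Finite.of_injective (fun e => ⇑e) DFunLike.coe_injective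
  have hper : Function.IsPeriodicPt (⇑α) (orderOf α) v := by
    show (⇑α)^[orderOf α] v = v
    rw [← LinearEquiv.coe_pow, pow_orderOf_eq_one]
    rfl
  refine ⟨v, Nat.dvd_antisymm (Function.IsPeriodicPt.minimalPeriod_dvd hper) ?_⟩
  exact orderOf_dvd_of_pow_eq_one (key _ (Function.iterate_minimalPeriod))
end

section
/- Let G be a group (not necessarily finite) and α an automorphism of G of finite order. Let x, y ∈ G, let l_x and l_y denote the cycle lengths of x and y under α, and let p be a prime such that the p-adic valuations ν_p(l_x) and ν_p(l_y) are distinct. Then the cycle length l of the product x·y under α satisfies ν_p(l) = max{ν_p(l_x), ν_p(l_y)}. -/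
/-- If `α` is an automorphism of finite order of a group `G` and `x, y ∈ G` have cycle
lengths with distinct `p`-adic valuations, then the cycle length of `x·y` has `p`-adic
valuation equal to the maximum of the two. -/
theorem stmt7 {G : Type*} [Group G] (α : MulAut G) (hα : IsOfFinOrder α)
    (x y : G) (p : ℕ) (hp : p.Prime)
    (h : (Function.minimalPeriod (⇑α) x).factorization p ≠
         (Function.minimalPeriod (⇑α) y).factorization p) :
    (Function.minimalPeriod (⇑α) (x * y)).factorization p =
      max ((Function.minimalPeriod (⇑α) x).factorization p)
          ((Function.minimalPeriod (⇑α) y).factorization p) := by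
  -- iterates distribute over multiplication
  have hiter : ∀ (n : ℕ) (u v : G), (⇑α)^[n] (u * v) = (⇑α)^[n] u * (⇑α)^[n] v := by
    intro n
    induction n with
    | zero => intro u v; simp
    | succ n ih =>
      intro u v
      simp [Function.iterate_succ_apply, map_mul, ih]
  -- everything is periodic with period orderOf α
  have hm : 0 < orderOf α := hα.orderOf_pos
  have hper : ∀ z : G, Function.IsPeriodicPt (⇑α) (orderOf α) z := by
    intro z
    have : α ^ (orderOf α) = 1 := pow_orderOf_eq_one α
    have h2 : (⇑α)^[orderOf α] z = (α ^ orderOf α) z := by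
      rw [hom_coe_pow (fun f : MulAut G => ⇑f) rfl (fun f g => rfl) α (orderOf α)]
    simp [Function.IsPeriodicPt, Function.IsFixedPt, h2, this]
  set a := Function.minimalPeriod (⇑α) x with ha
  set b := Function.minimalPeriod (⇑α) y with hb
  set l := Function.minimalPeriod (⇑α) (x * y) with hl
  have ha0 : 0 < a := (hper x).minimalPeriod_pos hm
  have hb0 : 0 < b := (hper y).minimalPeriod_pos hm
  have hl0 : 0 < l := (hper (x * y)).minimalPeriod_pos hm
  have hax : (⇑α)^[a] x = x := Function.isPeriodicPt_minimalPeriod (⇑α) x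
  have hby : (⇑α)^[b] y = y := Function.isPeriodicPt_minimalPeriod (⇑α) y
  have hlxy : (⇑α)^[l] (x * y) = x * y := Function.isPeriodicPt_minimalPeriod (⇑α) (x * y)
  have hdvd_iter : ∀ (n m : ℕ) (z : G), n ∣ m → (⇑α)^[n] z = z → (⇑α)^[m] z = z := by
    rintro n m z ⟨c, rfl⟩ hz
    exact Function.IsPeriodicPt.mul_const hz c
  -- l ∣ lcm a b
  have h1 : l ∣ Nat.lcm a b := by
    apply Function.IsPeriodicPt.minimalPeriod_dvd
    show (⇑α)^[Nat.lcm a b] (x * y) = x * y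
    rw [hiter, hdvd_iter a _ x (Nat.dvd_lcm_left a b) hax,
      hdvd_iter b _ y (Nat.dvd_lcm_right a b) hby]
  -- a ∣ lcm l b
  have h2 : a ∣ Nat.lcm l b := by
    apply Function.IsPeriodicPt.minimalPeriod_dvd
    show (⇑α)^[Nat.lcm l b] x = x
    have e1 : (⇑α)^[Nat.lcm l b] (x * y) = x * y :=
      hdvd_iter l _ (x * y) (Nat.dvd_lcm_left l b) hlxy
    have e2 : (⇑α)^[Nat.lcm l b] y = y := hdvd_iter b _ y (Nat.dvd_lcm_right l b) hby
    rw [hiter, e2] at e1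
    exact mul_right_cancel e1
  -- b ∣ lcm l a
  have h3 : b ∣ Nat.lcm l a := by
    apply Function.IsPeriodicPt.minimalPeriod_dvd
    show (⇑α)^[Nat.lcm l a] y = y
    have e1 : (⇑α)^[Nat.lcm l a] (x * y) = x * y :=
      hdvd_iter l _ (x * y) (Nat.dvd_lcm_left l a) hlxy
    have e2 : (⇑α)^[Nat.lcm l a] x = x := hdvd_iter a _ x (Nat.dvd_lcm_right l a) hax
    rw [hiter, e2] at e1
    exact mul_left_cancel e1
  -- translate to valuations
  have hlcm : ∀ u v : ℕ, u ≠ 0 → v ≠ 0 →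
      (Nat.lcm u v).factorization p = max (u.factorization p) (v.factorization p) := by
    intro u v hu hv
    rw [Nat.factorization_lcm hu hv]
    simp [Finsupp.sup_apply]
  have hab0 : Nat.lcm a b ≠ 0 := Nat.lcm_ne_zero ha0.ne' hb0.ne'
  have hlb0 : Nat.lcm l b ≠ 0 := Nat.lcm_ne_zero hl0.ne' hb0.ne'
  have hla0 : Nat.lcm l a ≠ 0 := Nat.lcm_ne_zero hl0.ne' ha0.ne'
  have f1 : l.factorization p ≤ max (a.factorization p) (b.factorization p) := by
    have := (Nat.factorization_le_iff_dvd hl0.ne' hab0).mpr h1 p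
    rwa [hlcm a b ha0.ne' hb0.ne'] at this
  have f2 : a.factorization p ≤ max (l.factorization p) (b.factorization p) := by
    have := (Nat.factorization_le_iff_dvd ha0.ne' hlb0).mpr h2 p
    rwa [hlcm l b hl0.ne' hb0.ne'] at this
  have f3 : b.factorization p ≤ max (l.factorization p) (a.factorization p) := by
    have := (Nat.factorization_le_iff_dvd hb0.ne' hla0).mpr h3 p
    rwa [hlcm l a hl0.ne' ha0.ne'] at this
  omega
end

section
/- Let G be a group (not necessarily finite) and α an automorphism of G of finite order o. Then for any two distinct primes p and q, there exists an element of G whose cycle length under α is divisible by p^{ν_p(o)} · q^{ν_q(o)}. -/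
private lemma mulAut_coe_pow {G : Type*} [Group G] (α : MulAut G) (n : ℕ) :
    ⇑(α ^ n) = (⇑α)^[n] :=
  hom_coe_pow _ rfl (fun _ _ => rfl) α n

private lemma mulAut_exists_not_fixed {G : Type*} [Group G] (ε : MulAut G) (hε : ε ≠ 1) :
    ∃ g : G, ε g ≠ g := by
  by_contra h
  push_neg at h
  exact hε (MulEquiv.ext h)

private lemma mulAut_aux {G : Type*} [Group G] (α γ : MulAut G) (t : ℕ) (hγ : γ = α ^ t)
    {r e : ℕ} (hr : r.Prime) (ho : orderOf γ = r ^ e) (g : G)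
    (hg : (γ ^ (r ^ (e - 1))) g ≠ g) : r ^ e ∣ Function.minimalPeriod (⇑α) g := by
  rcases Nat.eq_zero_or_pos e with he | he
  · exfalso
    have h1 : orderOf γ = 1 := by rw [ho, he, pow_zero]
    have hγ1 : γ = 1 := orderOf_eq_one_iff.mp h1
    rw [hγ1] at hg
    simp at hg
  set m := Function.minimalPeriod (⇑α) g with hm
  have hper : Function.IsPeriodicPt (⇑α) m g := Function.isPeriodicPt_minimalPeriod (⇑α) g
  have hγm : Function.IsPeriodicPt (⇑γ) m g := by
    show (⇑γ)^[m] g = g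
    rw [← mulAut_coe_pow, hγ, ← pow_mul', pow_mul, mulAut_coe_pow, mulAut_coe_pow]
    exact Function.IsFixedPt.iterate hper t
  have hγo : Function.IsPeriodicPt (⇑γ) (r ^ e) g := by
    show (⇑γ)^[r ^ e] g = g
    rw [← mulAut_coe_pow, ← ho, pow_orderOf_eq_one]
    rfl
  set d := Function.minimalPeriod (⇑γ) g with hd
  have hd1 : d ∣ m := hγm.minimalPeriod_dvd
  have hd2 : d ∣ r ^ e := hγo.minimalPeriod_dvd
  obtain ⟨c, hc, hceq⟩ := (Nat.dvd_prime_pow hr).mp hd2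
  have hce : c = e := by
    by_contra hne
    have hcle : c ≤ e - 1 := by omega
    have hdvd' : d ∣ r ^ (e - 1) := hceq ▸ pow_dvd_pow r hcle
    have hpt : Function.IsPeriodicPt (⇑γ) (r ^ (e - 1)) g :=
      Function.isPeriodicPt_iff_minimalPeriod_dvd.mpr hdvd'
    exact hg (by rw [mulAut_coe_pow]; exact hpt)
  rw [← hce, ← hceq]
  exact hd1

private lemma mulAut_exists_pow_not_fixed {G : Type*} [Group G] (ε : MulAut G)
    {r e : ℕ} (hr : r.Prime) (ho : orderOf ε = r ^ e) (he : 1 ≤ e) :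
    ∃ g : G, (ε ^ (r ^ (e - 1))) g ≠ g := by
  apply mulAut_exists_not_fixed
  intro h
  have hdvd := orderOf_dvd_of_pow_eq_one h
  rw [ho] at hdvd
  have hle := Nat.le_of_dvd (pow_pos hr.pos _) hdvd
  have hlt : r ^ (e - 1) < r ^ e := Nat.pow_lt_pow_right hr.one_lt (by omega)
  omega

/-- If `α` is an automorphism of finite order `o` of a group `G`, then for any two distinct
primes `p` and `q`, some element of `G` has cycle length under `α` divisible by
`p^{ν_p(o)} · q^{ν_q(o)}`. -/
theorem stmt8 {G : Type*} [Group G] (α : MulAut G) (hα : IsOfFinOrder α)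
    (p q : ℕ) (hp : p.Prime) (hq : q.Prime) (hpq : p ≠ q) :
    ∃ g : G, p ^ ((orderOf α).factorization p) * q ^ ((orderOf α).factorization q) ∣
      Function.minimalPeriod (⇑α) g := by
  set o := orderOf α with ho
  set a := o.factorization p with ha
  set b := o.factorization q with hb
  have hopos : 0 < o := hα.orderOf_pos
  have hcop : Nat.Coprime (p ^ a) (q ^ b) := Nat.coprime_pow_primes a b hp hq hpq
  have hdvd : p ^ a * q ^ b ∣ o :=
    hcop.mul_dvd_of_dvd_of_dvd (Nat.ordProj_dvd o p) (Nat.ordProj_dvd o q)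
  obtain ⟨k, hk⟩ := hdvd
  have hppos : 0 < p ^ a := pow_pos hp.pos a
  have hqpos : 0 < q ^ b := pow_pos hq.pos b
  have hkpos : 0 < k := by
    rcases Nat.eq_zero_or_pos k with h | h
    · rw [h, mul_zero] at hk; omega
    · exact h
  have horder : ∀ u v : ℕ, 0 < u → 0 < v → o = u * (v * k) → orderOf (α ^ (k * v)) = u := by
    intro u v hu hv huv
    rw [orderOf_pow' α (by positivity : k * v ≠ 0), ← ho]
    have hdvd' : k * v ∣ o := ⟨u, by rw [huv]; ring⟩
    rw [Nat.gcd_eq_right hdvd', huv]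
    rw [Nat.mul_div_assoc u ⟨1, by ring⟩]
    have h1 : v * k / (k * v) = 1 := by rw [mul_comm v k, Nat.div_self (by positivity)]
    rw [h1, mul_one]
  set γ := α ^ (k * q ^ b) with hγdef
  set δ := α ^ (k * p ^ a) with hδdef
  have hγo : orderOf γ = p ^ a := horder _ _ hppos hqpos (by rw [hk]; ring)
  have hδo : orderOf δ = q ^ b := horder _ _ hqpos hppos (by rw [hk]; ring)
  rcases Nat.eq_zero_or_pos a with hA | hA
  · rcases Nat.eq_zero_or_pos b with hB | hB
    · exact ⟨1, by rw [hA, hB]; simp⟩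
    · obtain ⟨y, hy⟩ := mulAut_exists_pow_not_fixed δ hq hδo hB
      exact ⟨y, by
        rw [hA, pow_zero, one_mul]
        exact mulAut_aux α δ _ hδdef hq hδo y hy⟩
  · rcases Nat.eq_zero_or_pos b with hB | hB
    · obtain ⟨x, hx⟩ := mulAut_exists_pow_not_fixed γ hp hγo hA
      exact ⟨x, by
        rw [hB, pow_zero, mul_one]
        exact mulAut_aux α γ _ hγdef hp hγo x hx⟩
    · obtain ⟨x, hx⟩ := mulAut_exists_pow_not_fixed γ hp hγo hA
      obtain ⟨y, hy⟩ := mulAut_exists_pow_not_fixed δ hq hδo hB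
      -- find g not fixed by γ^(p^(a-1)) nor δ^(q^(b-1))
      have hg : ∃ g : G, (γ ^ (p ^ (a - 1))) g ≠ g ∧ (δ ^ (q ^ (b - 1))) g ≠ g := by
        by_cases hx2 : (δ ^ (q ^ (b - 1))) x = x
        · by_cases hy2 : (γ ^ (p ^ (a - 1))) y = y
          · refine ⟨x * y, ?_, ?_⟩
            · rw [map_mul, hy2]
              intro h
              exact hx (mul_right_cancel h)
            · rw [map_mul, hx2]
              intro h
              exact hy (mul_left_cancel h)
          · exact ⟨y, hy2, hy⟩
        · exact ⟨x, hx, hx2⟩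
      obtain ⟨g, hg1, hg2⟩ := hg
      exact ⟨g, hcop.mul_dvd_of_dvd_of_dvd
        (mulAut_aux α γ _ hγdef hp hγo g hg1)
        (mulAut_aux α δ _ hδdef hq hδo g hg2)⟩
end

section
/- Let G be a group (not necessarily finite) and α an automorphism of G of finite order o. If o is divisible by at most two distinct primes, then α satisfies the RCC, i.e., some element of G has cycle length under α equal to o. -/
/-- A group is not the union of two proper subgroups. -/
private lemma exists_not_mem_two {G : Type*} [Group G] {H K : Subgroup G}
    (hH : H ≠ ⊤) (hK : K ≠ ⊤) : ∃ g : G, g ∉ H ∧ g ∉ K := by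
  obtain ⟨x, hx⟩ : ∃ x, x ∉ H := by
    by_contra hc; push_neg at hc; exact hH (Subgroup.eq_top_iff' H |>.2 hc)
  obtain ⟨y, hy⟩ : ∃ y, y ∉ K := by
    by_contra hc; push_neg at hc; exact hK (Subgroup.eq_top_iff' K |>.2 hc)
  by_cases hxK : x ∈ K
  · by_cases hyH : y ∈ H
    · refine ⟨x * y, fun hm ↦ ?_, fun hm ↦ ?_⟩
      · exact hx (by simpa using H.mul_mem hm (H.inv_mem hyH))
      · exact hy (by simpa using K.mul_mem (K.inv_mem hxK) hm)
    · exact ⟨y, hyH, hy⟩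
  · exact ⟨x, hx, hxK⟩

/-- If `α` is an automorphism of finite order of a group `G` and its order is divisible by
at most two distinct primes, then `α` has a regular cycle. -/
theorem stmt9 {G : Type*} [Group G] (α : MulAut G) (hα : IsOfFinOrder α)
    (h : (orderOf α).primeFactors.card ≤ 2) :
    ∃ g : G, Function.minimalPeriod (⇑α) g = orderOf α := by
  set o := orderOf α with ho_def
  have ho : 0 < o := hα.orderOf_pos
  set S := o.primeFactors with hS_def
  -- fixed-point subgroups
  set F : ℕ → Subgroup G := fun p => MonoidHom.eqLocus (α ^ (o / p)).toMonoidHom (MonoidHom.id G)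
    with hF_def
  have memF : ∀ p (g : G), g ∈ F p ↔ (α ^ (o / p)) g = g := fun p g => Iff.rfl
  -- each such subgroup is proper
  have hne : ∀ p ∈ S, F p ≠ ⊤ := by
    intro p hp htop
    obtain ⟨hpp, hpd, -⟩ := Nat.mem_primeFactors.1 hp
    have hdivpos : 0 < o / p := Nat.div_pos (Nat.le_of_dvd ho hpd) hpp.pos
    have hlt : o / p < o := Nat.div_lt_self ho hpp.one_lt
    have h1 : α ^ (o / p) = 1 := by
      ext g
      have : g ∈ F p := htop ▸ Subgroup.mem_top g
      simpa using (memF p g).1 this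
    have := Nat.le_of_dvd hdivpos (orderOf_dvd_of_pow_eq_one h1)
    omega
  -- the key step: an element outside all the F p has full minimal period
  have key : ∀ g : G, (∀ p ∈ S, g ∉ F p) → Function.minimalPeriod (⇑α) g = o := by
    intro g hg
    have hper : Function.IsPeriodicPt (⇑α) o g := by
      show (⇑α)^[o] g = g
      rw [← mulAut_coe_pow, ho_def, pow_orderOf_eq_one]; rfl
    have hdvd : Function.minimalPeriod (⇑α) g ∣ o := hper.minimalPeriod_dvd
    set d := Function.minimalPeriod (⇑α) g with hd_def
    have hdpos : 0 < d := hper.minimalPeriod_pos ho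
    by_contra hne'
    have hlt : d < o := lt_of_le_of_ne (Nat.le_of_dvd ho hdvd) hne'
    obtain ⟨k, hk⟩ := hdvd
    have hk1 : 1 < k := by nlinarith
    set p := k.minFac with hp_def
    have hpp : p.Prime := Nat.minFac_prime (by omega)
    obtain ⟨m, hm⟩ := k.minFac_dvd
    have hpS : p ∈ S := Nat.mem_primeFactors.2 ⟨hpp, ⟨d * m, by rw [hk, hm]; ring⟩, ho.ne'⟩
    -- d divides o / p
    have hop : o / p = d * m := by
      rw [hk, hm]
      rw [show d * (p * m) = p * (d * m) by ring, Nat.mul_div_cancel_left _ hpp.pos]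
    have hper2 : Function.IsPeriodicPt (⇑α) (o / p) g := by
      rw [hop]
      exact (Function.isPeriodicPt_minimalPeriod (⇑α) g).mul_const m
    exact hg p hpS ((memF p g).2 (by rw [mulAut_coe_pow]; exact hper2))
  -- now find such an element, by cases on the number of prime factors
  have hcard : S.card = 0 ∨ S.card = 1 ∨ S.card = 2 := by omega
  rcases hcard with h0 | h1 | h2
  · refine ⟨1, key 1 ?_⟩
    rw [Finset.card_eq_zero] at h0
    simp [h0]
  · obtain ⟨p, hp⟩ := Finset.card_eq_one.1 h1
    obtain ⟨g, hg⟩ : ∃ g : G, g ∉ F p := by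
      have := hne p (by simp [hp])
      by_contra hc; push_neg at hc
      exact this (Subgroup.eq_top_iff' (F p) |>.2 hc)
    refine ⟨g, key g ?_⟩
    intro q hq
    rw [hp, Finset.mem_singleton] at hq
    subst hq; exact hg
  · obtain ⟨p, q, hpq, hS⟩ := Finset.card_eq_two.1 h2
    obtain ⟨g, hgp, hgq⟩ := exists_not_mem_two (hne p (by simp [hS])) (hne q (by simp [hS]))
    refine ⟨g, key g ?_⟩
    intro r hr
    rw [hS, Finset.mem_insert, Finset.mem_singleton] at hr
    rcases hr with rfl | rfl
    · exact hgp
    · exact hgq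
end

section
/- Let p₁ < p₂ < p₃ be primes and k₁, k₂, k₃ positive integers, and set o := p₁^{k₁} p₂^{k₂} p₃^{k₃}. Define f(o) := 2o if p₁ = 2 and f(o) := o otherwise. Then there exists a finite supersolvable group G of order 4·f(o) admitting an automorphism α of order o that has no regular cycle (i.e., no element of G has cycle length under α equal to o). -/
structure GD (m' : ℕ) : Type where
  n : ZMod m'
  v : ZMod 2 × ZMod 2

namespace GD

@[ext] lemma ext' {m' : ℕ} {x y : GD m'} (h1 : x.n = y.n) (h2 : x.v = y.v) : x = y := by
  cases x; cases y; simp_all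

def chi {m' : ℕ} (e₁ e₂ : ZMod m') (u : ZMod 2 × ZMod 2) : ZMod m' :=
  e₁ ^ u.1.val * e₂ ^ u.2.val

lemma pow_sq_one {m' : ℕ} {e : ZMod m'} (h : e * e = 1) (k : ℕ) : e ^ (k % 2) = e ^ k := by
  conv_rhs => rw [← Nat.mod_add_div k 2]
  rw [pow_add, pow_mul, pow_two, h, one_pow, mul_one]

lemma chi_add {m' : ℕ} {e₁ e₂ : ZMod m'} (h₁ : e₁ * e₁ = 1) (h₂ : e₂ * e₂ = 1)
    (u w : ZMod 2 × ZMod 2) : chi e₁ e₂ (u + w) = chi e₁ e₂ u * chi e₁ e₂ w := by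
  unfold chi
  have hv : ∀ a b : ZMod 2, (a + b).val = (a.val + b.val) % 2 := by decide
  rw [Prod.fst_add, Prod.snd_add, hv, hv, pow_sq_one h₁, pow_sq_one h₂, pow_add, pow_add]
  ring

lemma chi_zero {m' : ℕ} (e₁ e₂ : ZMod m') : chi e₁ e₂ 0 = 1 := by
  unfold chi; norm_num

def grp (m' : ℕ) (e₁ e₂ : ZMod m') (h₁ : e₁ * e₁ = 1) (h₂ : e₂ * e₂ = 1) : Group (GD m') :=
  letI : Mul (GD m') := ⟨fun x y => ⟨x.n + chi e₁ e₂ x.v * y.n, x.v + y.v⟩⟩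
  letI : One (GD m') := ⟨⟨0, 0⟩⟩
  letI : Inv (GD m') := ⟨fun x => ⟨-(chi e₁ e₂ x.v * x.n), x.v⟩⟩
  Group.ofLeftAxioms
    (fun x y z => by
      apply ext'
      · show (x.n + chi e₁ e₂ x.v * y.n) + chi e₁ e₂ (x.v + y.v) * z.n =
          x.n + chi e₁ e₂ x.v * (y.n + chi e₁ e₂ y.v * z.n)
        rw [chi_add h₁ h₂]; ring
      · show (x.v + y.v) + z.v = x.v + (y.v + z.v)
        rw [add_assoc])
    (fun x => by
      apply ext'
      · show (0 : ZMod m') + chi e₁ e₂ 0 * x.n = x.n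
        rw [chi_zero]; ring
      · show (0 : ZMod 2 × ZMod 2) + x.v = x.v
        rw [zero_add])
    (fun x => by
      apply ext'
      · show -(chi e₁ e₂ x.v * x.n) + chi e₁ e₂ x.v * x.n = 0
        ring
      · show x.v + x.v = 0
        have : ∀ w : ZMod 2 × ZMod 2, w + w = 0 := by decide
        exact this x.v)

end GD

/-- A group is supersolvable if it has a normal series (all terms normal in the whole group)
whose successive factors are cyclic: each step admits an element `x` such that every element
of the step is congruent to a power of `x` modulo the previous term. -/
def IsSupersolvable (G : Type*) [Group G] : Prop :=
  ∃ (n : ℕ) (s : Fin (n + 1) → Subgroup G),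
    s 0 = ⊥ ∧ s (Fin.last n) = ⊤ ∧
    (∀ i : Fin n, s i.castSucc ≤ s i.succ) ∧
    (∀ i : Fin (n + 1), (s i).Normal) ∧
    ∀ i : Fin n, ∃ x ∈ s i.succ, ∀ y ∈ s i.succ, ∃ m : ℤ, y * (x ^ m)⁻¹ ∈ s i.castSucc

set_option maxHeartbeats 1000000 in
theorem key (a b c A : ℕ) (ha1 : 1 < a) (hb1 : 1 < b) (hc1 : 1 < c)
    (hA : A = 2 * a ∨ (A = a ∧ Odd a))
    (hab : Nat.Coprime (2 * a) b) (hac : Nat.Coprime (2 * a) c) (hbc : Nat.Coprime b c) :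
    ∃ (G : Type) (_ : Group G) (_ : Fintype G),
      IsSupersolvable G ∧ Fintype.card G = 4 * (A * (b * c)) ∧
      ∃ α : MulAut G, orderOf α = a * b * c ∧
        ∀ g : G, Function.minimalPeriod (⇑α) g ≠ a * b * c := by
  have ha0 : 0 < a := by omega
  have hb0 : 0 < b := by omega
  have hc0 : 0 < c := by omega
  have hA2a : A ∣ 2 * a := by
    rcases hA with h | ⟨h, _⟩
    · exact h ▸ dvd_rfl
    · exact h ▸ Dvd.intro_left 2 rfl
  have hA0 : 0 < A := by rcases hA with h | ⟨h, _⟩ <;> omega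
  have hoddb : Nat.Coprime 2 b := Nat.Coprime.coprime_dvd_left ⟨a, rfl⟩ hab
  have hoddc : Nat.Coprime 2 c := Nat.Coprime.coprime_dvd_left ⟨a, rfl⟩ hac
  have hcab : Nat.Coprime a b := Nat.Coprime.coprime_dvd_left (Dvd.intro_left 2 rfl) hab
  have hcac : Nat.Coprime a c := Nat.Coprime.coprime_dvd_left (Dvd.intro_left 2 rfl) hac
  have hcAb : Nat.Coprime A b := Nat.Coprime.coprime_dvd_left hA2a hab
  have hcAc : Nat.Coprime A c := Nat.Coprime.coprime_dvd_left hA2a hac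
  have hcAbc : Nat.Coprime A (b * c) := Nat.Coprime.mul_right hcAb hcAc
  set m := A * (b * c) with hm
  haveI : NeZero m := ⟨by positivity⟩
  haveI : NeZero A := ⟨by omega⟩
  haveI : NeZero b := ⟨by omega⟩
  haveI : NeZero c := ⟨by omega⟩
  let crt : ZMod m ≃+* ZMod A × (ZMod b × ZMod c) :=
    (ZMod.chineseRemainder hcAbc).trans
      (RingEquiv.prodCongr (RingEquiv.refl (ZMod A)) (ZMod.chineseRemainder hbc))
  set e₁ : ZMod m := crt.symm (-1, (-1, 1)) with he₁
  set e₂ : ZMod m := crt.symm (1, (-1, -1)) with he₂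
  have hce₁ : crt e₁ = (-1, (-1, 1)) := crt.apply_symm_apply _
  have hce₂ : crt e₂ = (1, (-1, -1)) := crt.apply_symm_apply _
  have h₁ : e₁ * e₁ = 1 := by
    apply crt.injective
    rw [map_mul, hce₁, map_one, Prod.mk_mul_mk, Prod.mk_mul_mk, neg_mul_neg, neg_mul_neg, one_mul]
    norm_num [Prod.ext_iff]
  have h₂ : e₂ * e₂ = 1 := by
    apply crt.injective
    rw [map_mul, hce₂, map_one, Prod.mk_mul_mk, Prod.mk_mul_mk, neg_mul_neg, neg_mul_neg, one_mul]
    norm_num [Prod.ext_iff]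
  have hce₁₂ : crt (e₁ * e₂) = (-1, (1, -1)) := by
    rw [map_mul, hce₁, hce₂, Prod.mk_mul_mk, Prod.mk_mul_mk]
    norm_num [Prod.ext_iff]
  have hcast : ∀ k : ℕ, crt ((k : ℕ) : ZMod m) = ((k : ZMod A), ((k : ZMod b), (k : ZMod c))) := by
    intro k
    rw [map_natCast]
    rfl
  -- three key divisibility criteria
  have key₁ : ∀ k : ℕ, ((1 - e₁) * (k : ZMod m) = 0) ↔ (A ∣ 2 * k ∧ b ∣ 2 * k) := by
    intro k
    have hval : crt ((1 - e₁) * (k : ZMod m)) =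
        (((2 * k : ℕ) : ZMod A), (((2 * k : ℕ) : ZMod b), 0)) := by
      rw [map_mul, map_sub, map_one, hce₁, hcast]
      push_cast
      refine Prod.ext ?_ (Prod.ext ?_ ?_) <;> simp <;> ring
    constructor
    · intro h
      rw [h, map_zero] at hval
      have h1 : ((2 * k : ℕ) : ZMod A) = 0 := by
        have := congrArg Prod.fst hval; simpa using this.symm
      have h2 : ((2 * k : ℕ) : ZMod b) = 0 := by
        have := congrArg (fun p => p.2.1) hval; simpa using this.symm
      exact ⟨(ZMod.natCast_eq_zero_iff _ _).1 h1,
        (ZMod.natCast_eq_zero_iff _ _).1 h2⟩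
    · rintro ⟨d1, d2⟩
      apply crt.injective
      rw [hval, map_zero, (ZMod.natCast_eq_zero_iff _ _).2 d1,
        (ZMod.natCast_eq_zero_iff _ _).2 d2]
      rfl
  have key₂ : ∀ k : ℕ, ((1 - e₂) * (k : ZMod m) = 0) ↔ (b ∣ 2 * k ∧ c ∣ 2 * k) := by
    intro k
    have hval : crt ((1 - e₂) * (k : ZMod m)) =
        (0, (((2 * k : ℕ) : ZMod b), ((2 * k : ℕ) : ZMod c))) := by
      rw [map_mul, map_sub, map_one, hce₂, hcast]
      push_cast
      refine Prod.ext ?_ (Prod.ext ?_ ?_) <;> simp <;> ring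
    constructor
    · intro h
      rw [h, map_zero] at hval
      have h1 : ((2 * k : ℕ) : ZMod b) = 0 := by
        have := congrArg (fun p => p.2.1) hval; simpa using this.symm
      have h2 : ((2 * k : ℕ) : ZMod c) = 0 := by
        have := congrArg (fun p => p.2.2) hval; simpa using this.symm
      exact ⟨(ZMod.natCast_eq_zero_iff _ _).1 h1,
        (ZMod.natCast_eq_zero_iff _ _).1 h2⟩
    · rintro ⟨d1, d2⟩
      apply crt.injective
      rw [hval, map_zero, (ZMod.natCast_eq_zero_iff _ _).2 d1,
        (ZMod.natCast_eq_zero_iff _ _).2 d2]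
      rfl
  have key₃ : ∀ k : ℕ, ((1 - e₁ * e₂) * (k : ZMod m) = 0) ↔ (A ∣ 2 * k ∧ c ∣ 2 * k) := by
    intro k
    have hval : crt ((1 - e₁ * e₂) * (k : ZMod m)) =
        (((2 * k : ℕ) : ZMod A), (0, ((2 * k : ℕ) : ZMod c))) := by
      rw [map_mul, map_sub, map_one, hce₁₂, hcast]
      push_cast
      refine Prod.ext ?_ (Prod.ext ?_ ?_) <;> simp <;> ring
    constructor
    · intro h
      rw [h, map_zero] at hval
      have h1 : ((2 * k : ℕ) : ZMod A) = 0 := by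
        have := congrArg Prod.fst hval; simpa using this.symm
      have h2 : ((2 * k : ℕ) : ZMod c) = 0 := by
        have := congrArg (fun p => p.2.2) hval; simpa using this.symm
      exact ⟨(ZMod.natCast_eq_zero_iff _ _).1 h1,
        (ZMod.natCast_eq_zero_iff _ _).1 h2⟩
    · rintro ⟨d1, d2⟩
      apply crt.injective
      rw [hval, map_zero, (ZMod.natCast_eq_zero_iff _ _).2 d1,
        (ZMod.natCast_eq_zero_iff _ _).2 d2]
      rfl
  -- the group
  letI instG : Group (GD m) := GD.grp m e₁ e₂ h₁ h₂
  have hmul : ∀ x y : GD m, x * y = ⟨x.n + GD.chi e₁ e₂ x.v * y.n, x.v + y.v⟩ := fun _ _ => rfl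
  have hone : (1 : GD m) = ⟨0, 0⟩ := rfl
  have hinv : ∀ x : GD m, x⁻¹ = ⟨-(GD.chi e₁ e₂ x.v * x.n), x.v⟩ := fun _ => rfl
  let eqv : GD m ≃ ZMod m × (ZMod 2 × ZMod 2) :=
    ⟨fun g => (g.n, g.v), fun x => ⟨x.1, x.2⟩, fun _ => rfl, fun _ => rfl⟩
  letI instF : Fintype (GD m) := Fintype.ofEquiv _ eqv.symm
  -- chi values
  have hchi00 : GD.chi e₁ e₂ ((0 : ZMod 2), (0 : ZMod 2)) = 1 := GD.chi_zero e₁ e₂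
  have hchi10 : GD.chi e₁ e₂ ((1 : ZMod 2), (0 : ZMod 2)) = e₁ := by
    show e₁ ^ (1 : ZMod 2).val * e₂ ^ (0 : ZMod 2).val = e₁
    rw [show (1 : ZMod 2).val = 1 from rfl, show (0 : ZMod 2).val = 0 from rfl]
    norm_num
  have hchi01 : GD.chi e₁ e₂ ((0 : ZMod 2), (1 : ZMod 2)) = e₂ := by
    show e₁ ^ (0 : ZMod 2).val * e₂ ^ (1 : ZMod 2).val = e₂
    rw [show (1 : ZMod 2).val = 1 from rfl, show (0 : ZMod 2).val = 0 from rfl]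
    norm_num
  have hchi11 : GD.chi e₁ e₂ ((1 : ZMod 2), (1 : ZMod 2)) = e₁ * e₂ := by
    show e₁ ^ (1 : ZMod 2).val * e₂ ^ (1 : ZMod 2).val = e₁ * e₂
    rw [show (1 : ZMod 2).val = 1 from rfl]
    norm_num
  -- the automorphism
  set g₀ : GD m := ⟨1, 0⟩ with hg₀
  set α : MulAut (GD m) := MulAut.conj g₀ with hα
  have hg₀pow : ∀ k : ℕ, g₀ ^ k = (⟨(k : ZMod m), 0⟩ : GD m) := by
    intro k
    induction k with
    | zero => rw [pow_zero, hone]; exact GD.ext' (by norm_num) rfl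
    | succ n ih =>
      rw [pow_succ, ih, hmul]
      exact GD.ext' (by rw [GD.chi_zero]; push_cast; ring) (by simp [hg₀])
  have hαpow : ∀ (k : ℕ) (g : GD m),
      (α ^ k) g = ⟨g.n + (1 - GD.chi e₁ e₂ g.v) * (k : ZMod m), g.v⟩ := by
    intro k g
    have h1 : (α ^ k) g = (g₀ ^ k) * g * (g₀ ^ k)⁻¹ := by
      rw [hα, ← map_pow, MulAut.conj_apply]
    rw [h1, hg₀pow, hinv, hmul, hmul]
    refine GD.ext' ?_ ?_
    · show ((k : ZMod m) + GD.chi e₁ e₂ 0 * g.n) +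
        GD.chi e₁ e₂ (0 + g.v) * (-(GD.chi e₁ e₂ 0 * (k : ZMod m))) =
        g.n + (1 - GD.chi e₁ e₂ g.v) * (k : ZMod m)
      rw [GD.chi_zero, zero_add]
      ring
    · show (0 + g.v) + 0 = g.v
      simp
  have hiter : ∀ (k : ℕ) (g : GD m), (⇑α)^[k] g = (α ^ k) g := by
    intro k
    induction k with
    | zero => intro g; simp
    | succ n ih =>
      intro g
      rw [Function.iterate_succ_apply, ih, pow_succ, MulAut.mul_apply]
  have hvcases : ∀ u : ZMod 2 × ZMod 2,
      u = (0, 0) ∨ u = (1, 0) ∨ u = (0, 1) ∨ u = (1, 1) := by decide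
  -- order of α
  have horder : orderOf α = a * b * c := by
    apply Nat.dvd_antisymm
    · apply orderOf_dvd_of_pow_eq_one
      apply DFunLike.ext
      intro g
      rw [hαpow, MulAut.one_apply]
      obtain ⟨t, ht⟩ := hA2a
      have hz : (1 - GD.chi e₁ e₂ g.v) * ((a * b * c : ℕ) : ZMod m) = 0 := by
        rcases hvcases g.v with h | h | h | h <;> rw [h]
        · rw [hchi00]; simp
        · rw [hchi10]
          refine (key₁ (a * b * c)).2 ⟨?_, ?_⟩
          · exact ⟨t * (b * c), by rw [show 2 * (a * b * c) = 2 * a * (b * c) by ring, ht]; ring⟩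
          · exact ⟨2 * a * c, by ring⟩
        · rw [hchi01]
          refine (key₂ (a * b * c)).2 ⟨?_, ?_⟩
          · exact ⟨2 * a * c, by ring⟩
          · exact ⟨2 * a * b, by ring⟩
        · rw [hchi11]
          refine (key₃ (a * b * c)).2 ⟨?_, ?_⟩
          · exact ⟨t * (b * c), by rw [show 2 * (a * b * c) = 2 * a * (b * c) by ring, ht]; ring⟩
          · exact ⟨2 * a * b, by ring⟩
      rw [hz, add_zero]
    · set d := orderOf α with hd
      have hpow1 : α ^ d = 1 := pow_orderOf_eq_one α
      have happ : ∀ u : ZMod 2 × ZMod 2, (1 - GD.chi e₁ e₂ u) * (d : ZMod m) = 0 := by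
        intro u
        have := congrArg (fun f : MulAut (GD m) => f ⟨0, u⟩) hpow1
        rw [hαpow] at this
        have := congrArg GD.n this
        simpa using this
      have h1 := (key₁ d).1 (by have := happ (1, 0); rwa [hchi10] at this)
      have h2 := (key₂ d).1 (by have := happ (0, 1); rwa [hchi01] at this)
      have hadvd : a ∣ d := by
        rcases hA with h | ⟨h, hodd⟩
        · have h2d : 2 * a ∣ 2 * d := h ▸ h1.1
          exact (mul_dvd_mul_iff_left (by norm_num : (2:ℕ) ≠ 0)).1 h2d
        · have : a ∣ 2 * d := h ▸ h1.1
          exact (Nat.Coprime.dvd_of_dvd_mul_left (Odd.coprime_two_left hodd).symm this)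
      have hbdvd : b ∣ d := (Nat.Coprime.dvd_of_dvd_mul_left hoddb.symm h2.1)
      have hcdvd : c ∣ d := (Nat.Coprime.dvd_of_dvd_mul_left hoddc.symm h2.2)
      exact Nat.Coprime.mul_dvd_of_dvd_of_dvd (Nat.Coprime.mul hcac hbc)
        (Nat.Coprime.mul_dvd_of_dvd_of_dvd hcab hadvd hbdvd) hcdvd
  -- no regular cycle
  have hnoreg : ∀ g : GD m, Function.minimalPeriod (⇑α) g ≠ a * b * c := by
    intro g
    obtain ⟨N, hN0, hNlt, hNper⟩ : ∃ N : ℕ, 0 < N ∧ N < a * b * c ∧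
        (1 - GD.chi e₁ e₂ g.v) * (N : ZMod m) = 0 := by
      obtain ⟨t, ht⟩ := hA2a
      have hlt1 : a * b < a * b * c := by nlinarith
      have hlt2 : b * c < a * b * c := by nlinarith
      have hlt3 : a * c < a * b * c := by nlinarith
      rcases hvcases g.v with h | h | h | h <;> rw [h]
      · exact ⟨a * b, by positivity, hlt1, by rw [hchi00]; simp⟩
      · refine ⟨a * b, by positivity, hlt1, ?_⟩
        rw [hchi10]
        refine (key₁ (a * b)).2 ⟨?_, ?_⟩
        · exact ⟨t * b, by rw [show 2 * (a * b) = 2 * a * b by ring, ht]; ring⟩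
        · exact ⟨2 * a, by ring⟩
      · refine ⟨b * c, by positivity, hlt2, ?_⟩
        rw [hchi01]
        exact (key₂ (b * c)).2 ⟨⟨2 * c, by ring⟩, ⟨2 * b, by ring⟩⟩
      · refine ⟨a * c, by positivity, hlt3, ?_⟩
        rw [hchi11]
        refine (key₃ (a * c)).2 ⟨?_, ?_⟩
        · exact ⟨t * c, by rw [show 2 * (a * c) = 2 * a * c by ring, ht]; ring⟩
        · exact ⟨2 * a, by ring⟩
    have hper : Function.IsPeriodicPt (⇑α) N g := by
      show (⇑α)^[N] g = g
      rw [hiter, hαpow, hNper, add_zero]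
    intro hcontra
    have := hper.minimalPeriod_dvd
    rw [hcontra] at this
    have := Nat.le_of_dvd hN0 this
    omega
  -- supersolvability
  have hss : IsSupersolvable (GD m) := by
    let π1 : GD m →* Multiplicative (ZMod 2 × ZMod 2) :=
      { toFun := fun g => Multiplicative.ofAdd g.v
        map_one' := rfl
        map_mul' := fun _ _ => rfl }
    let π2 : GD m →* Multiplicative (ZMod 2) :=
      { toFun := fun g => Multiplicative.ofAdd g.v.2
        map_one' := rfl
        map_mul' := fun _ _ => rfl }
    have hde1 : ∀ g : GD m, g ∈ π1.ker ↔ g.v = 0 := by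
      intro g
      rw [MonoidHom.mem_ker]
      exact Iff.rfl
    have hde2 : ∀ g : GD m, g ∈ π2.ker ↔ g.v.2 = 0 := by
      intro g
      rw [MonoidHom.mem_ker]
      exact Iff.rfl
    refine ⟨3, ![⊥, π1.ker, π2.ker, ⊤], rfl, rfl, ?_, ?_, ?_⟩
    · intro i
      fin_cases i
      · exact bot_le
      · intro g hg
        exact (hde2 g).2 (by rw [(hde1 g).1 hg]; rfl)
      · exact le_top
    · intro i
      fin_cases i
      · show (⊥ : Subgroup (GD m)).Normal
        infer_instance
      · show (π1.ker).Normal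
        infer_instance
      · show (π2.ker).Normal
        infer_instance
      · show (⊤ : Subgroup (GD m)).Normal
        infer_instance
    · intro i
      fin_cases i
      · -- step ⊥ → π1.ker : generator g₀
        refine ⟨g₀, (hde1 g₀).2 rfl, ?_⟩
        intro y hy
        have hy' : y.v = 0 := (hde1 y).1 hy
        refine ⟨(y.n.val : ℤ), ?_⟩
        show y * (g₀ ^ (y.n.val : ℤ))⁻¹ ∈ (⊥ : Subgroup (GD m))
        have hzp : g₀ ^ (y.n.val : ℤ) = g₀ ^ (y.n.val) := zpow_natCast g₀ y.n.val
        rw [hzp, hg₀pow, ZMod.natCast_zmod_val]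
        have hyy : y = (⟨y.n, 0⟩ : GD m) := GD.ext' rfl hy'
        rw [Subgroup.mem_bot, ← hyy, mul_inv_eq_one]
      · -- step π1.ker → π2.ker : x = ⟨0,(1,0)⟩
        refine ⟨⟨0, (1, 0)⟩, (hde2 _).2 rfl, ?_⟩
        intro y hy
        have hy' : y.v.2 = 0 := (hde2 y).1 hy
        rcases hvcases y.v with h | h | h | h
        · exact ⟨0, by rw [zpow_zero, inv_one, mul_one]; exact (hde1 y).2 h⟩
        · refine ⟨1, ?_⟩
          show y * ((⟨0, (1, 0)⟩ : GD m) ^ (1:ℤ))⁻¹ ∈ π1.ker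
          rw [zpow_one, hinv, hmul]
          refine (hde1 _).2 ?_
          show y.v + ((1 : ZMod 2), (0 : ZMod 2)) = 0
          rw [h]; decide
        · exact absurd (congrArg Prod.snd h) (by rw [hy']; decide)
        · exact absurd (congrArg Prod.snd h) (by rw [hy']; decide)
      · -- step π2.ker → ⊤ : x = ⟨0,(0,1)⟩
        refine ⟨⟨0, (0, 1)⟩, trivial, ?_⟩
        intro y _
        rcases hvcases y.v with h | h | h | h
        · exact ⟨0, by rw [zpow_zero, inv_one, mul_one]; exact (hde2 y).2 (by rw [h])⟩
        · exact ⟨0, by rw [zpow_zero, inv_one, mul_one]; exact (hde2 y).2 (by rw [h])⟩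
        · refine ⟨1, ?_⟩
          show y * ((⟨0, (0, 1)⟩ : GD m) ^ (1:ℤ))⁻¹ ∈ π2.ker
          rw [zpow_one, hinv, hmul]
          refine (hde2 _).2 ?_
          show (y.v + ((0 : ZMod 2), (1 : ZMod 2))).2 = 0
          rw [h]; decide
        · refine ⟨1, ?_⟩
          show y * ((⟨0, (0, 1)⟩ : GD m) ^ (1:ℤ))⁻¹ ∈ π2.ker
          rw [zpow_one, hinv, hmul]
          refine (hde2 _).2 ?_
          show (y.v + ((0 : ZMod 2), (1 : ZMod 2))).2 = 0
          rw [h]; decide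
  -- cardinality
  have hcard : Fintype.card (GD m) = 4 * (A * (b * c)) := by
    rw [Fintype.card_congr eqv, Fintype.card_prod, Fintype.card_prod]
    rw [ZMod.card m, ZMod.card 2]
    ring
  exact ⟨GD m, instG, instF, hss, hcard, α, horder, hnoreg⟩

/-- For primes `p₁ < p₂ < p₃` and positive integers `k₁, k₂, k₃`, with
`o = p₁^{k₁} p₂^{k₂} p₃^{k₃}` and `f(o) = 2o` if `p₁ = 2` and `f(o) = o` otherwise,
there is a finite supersolvable group of order `4·f(o)` with an automorphism of order `o`
having no regular cycle. -/
theorem stmt10 (p₁ p₂ p₃ : ℕ) (hp₁ : p₁.Prime) (hp₂ : p₂.Prime) (hp₃ : p₃.Prime)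
    (h12 : p₁ < p₂) (h23 : p₂ < p₃)
    (k₁ k₂ k₃ : ℕ) (hk₁ : 0 < k₁) (hk₂ : 0 < k₂) (hk₃ : 0 < k₃) :
    ∃ (G : Type) (_ : Group G) (_ : Fintype G),
      IsSupersolvable G ∧
      Fintype.card G =
        4 * (if p₁ = 2 then 2 * (p₁ ^ k₁ * p₂ ^ k₂ * p₃ ^ k₃)
             else p₁ ^ k₁ * p₂ ^ k₂ * p₃ ^ k₃) ∧
      ∃ α : MulAut G, orderOf α = p₁ ^ k₁ * p₂ ^ k₂ * p₃ ^ k₃ ∧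
        ∀ g : G, Function.minimalPeriod (⇑α) g ≠ p₁ ^ k₁ * p₂ ^ k₂ * p₃ ^ k₃ := by
  have h2p₂ : 2 < p₂ := lt_of_le_of_lt hp₁.two_le h12
  have h2p₃ : 2 < p₃ := lt_trans h2p₂ h23
  have ha1 : 1 < p₁ ^ k₁ := Nat.one_lt_pow hk₁.ne' hp₁.one_lt
  have hb1 : 1 < p₂ ^ k₂ := Nat.one_lt_pow hk₂.ne' hp₂.one_lt
  have hc1 : 1 < p₃ ^ k₃ := Nat.one_lt_pow hk₃.ne' hp₃.one_lt
  have hA : (if p₁ = 2 then 2 * p₁ ^ k₁ else p₁ ^ k₁) = 2 * p₁ ^ k₁ ∨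
      ((if p₁ = 2 then 2 * p₁ ^ k₁ else p₁ ^ k₁) = p₁ ^ k₁ ∧ Odd (p₁ ^ k₁)) := by
    by_cases h : p₁ = 2
    · exact Or.inl (if_pos h)
    · exact Or.inr ⟨if_neg h, Odd.pow (hp₁.odd_of_ne_two h)⟩
  have hab : Nat.Coprime (2 * p₁ ^ k₁) (p₂ ^ k₂) :=
    Nat.Coprime.mul
      (Nat.Coprime.pow_right _ ((Nat.coprime_primes Nat.prime_two hp₂).2 (by omega)))
      (Nat.Coprime.pow _ _ ((Nat.coprime_primes hp₁ hp₂).2 (by omega)))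
  have hac : Nat.Coprime (2 * p₁ ^ k₁) (p₃ ^ k₃) :=
    Nat.Coprime.mul
      (Nat.Coprime.pow_right _ ((Nat.coprime_primes Nat.prime_two hp₃).2 (by omega)))
      (Nat.Coprime.pow _ _ ((Nat.coprime_primes hp₁ hp₃).2 (by omega)))
  have hbc : Nat.Coprime (p₂ ^ k₂) (p₃ ^ k₃) :=
    Nat.Coprime.pow _ _ ((Nat.coprime_primes hp₂ hp₃).2 (by omega))
  obtain ⟨G, iG, iF, hss, hcard, α, hord, hreg⟩ :=
    key (p₁ ^ k₁) (p₂ ^ k₂) (p₃ ^ k₃) (if p₁ = 2 then 2 * p₁ ^ k₁ else p₁ ^ k₁)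
      ha1 hb1 hc1 hA hab hac hbc
  refine ⟨G, iG, iF, hss, ?_, α, hord, hreg⟩
  rw [hcard]
  split_ifs <;> ring
end

section
/- Let o be a positive integer divisible by at least three distinct primes. Then there exists a finite supersolvable group G and an automorphism α of G of order exactly o such that α has no regular cycle, i.e., no element of G has cycle length under α equal to o. -/
namespace Stmt11Aux
open DihedralGroup

/-- Parity of a dihedral element: rotations are even, reflections odd. -/
def par {N : ℕ} : DihedralGroup N → ZMod 2
  | DihedralGroup.r _ => 0
  | DihedralGroup.sr _ => 1

lemma par_mul {N : ℕ} (a b : DihedralGroup N) : par (a * b) = par a + par b := by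
  rcases a with i | i <;> rcases b with j | j <;> simp [par] <;> decide

@[simp] lemma par_one {N : ℕ} : par (1 : DihedralGroup N) = 0 := rfl

@[simp] lemma par_r {N : ℕ} (i : ZMod N) : par (r i) = 0 := rfl
@[simp] lemma par_sr {N : ℕ} (i : ZMod N) : par (sr i) = 1 := rfl

lemma par_inv {N : ℕ} (a : DihedralGroup N) : par a⁻¹ = par a := by
  rcases a with i | i <;> rfl

lemma inv_r {N : ℕ} (i : ZMod N) : (r i)⁻¹ = r (-i) := rfl

lemma zmod2_conj : ∀ a b : ZMod 2, a + b + a = b := by decide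

lemma zmod2_cases : ∀ a : ZMod 2, a = 0 ∨ a = 1 := by decide

lemma par_eq_zero_iff {N : ℕ} {a : DihedralGroup N} : par a = 0 ↔ ∃ i, a = r i := by
  rcases a with i | i <;> simp [par]

lemma conj_r_r {N : ℕ} (c j : ZMod N) : r c * r j * (r c)⁻¹ = r j := by
  rw [inv_r, r_mul_r, r_mul_r]
  congr 1; ring

lemma conj_fix {N : ℕ} {c : ZMod N} (h2 : 2 * c = 0) (d : DihedralGroup N) :
    r c * d * (r c)⁻¹ = d := by
  rcases d with j | j
  · exact conj_r_r c j
  · rw [inv_r, r_mul_sr, sr_mul_r]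
    congr 1; linear_combination -h2

lemma conj_sr_eq {N : ℕ} {c j : ZMod N} (h : r c * sr j * (r c)⁻¹ = sr j) : 2 * c = 0 := by
  rw [inv_r, r_mul_sr, sr_mul_r] at h
  injection h with h'
  linear_combination -h'

section Main

open DihedralGroup

variable (N1 N2 N3 : ℕ)

abbrev DD := DihedralGroup N1 × DihedralGroup N2 × DihedralGroup N3

def H : Subgroup (DD N1 N2 N3) where
  carrier := {x | par x.1 + par x.2.1 + par x.2.2 = 0}
  one_mem' := by simp
  mul_mem' := by
    intro a b ha hb
    simp only [Set.mem_setOf_eq, Prod.fst_mul, Prod.snd_mul, par_mul] at *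
    linear_combination ha + hb
  inv_mem' := by
    intro a ha
    simp only [Set.mem_setOf_eq, Prod.fst_inv, Prod.snd_inv, par_inv] at *
    exact ha

lemma mem_H_iff (x : DD N1 N2 N3) :
    x ∈ H N1 N2 N3 ↔ par x.1 + par x.2.1 + par x.2.2 = 0 := Iff.rfl

def rho : ↥(H N1 N2 N3) :=
  ⟨(r 1, r 1, r 1), by simp [mem_H_iff, par]⟩

def aH : MulAut ↥(H N1 N2 N3) := MulAut.conj (rho N1 N2 N3)

lemma aH_pow_apply (n : ℕ) (x : ↥(H N1 N2 N3)) :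
    (((aH N1 N2 N3 ^ n) x : ↥(H N1 N2 N3)) : DD N1 N2 N3) =
      (r n * (x : DD N1 N2 N3).1 * (r n)⁻¹,
       r n * (x : DD N1 N2 N3).2.1 * (r n)⁻¹,
       r n * (x : DD N1 N2 N3).2.2 * (r n)⁻¹) := by
  have h : aH N1 N2 N3 ^ n = MulAut.conj (rho N1 N2 N3 ^ n) := (map_pow MulAut.conj _ n).symm
  rw [h, MulAut.conj_apply]
  have hv : ((rho N1 N2 N3 ^ n : ↥(H N1 N2 N3)) : DD N1 N2 N3)
      = (r (n : ZMod N1), r (n : ZMod N2), r (n : ZMod N3)) := by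
    rw [SubmonoidClass.coe_pow]
    show ((r 1, r 1, r 1) : DD N1 N2 N3) ^ n = _
    rw [Prod.pow_mk, Prod.pow_mk, r_one_pow, r_one_pow, r_one_pow]
  push_cast [hv]
  rfl

lemma aH_pow_fix_iff (n : ℕ) (x : ↥(H N1 N2 N3)) :
    (aH N1 N2 N3 ^ n) x = x ↔
      (r n * (x : DD N1 N2 N3).1 * (r n)⁻¹ = (x : DD N1 N2 N3).1 ∧
       r n * (x : DD N1 N2 N3).2.1 * (r n)⁻¹ = (x : DD N1 N2 N3).2.1 ∧
       r n * (x : DD N1 N2 N3).2.2 * (r n)⁻¹ = (x : DD N1 N2 N3).2.2) := by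
  rw [Subtype.ext_iff, aH_pow_apply, Prod.ext_iff, Prod.ext_iff]

end Main
section Order

open DihedralGroup

variable (N1 N2 N3 P1 P2 P3 : ℕ) [NeZero N1] [NeZero N2] [NeZero N3]
variable (k1 : ∀ n : ℕ, N1 ∣ 2 * n ↔ P1 ∣ n)
variable (k2 : ∀ n : ℕ, N2 ∣ 2 * n ↔ P2 ∣ n)
variable (k3 : ∀ n : ℕ, N3 ∣ 2 * n ↔ P3 ∣ n)

lemma two_cast_eq_zero_iff {N : ℕ} [NeZero N] (n : ℕ) :
    (2 * (n : ZMod N) = 0) ↔ N ∣ 2 * n := by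
  rw [← Nat.cast_ofNat, ← Nat.cast_mul, ZMod.natCast_eq_zero_iff]

include k1 k2 k3 in
lemma aH_pow_eq_one_iff (n : ℕ) :
    aH N1 N2 N3 ^ n = 1 ↔ (P1 ∣ n ∧ P2 ∣ n ∧ P3 ∣ n) := by
  constructor
  · intro hone
    have key : ∀ (x : DD N1 N2 N3) (hx : x ∈ H N1 N2 N3),
        (aH N1 N2 N3 ^ n) ⟨x, hx⟩ = ⟨x, hx⟩ := by
      intro x hx; rw [hone]; rfl
    have h12 := key (sr 0, sr 0, r 0) (by
      show par (sr 0 : DihedralGroup N1) + par (sr 0 : DihedralGroup N2)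
        + par (r 0 : DihedralGroup N3) = 0
      rw [par_sr, par_sr, par_r]; decide)
    have h3 := key (r 0, sr 0, sr 0) (by
      show par (r 0 : DihedralGroup N1) + par (sr 0 : DihedralGroup N2)
        + par (sr 0 : DihedralGroup N3) = 0
      rw [par_r, par_sr, par_sr]; decide)
    rw [aH_pow_fix_iff] at h12 h3
    refine ⟨?_, ?_, ?_⟩
    · rw [← k1 n, ← two_cast_eq_zero_iff]; exact conj_sr_eq h12.1
    · rw [← k2 n, ← two_cast_eq_zero_iff]; exact conj_sr_eq h12.2.1
    · rw [← k3 n, ← two_cast_eq_zero_iff]; exact conj_sr_eq h3.2.2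
  · rintro ⟨h1, h2, h3⟩
    refine DFunLike.ext _ _ fun x => ?_
    show (aH N1 N2 N3 ^ n) x = x
    rw [aH_pow_fix_iff]
    exact ⟨conj_fix ((two_cast_eq_zero_iff n).mpr ((k1 n).mpr h1)) _,
           conj_fix ((two_cast_eq_zero_iff n).mpr ((k2 n).mpr h2)) _,
           conj_fix ((two_cast_eq_zero_iff n).mpr ((k3 n).mpr h3)) _⟩

include k1 k2 k3 in
lemma semifix (x : ↥(H N1 N2 N3)) :
    (∀ n : ℕ, P2 ∣ n → P3 ∣ n → (aH N1 N2 N3 ^ n) x = x) ∨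
    (∀ n : ℕ, P1 ∣ n → P3 ∣ n → (aH N1 N2 N3 ^ n) x = x) ∨
    (∀ n : ℕ, P1 ∣ n → P2 ∣ n → (aH N1 N2 N3 ^ n) x = x) := by
  obtain ⟨⟨x1, x2, x3⟩, hx⟩ := x
  rw [mem_H_iff] at hx
  rcases x1 with i1 | i1
  · left
    intro n hn2 hn3
    rw [aH_pow_fix_iff]
    exact ⟨conj_r_r _ _,
           conj_fix ((two_cast_eq_zero_iff n).mpr ((k2 n).mpr hn2)) _,
           conj_fix ((two_cast_eq_zero_iff n).mpr ((k3 n).mpr hn3)) _⟩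
  rcases x2 with i2 | i2
  · right; left
    intro n hn1 hn3
    rw [aH_pow_fix_iff]
    exact ⟨conj_fix ((two_cast_eq_zero_iff n).mpr ((k1 n).mpr hn1)) _,
           conj_r_r _ _,
           conj_fix ((two_cast_eq_zero_iff n).mpr ((k3 n).mpr hn3)) _⟩
  rcases x3 with i3 | i3
  · right; right
    intro n hn1 hn2
    rw [aH_pow_fix_iff]
    exact ⟨conj_fix ((two_cast_eq_zero_iff n).mpr ((k1 n).mpr hn1)) _,
           conj_fix ((two_cast_eq_zero_iff n).mpr ((k2 n).mpr hn2)) _,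
           conj_r_r _ _⟩
  · exfalso
    simp [par] at hx
    exact absurd hx (by decide)

end Order
section Shear

open Multiplicative

def shear (m : ℕ) : MulAut (Multiplicative (ZMod m × ZMod m)) where
  toFun x := ofAdd ((toAdd x).1 + (toAdd x).2, (toAdd x).2)
  invFun x := ofAdd ((toAdd x).1 - (toAdd x).2, (toAdd x).2)
  left_inv x := by simp
  right_inv x := by simp
  map_mul' x y := by
    simp only [toAdd_mul, Prod.fst_add, Prod.snd_add, ← ofAdd_add]
    congr 1
    exact Prod.ext (add_add_add_comm _ _ _ _) rfl

lemma shear_pow_apply (m n : ℕ) (x : Multiplicative (ZMod m × ZMod m)) :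
    (shear m ^ n) x = ofAdd ((toAdd x).1 + n • (toAdd x).2, (toAdd x).2) := by
  induction n generalizing x with
  | zero => simp
  | succ n ih =>
    rw [pow_succ, MulAut.mul_apply]
    have hx : (shear m) x = ofAdd ((toAdd x).1 + (toAdd x).2, (toAdd x).2) := rfl
    rw [hx, ih]
    clear hx
    simp only [toAdd_ofAdd]
    congr 1
    refine Prod.ext ?_ rfl
    show (toAdd x).1 + (toAdd x).2 + n • (toAdd x).2 = (toAdd x).1 + (n + 1) • (toAdd x).2
    rw [add_nsmul, one_nsmul]; ring

lemma shear_pow_eq_one_iff (m : ℕ) [NeZero m] (n : ℕ) :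
    shear m ^ n = 1 ↔ m ∣ n := by
  constructor
  · intro h
    have := DFunLike.congr_fun h (ofAdd ((0 : ZMod m), (1 : ZMod m)))
    rw [shear_pow_apply] at this
    simp only [toAdd_ofAdd, MulAut.one_apply] at this
    have h2 := congrArg (fun z => (toAdd z).1) this
    simp only [toAdd_ofAdd] at h2
    rw [← ZMod.natCast_eq_zero_iff]
    have : (n : ZMod m) = n • (1 : ZMod m) := by rw [nsmul_eq_mul, mul_one]
    rw [this]
    simpa using h2
  · intro h
    refine DFunLike.ext _ _ fun x => ?_
    rw [shear_pow_apply]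
    have : (n • (toAdd x).2 : ZMod m) = 0 := by
      rw [nsmul_eq_mul, (ZMod.natCast_eq_zero_iff n m).mpr h, zero_mul]
    rw [this, add_zero]
    simp

lemma shear_pow_fix (m : ℕ) [NeZero m] {n : ℕ} (h : m ∣ n)
    (x : Multiplicative (ZMod m × ZMod m)) : (shear m ^ n) x = x := by
  rw [(shear_pow_eq_one_iff m n).mpr h]; rfl

end Shear

section ProdAut

variable {G1 G2 : Type*} [Group G1] [Group G2]

lemma prodCongr_pow_apply (e : MulAut G1) (f : MulAut G2) (n : ℕ) (x : G1 × G2) :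
    ((MulEquiv.prodCongr e f : MulAut (G1 × G2)) ^ n) x = ((e ^ n) x.1, (f ^ n) x.2) := by
  induction n generalizing x with
  | zero => simp
  | succ n ih =>
    rw [pow_succ, pow_succ, pow_succ, MulAut.mul_apply, MulAut.mul_apply, MulAut.mul_apply, ih]
    rfl

lemma prodCongr_pow_eq_one_iff (e : MulAut G1) (f : MulAut G2) (n : ℕ) :
    (MulEquiv.prodCongr e f : MulAut (G1 × G2)) ^ n = 1 ↔ (e ^ n = 1 ∧ f ^ n = 1) := by
  constructor
  · intro h
    constructor
    · refine DFunLike.ext _ _ fun z => ?_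
      have := DFunLike.congr_fun h (z, 1)
      rw [prodCongr_pow_apply] at this
      simpa using congrArg Prod.fst this
    · refine DFunLike.ext _ _ fun z => ?_
      have := DFunLike.congr_fun h ((1 : G1), z)
      rw [prodCongr_pow_apply] at this
      simpa using congrArg Prod.snd this
  · rintro ⟨h1, h2⟩
    refine DFunLike.ext _ _ fun z => ?_
    rw [prodCongr_pow_apply, h1, h2]
    rfl

lemma mulaut_iterate {G : Type*} [Group G] (e : MulAut G) (n : ℕ) (x : G) :
    (⇑e)^[n] x = (e ^ n) x := by
  induction n generalizing x with
  | zero => simp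
  | succ n ih =>
    rw [Function.iterate_succ_apply, ih, pow_succ, MulAut.mul_apply]

end ProdAut
section Chain

open DihedralGroup Multiplicative

variable (N1 N2 N3 m : ℕ)

abbrev T := ↥(H N1 N2 N3) × Multiplicative (ZMod m × ZMod m)

@[simp] lemma Hmul1 (a b : ↥(H N1 N2 N3)) :
    ((a * b : ↥(H N1 N2 N3)) : DD N1 N2 N3).1 = (a : DD N1 N2 N3).1 * (b : DD N1 N2 N3).1 := rfl
@[simp] lemma Hmul21 (a b : ↥(H N1 N2 N3)) :
    ((a * b : ↥(H N1 N2 N3)) : DD N1 N2 N3).2.1 = (a : DD N1 N2 N3).2.1 * (b : DD N1 N2 N3).2.1 := rfl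
@[simp] lemma Hmul22 (a b : ↥(H N1 N2 N3)) :
    ((a * b : ↥(H N1 N2 N3)) : DD N1 N2 N3).2.2 = (a : DD N1 N2 N3).2.2 * (b : DD N1 N2 N3).2.2 := rfl
@[simp] lemma Hinv1 (a : ↥(H N1 N2 N3)) :
    ((a⁻¹ : ↥(H N1 N2 N3)) : DD N1 N2 N3).1 = ((a : DD N1 N2 N3).1)⁻¹ := rfl
@[simp] lemma Hinv21 (a : ↥(H N1 N2 N3)) :
    ((a⁻¹ : ↥(H N1 N2 N3)) : DD N1 N2 N3).2.1 = ((a : DD N1 N2 N3).2.1)⁻¹ := rfl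
@[simp] lemma Hinv22 (a : ↥(H N1 N2 N3)) :
    ((a⁻¹ : ↥(H N1 N2 N3)) : DD N1 N2 N3).2.2 = ((a : DD N1 N2 N3).2.2)⁻¹ := rfl
@[simp] lemma Hone1 : ((1 : ↥(H N1 N2 N3)) : DD N1 N2 N3).1 = 1 := rfl
@[simp] lemma Hone21 : ((1 : ↥(H N1 N2 N3)) : DD N1 N2 N3).2.1 = 1 := rfl
@[simp] lemma Hone22 : ((1 : ↥(H N1 N2 N3)) : DD N1 N2 N3).2.2 = 1 := rfl

lemma par_conj {N : ℕ} (g d : DihedralGroup N) : par (g * d * g⁻¹) = par d := by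
  rw [par_mul, par_mul, par_inv, zmod2_conj]

def t1 : Subgroup (T N1 N2 N3 m) where
  carrier := {x | x.1 = 1 ∧ (toAdd x.2).2 = 0}
  one_mem' := ⟨rfl, rfl⟩
  mul_mem' {a b} ha hb := ⟨by rw [Prod.fst_mul, ha.1, hb.1, one_mul],
    by rw [Prod.snd_mul, toAdd_mul, Prod.snd_add, ha.2, hb.2, add_zero]⟩
  inv_mem' {a} ha := ⟨by rw [Prod.fst_inv, ha.1, inv_one],
    by rw [Prod.snd_inv, toAdd_inv, Prod.snd_neg, ha.2, neg_zero]⟩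

def t2 : Subgroup (T N1 N2 N3 m) where
  carrier := {x | x.1 = 1}
  one_mem' := rfl
  mul_mem' {a b} ha hb := by rw [Set.mem_setOf_eq, Prod.fst_mul, ha, hb, one_mul]
  inv_mem' {a} ha := by rw [Set.mem_setOf_eq, Prod.fst_inv, ha, inv_one]

def t3 : Subgroup (T N1 N2 N3 m) where
  carrier := {x | par ((x.1 : DD N1 N2 N3)).1 = 0 ∧ ((x.1 : DD N1 N2 N3)).2.1 = 1 ∧
    ((x.1 : DD N1 N2 N3)).2.2 = 1}
  one_mem' := ⟨rfl, rfl, rfl⟩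
  mul_mem' {a b} ha hb := by
    refine ⟨?_, ?_, ?_⟩
    · rw [Prod.fst_mul, Hmul1, par_mul, ha.1, hb.1, add_zero]
    · rw [Prod.fst_mul, Hmul21, ha.2.1, hb.2.1, one_mul]
    · rw [Prod.fst_mul, Hmul22, ha.2.2, hb.2.2, one_mul]
  inv_mem' {a} ha := by
    refine ⟨?_, ?_, ?_⟩
    · rw [Prod.fst_inv, Hinv1, par_inv, ha.1]
    · rw [Prod.fst_inv, Hinv21, ha.2.1, inv_one]
    · rw [Prod.fst_inv, Hinv22, ha.2.2, inv_one]

def t4 : Subgroup (T N1 N2 N3 m) where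
  carrier := {x | par ((x.1 : DD N1 N2 N3)).1 = 0 ∧ par ((x.1 : DD N1 N2 N3)).2.1 = 0 ∧
    ((x.1 : DD N1 N2 N3)).2.2 = 1}
  one_mem' := ⟨rfl, rfl, rfl⟩
  mul_mem' {a b} ha hb := by
    refine ⟨?_, ?_, ?_⟩
    · rw [Prod.fst_mul, Hmul1, par_mul, ha.1, hb.1, add_zero]
    · rw [Prod.fst_mul, Hmul21, par_mul, ha.2.1, hb.2.1, add_zero]
    · rw [Prod.fst_mul, Hmul22, ha.2.2, hb.2.2, one_mul]
  inv_mem' {a} ha := by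
    refine ⟨?_, ?_, ?_⟩
    · rw [Prod.fst_inv, Hinv1, par_inv, ha.1]
    · rw [Prod.fst_inv, Hinv21, par_inv, ha.2.1]
    · rw [Prod.fst_inv, Hinv22, ha.2.2, inv_one]

def t5 : Subgroup (T N1 N2 N3 m) where
  carrier := {x | par ((x.1 : DD N1 N2 N3)).1 = 0 ∧ par ((x.1 : DD N1 N2 N3)).2.1 = 0 ∧
    par ((x.1 : DD N1 N2 N3)).2.2 = 0}
  one_mem' := ⟨rfl, rfl, rfl⟩
  mul_mem' {a b} ha hb := by
    refine ⟨?_, ?_, ?_⟩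
    · rw [Prod.fst_mul, Hmul1, par_mul, ha.1, hb.1, add_zero]
    · rw [Prod.fst_mul, Hmul21, par_mul, ha.2.1, hb.2.1, add_zero]
    · rw [Prod.fst_mul, Hmul22, par_mul, ha.2.2, hb.2.2, add_zero]
  inv_mem' {a} ha := by
    refine ⟨?_, ?_, ?_⟩
    · rw [Prod.fst_inv, Hinv1, par_inv, ha.1]
    · rw [Prod.fst_inv, Hinv21, par_inv, ha.2.1]
    · rw [Prod.fst_inv, Hinv22, par_inv, ha.2.2]

def t6 : Subgroup (T N1 N2 N3 m) where
  carrier := {x | par ((x.1 : DD N1 N2 N3)).2.2 = 0}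
  one_mem' := rfl
  mul_mem' {a b} ha hb := by
    rw [Set.mem_setOf_eq, Prod.fst_mul, Hmul22, par_mul, ha, hb, add_zero]
  inv_mem' {a} ha := by
    rw [Set.mem_setOf_eq, Prod.fst_inv, Hinv22, par_inv, ha]

lemma t1_normal : (t1 N1 N2 N3 m).Normal := by
  constructor
  intro n hn g
  refine ⟨?_, ?_⟩
  · show (g * n * g⁻¹).1 = 1
    rw [Prod.fst_mul, Prod.fst_mul, Prod.fst_inv, hn.1, mul_one, mul_inv_cancel]
  · show (toAdd (g * n * g⁻¹).2).2 = 0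
    rw [Prod.snd_mul, Prod.snd_mul, Prod.snd_inv, mul_comm g.2 n.2, mul_inv_cancel_right]
    exact hn.2

lemma t2_normal : (t2 N1 N2 N3 m).Normal := by
  constructor
  intro n hn g
  show (g * n * g⁻¹).1 = 1
  rw [Prod.fst_mul, Prod.fst_mul, Prod.fst_inv, hn, mul_one, mul_inv_cancel]

lemma t3_normal : (t3 N1 N2 N3 m).Normal := by
  constructor
  intro n hn g
  refine ⟨?_, ?_, ?_⟩
  · show par (((g * n * g⁻¹).1 : ↥(H N1 N2 N3)) : DD N1 N2 N3).1 = 0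
    rw [Prod.fst_mul, Prod.fst_mul, Prod.fst_inv, Hmul1, Hmul1, Hinv1, par_conj, hn.1]
  · show (((g * n * g⁻¹).1 : ↥(H N1 N2 N3)) : DD N1 N2 N3).2.1 = 1
    rw [Prod.fst_mul, Prod.fst_mul, Prod.fst_inv, Hmul21, Hmul21, Hinv21, hn.2.1, mul_one,
      mul_inv_cancel]
  · show (((g * n * g⁻¹).1 : ↥(H N1 N2 N3)) : DD N1 N2 N3).2.2 = 1
    rw [Prod.fst_mul, Prod.fst_mul, Prod.fst_inv, Hmul22, Hmul22, Hinv22, hn.2.2, mul_one,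
      mul_inv_cancel]

lemma t4_normal : (t4 N1 N2 N3 m).Normal := by
  constructor
  intro n hn g
  refine ⟨?_, ?_, ?_⟩
  · show par (((g * n * g⁻¹).1 : ↥(H N1 N2 N3)) : DD N1 N2 N3).1 = 0
    rw [Prod.fst_mul, Prod.fst_mul, Prod.fst_inv, Hmul1, Hmul1, Hinv1, par_conj, hn.1]
  · show par (((g * n * g⁻¹).1 : ↥(H N1 N2 N3)) : DD N1 N2 N3).2.1 = 0
    rw [Prod.fst_mul, Prod.fst_mul, Prod.fst_inv, Hmul21, Hmul21, Hinv21, par_conj, hn.2.1]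
  · show (((g * n * g⁻¹).1 : ↥(H N1 N2 N3)) : DD N1 N2 N3).2.2 = 1
    rw [Prod.fst_mul, Prod.fst_mul, Prod.fst_inv, Hmul22, Hmul22, Hinv22, hn.2.2, mul_one,
      mul_inv_cancel]

lemma t5_normal : (t5 N1 N2 N3 m).Normal := by
  constructor
  intro n hn g
  refine ⟨?_, ?_, ?_⟩
  · show par (((g * n * g⁻¹).1 : ↥(H N1 N2 N3)) : DD N1 N2 N3).1 = 0
    rw [Prod.fst_mul, Prod.fst_mul, Prod.fst_inv, Hmul1, Hmul1, Hinv1, par_conj, hn.1]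
  · show par (((g * n * g⁻¹).1 : ↥(H N1 N2 N3)) : DD N1 N2 N3).2.1 = 0
    rw [Prod.fst_mul, Prod.fst_mul, Prod.fst_inv, Hmul21, Hmul21, Hinv21, par_conj, hn.2.1]
  · show par (((g * n * g⁻¹).1 : ↥(H N1 N2 N3)) : DD N1 N2 N3).2.2 = 0
    rw [Prod.fst_mul, Prod.fst_mul, Prod.fst_inv, Hmul22, Hmul22, Hinv22, par_conj, hn.2.2]

lemma t6_normal : (t6 N1 N2 N3 m).Normal := by
  constructor
  intro n hn g
  show par (((g * n * g⁻¹).1 : ↥(H N1 N2 N3)) : DD N1 N2 N3).2.2 = 0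
  rw [Prod.fst_mul, Prod.fst_mul, Prod.fst_inv, Hmul22, Hmul22, Hinv22, par_conj, hn]

end Chain
section Steps

open DihedralGroup Multiplicative

variable (N1 N2 N3 m : ℕ) [NeZero N1] [NeZero N2] [NeZero N3] [NeZero m]

omit [NeZero N1] [NeZero N2] [NeZero N3] [NeZero m] in
lemma mono12 : t1 N1 N2 N3 m ≤ t2 N1 N2 N3 m := fun _ hx => hx.1

omit [NeZero N1] [NeZero N2] [NeZero N3] [NeZero m] in
lemma mono23 : t2 N1 N2 N3 m ≤ t3 N1 N2 N3 m := by
  intro x hx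
  have h : x.1 = 1 := hx
  exact ⟨by rw [h]; rfl, by rw [h]; rfl, by rw [h]; rfl⟩

omit [NeZero N1] [NeZero N2] [NeZero N3] [NeZero m] in
lemma mono34 : t3 N1 N2 N3 m ≤ t4 N1 N2 N3 m := by
  intro x hx
  exact ⟨hx.1, by rw [hx.2.1]; rfl, hx.2.2⟩

omit [NeZero N1] [NeZero N2] [NeZero N3] [NeZero m] in
lemma mono45 : t4 N1 N2 N3 m ≤ t5 N1 N2 N3 m := by
  intro x hx
  exact ⟨hx.1, hx.2.1, by rw [hx.2.2]; rfl⟩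

omit [NeZero N1] [NeZero N2] [NeZero N3] [NeZero m] in
lemma mono56 : t5 N1 N2 N3 m ≤ t6 N1 N2 N3 m := fun _ hx => hx.2.2

omit [NeZero N1] [NeZero N2] [NeZero N3] in
lemma step0 : ∃ x ∈ t1 N1 N2 N3 m, ∀ y ∈ t1 N1 N2 N3 m,
    ∃ k : ℤ, y * (x ^ k)⁻¹ ∈ (⊥ : Subgroup (T N1 N2 N3 m)) := by
  refine ⟨(1, ofAdd ((1 : ZMod m), (0 : ZMod m))), ⟨rfl, rfl⟩, ?_⟩
  rintro ⟨y1, y2⟩ ⟨hy1, hy2⟩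
  refine ⟨((toAdd y2).1.val : ℤ), ?_⟩
  rw [Subgroup.mem_bot, zpow_natCast, mul_inv_eq_one]
  have h2 : (toAdd y2).1.val • ((1 : ZMod m), (0 : ZMod m)) = toAdd y2 := by
    refine Prod.ext ?_ ?_
    · show (toAdd y2).1.val • (1 : ZMod m) = (toAdd y2).1
      rw [nsmul_eq_mul, mul_one, ZMod.natCast_zmod_val]
    · show (toAdd y2).1.val • (0 : ZMod m) = (toAdd y2).2
      rw [smul_zero, hy2]
  refine Prod.ext ?_ ?_
  · simpa using hy1
  · show y2 = (ofAdd ((1 : ZMod m), (0 : ZMod m))) ^ (toAdd y2).1.val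
    rw [← ofAdd_nsmul, h2, ofAdd_toAdd]

omit [NeZero N1] [NeZero N2] [NeZero N3] in
lemma step1 : ∃ x ∈ t2 N1 N2 N3 m, ∀ y ∈ t2 N1 N2 N3 m,
    ∃ k : ℤ, y * (x ^ k)⁻¹ ∈ t1 N1 N2 N3 m := by
  refine ⟨(1, ofAdd ((0 : ZMod m), (1 : ZMod m))), rfl, ?_⟩
  rintro ⟨y1, y2⟩ hy
  have hy1 : y1 = 1 := hy
  refine ⟨((toAdd y2).2.val : ℤ), ?_, ?_⟩
  · show y1 * ((1 : ↥(H N1 N2 N3)) ^ (((toAdd y2).2.val : ℕ) : ℤ))⁻¹ = 1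
    rw [hy1, one_zpow, inv_one, one_mul]
  · show (toAdd (y2 * ((ofAdd ((0 : ZMod m), (1 : ZMod m))) ^ (((toAdd y2).2.val : ℕ) : ℤ))⁻¹)).2 = 0
    rw [zpow_natCast, ← ofAdd_nsmul, toAdd_mul, toAdd_inv, toAdd_ofAdd]
    show (toAdd y2).2 + (-((toAdd y2).2.val • ((0 : ZMod m), (1 : ZMod m)))).2 = 0
    rw [Prod.snd_neg, Prod.smul_mk]
    show (toAdd y2).2 + -((toAdd y2).2.val • (1 : ZMod m)) = 0
    rw [nsmul_eq_mul, mul_one, ZMod.natCast_zmod_val, add_neg_cancel]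

omit [NeZero N2] [NeZero N3] [NeZero m] in
lemma step2 : ∃ x ∈ t3 N1 N2 N3 m, ∀ y ∈ t3 N1 N2 N3 m,
    ∃ k : ℤ, y * (x ^ k)⁻¹ ∈ t2 N1 N2 N3 m := by
  have hmem : ((r 1, 1, 1) : DD N1 N2 N3) ∈ H N1 N2 N3 := by simp [mem_H_iff]
  refine ⟨(⟨(r 1, 1, 1), hmem⟩, 1), ⟨rfl, rfl, rfl⟩, ?_⟩
  rintro ⟨y1, y2⟩ ⟨h1, h2, h3⟩
  obtain ⟨i, hi⟩ := par_eq_zero_iff.mp h1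
  refine ⟨(i.val : ℤ), ?_⟩
  show y1 * ((⟨(r 1, 1, 1), hmem⟩ : ↥(H N1 N2 N3)) ^ ((i.val : ℕ) : ℤ))⁻¹ = 1
  rw [zpow_natCast, mul_inv_eq_one]
  apply Subtype.ext
  rw [SubmonoidClass.coe_pow]
  show (y1 : DD N1 N2 N3) = ((r 1, 1, 1) : DD N1 N2 N3) ^ i.val
  rw [Prod.pow_mk, Prod.pow_mk, r_one_pow, one_pow, one_pow, ZMod.natCast_zmod_val]
  exact Prod.ext hi (Prod.ext h2 h3)

omit [NeZero N1] [NeZero N3] [NeZero m] in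
lemma step3 : ∃ x ∈ t4 N1 N2 N3 m, ∀ y ∈ t4 N1 N2 N3 m,
    ∃ k : ℤ, y * (x ^ k)⁻¹ ∈ t3 N1 N2 N3 m := by
  have hmem : ((1, r 1, 1) : DD N1 N2 N3) ∈ H N1 N2 N3 := by simp [mem_H_iff]
  refine ⟨(⟨(1, r 1, 1), hmem⟩, 1), ⟨rfl, rfl, rfl⟩, ?_⟩
  rintro ⟨y1, y2⟩ ⟨h1, h2, h3⟩
  obtain ⟨i, hi⟩ := par_eq_zero_iff.mp h2
  refine ⟨(i.val : ℤ), ?_⟩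
  have hco : (((⟨(1, r 1, 1), hmem⟩ : ↥(H N1 N2 N3)) ^ (i.val : ℕ) : ↥(H N1 N2 N3)) : DD N1 N2 N3)
      = ((1, r i, 1) : DD N1 N2 N3) := by
    rw [SubmonoidClass.coe_pow]
    show ((1, r 1, 1) : DD N1 N2 N3) ^ i.val = _
    rw [Prod.pow_mk, Prod.pow_mk, r_one_pow, one_pow, one_pow, ZMod.natCast_zmod_val]
  refine ⟨?_, ?_, ?_⟩
  · show par ((y1 * ((⟨(1, r 1, 1), hmem⟩ : ↥(H N1 N2 N3)) ^ ((i.val : ℕ) : ℤ))⁻¹ :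
      ↥(H N1 N2 N3)) : DD N1 N2 N3).1 = 0
    rw [zpow_natCast, Hmul1, Hinv1, hco, par_mul, par_inv, h1]
    rfl
  · show ((y1 * ((⟨(1, r 1, 1), hmem⟩ : ↥(H N1 N2 N3)) ^ ((i.val : ℕ) : ℤ))⁻¹ :
      ↥(H N1 N2 N3)) : DD N1 N2 N3).2.1 = 1
    rw [zpow_natCast, Hmul21, Hinv21, hco, hi]
    show r i * (r i)⁻¹ = 1
    rw [mul_inv_cancel]
  · show ((y1 * ((⟨(1, r 1, 1), hmem⟩ : ↥(H N1 N2 N3)) ^ ((i.val : ℕ) : ℤ))⁻¹ :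
      ↥(H N1 N2 N3)) : DD N1 N2 N3).2.2 = 1
    rw [zpow_natCast, Hmul22, Hinv22, hco, h3]
    show (1 : DihedralGroup N3) * 1⁻¹ = 1
    rw [inv_one, mul_one]

omit [NeZero N1] [NeZero N2] [NeZero m] in
lemma step4 : ∃ x ∈ t5 N1 N2 N3 m, ∀ y ∈ t5 N1 N2 N3 m,
    ∃ k : ℤ, y * (x ^ k)⁻¹ ∈ t4 N1 N2 N3 m := by
  have hmem : ((1, 1, r 1) : DD N1 N2 N3) ∈ H N1 N2 N3 := by simp [mem_H_iff]
  refine ⟨(⟨(1, 1, r 1), hmem⟩, 1), ⟨rfl, rfl, rfl⟩, ?_⟩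
  rintro ⟨y1, y2⟩ ⟨h1, h2, h3⟩
  obtain ⟨i, hi⟩ := par_eq_zero_iff.mp h3
  refine ⟨(i.val : ℤ), ?_⟩
  have hco : (((⟨(1, 1, r 1), hmem⟩ : ↥(H N1 N2 N3)) ^ (i.val : ℕ) : ↥(H N1 N2 N3)) : DD N1 N2 N3)
      = ((1, 1, r i) : DD N1 N2 N3) := by
    rw [SubmonoidClass.coe_pow]
    show ((1, 1, r 1) : DD N1 N2 N3) ^ i.val = _
    rw [Prod.pow_mk, Prod.pow_mk, r_one_pow, one_pow, one_pow, ZMod.natCast_zmod_val]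
  refine ⟨?_, ?_, ?_⟩
  · show par ((y1 * ((⟨(1, 1, r 1), hmem⟩ : ↥(H N1 N2 N3)) ^ ((i.val : ℕ) : ℤ))⁻¹ :
      ↥(H N1 N2 N3)) : DD N1 N2 N3).1 = 0
    rw [zpow_natCast, Hmul1, Hinv1, hco, par_mul, par_inv, h1]
    rfl
  · show par ((y1 * ((⟨(1, 1, r 1), hmem⟩ : ↥(H N1 N2 N3)) ^ ((i.val : ℕ) : ℤ))⁻¹ :
      ↥(H N1 N2 N3)) : DD N1 N2 N3).2.1 = 0
    rw [zpow_natCast, Hmul21, Hinv21, hco, par_mul, par_inv, h2]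
    rfl
  · show ((y1 * ((⟨(1, 1, r 1), hmem⟩ : ↥(H N1 N2 N3)) ^ ((i.val : ℕ) : ℤ))⁻¹ :
      ↥(H N1 N2 N3)) : DD N1 N2 N3).2.2 = 1
    rw [zpow_natCast, Hmul22, Hinv22, hco, hi]
    show r i * (r i)⁻¹ = 1
    rw [mul_inv_cancel]

omit [NeZero N1] [NeZero N2] [NeZero N3] [NeZero m] in
lemma step5 : ∃ x ∈ t6 N1 N2 N3 m, ∀ y ∈ t6 N1 N2 N3 m,
    ∃ k : ℤ, y * (x ^ k)⁻¹ ∈ t5 N1 N2 N3 m := by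
  have hmem : ((sr 0, sr 0, r 0) : DD N1 N2 N3) ∈ H N1 N2 N3 := by
    show (par (sr 0 : DihedralGroup N1) + par (sr 0 : DihedralGroup N2)
      + par (r 0 : DihedralGroup N3) : ZMod 2) = 0
    rw [par_sr, par_sr, par_r]
    decide
  refine ⟨(⟨(sr 0, sr 0, r 0), hmem⟩, 1), rfl, ?_⟩
  rintro ⟨y1, y2⟩ hy
  have hy3 : par ((y1 : DD N1 N2 N3)).2.2 = 0 := hy
  have hsum : par (y1 : DD N1 N2 N3).1 + par (y1 : DD N1 N2 N3).2.1
      + par (y1 : DD N1 N2 N3).2.2 = 0 := y1.2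
  have himp : ∀ a b c : ZMod 2, a + b + c = 0 → c = 0 → a = 1 → b = 1 := by decide
  rcases zmod2_cases (par ((y1 : DD N1 N2 N3)).1) with h0 | h1
  · refine ⟨0, ?_⟩
    have h2 : par ((y1 : DD N1 N2 N3)).2.1 = 0 := by
      have : ∀ a b c : ZMod 2, a + b + c = 0 → c = 0 → a = 0 → b = 0 := by decide
      exact this _ _ _ hsum hy3 h0
    rw [zpow_zero, inv_one, mul_one]
    exact ⟨h0, h2, hy3⟩
  · refine ⟨1, ?_⟩
    have h2 : par ((y1 : DD N1 N2 N3)).2.1 = 1 := himp _ _ _ hsum hy3 h1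
    rw [zpow_one]
    refine ⟨?_, ?_, ?_⟩
    · show par ((y1 * (⟨(sr 0, sr 0, r 0), hmem⟩ : ↥(H N1 N2 N3))⁻¹ :
        ↥(H N1 N2 N3)) : DD N1 N2 N3).1 = 0
      rw [Hmul1, Hinv1, par_mul, par_inv, h1]
      show (1 : ZMod 2) + 1 = 0
      decide
    · show par ((y1 * (⟨(sr 0, sr 0, r 0), hmem⟩ : ↥(H N1 N2 N3))⁻¹ :
        ↥(H N1 N2 N3)) : DD N1 N2 N3).2.1 = 0
      rw [Hmul21, Hinv21, par_mul, par_inv, h2]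
      show (1 : ZMod 2) + 1 = 0
      decide
    · show par ((y1 * (⟨(sr 0, sr 0, r 0), hmem⟩ : ↥(H N1 N2 N3))⁻¹ :
        ↥(H N1 N2 N3)) : DD N1 N2 N3).2.2 = 0
      rw [Hmul22, Hinv22, par_mul, par_inv, hy3]
      show (0 : ZMod 2) + 0 = 0
      decide

omit [NeZero N1] [NeZero N2] [NeZero N3] [NeZero m] in
lemma step6 : ∃ x ∈ (⊤ : Subgroup (T N1 N2 N3 m)), ∀ y ∈ (⊤ : Subgroup (T N1 N2 N3 m)),
    ∃ k : ℤ, y * (x ^ k)⁻¹ ∈ t6 N1 N2 N3 m := by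
  have hmem : ((sr 0, r 0, sr 0) : DD N1 N2 N3) ∈ H N1 N2 N3 := by
    show (par (sr 0 : DihedralGroup N1) + par (r 0 : DihedralGroup N2)
      + par (sr 0 : DihedralGroup N3) : ZMod 2) = 0
    rw [par_sr, par_r, par_sr]
    decide
  refine ⟨(⟨(sr 0, r 0, sr 0), hmem⟩, 1), trivial, ?_⟩
  rintro ⟨y1, y2⟩ -
  rcases zmod2_cases (par ((y1 : DD N1 N2 N3)).2.2) with h0 | h1
  · exact ⟨0, by rw [zpow_zero, inv_one, mul_one]; exact h0⟩
  · refine ⟨1, ?_⟩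
    rw [zpow_one]
    show par ((y1 * (⟨(sr 0, r 0, sr 0), hmem⟩ : ↥(H N1 N2 N3))⁻¹ :
      ↥(H N1 N2 N3)) : DD N1 N2 N3).2.2 = 0
    rw [Hmul22, Hinv22, par_mul, par_inv, h1]
    show (1 : ZMod 2) + 1 = 0
    decide

end Steps
lemma supersolvable_T (N1 N2 N3 m : ℕ) [NeZero N1] [NeZero N2] [NeZero N3] [NeZero m] :
    IsSupersolvable (T N1 N2 N3 m) := by
  refine ⟨7, ![⊥, t1 N1 N2 N3 m, t2 N1 N2 N3 m, t3 N1 N2 N3 m, t4 N1 N2 N3 m,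
    t5 N1 N2 N3 m, t6 N1 N2 N3 m, ⊤], rfl, rfl, ?_, ?_, ?_⟩
  · intro i
    fin_cases i
    · exact bot_le
    · exact mono12 N1 N2 N3 m
    · exact mono23 N1 N2 N3 m
    · exact mono34 N1 N2 N3 m
    · exact mono45 N1 N2 N3 m
    · exact mono56 N1 N2 N3 m
    · exact le_top
  · intro i
    fin_cases i
    · show (⊥ : Subgroup (T N1 N2 N3 m)).Normal
      exact inferInstance
    · exact t1_normal N1 N2 N3 m
    · exact t2_normal N1 N2 N3 m
    · exact t3_normal N1 N2 N3 m
    · exact t4_normal N1 N2 N3 m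
    · exact t5_normal N1 N2 N3 m
    · exact t6_normal N1 N2 N3 m
    · show (⊤ : Subgroup (T N1 N2 N3 m)).Normal
      exact inferInstance
  · intro i
    fin_cases i
    · exact step0 N1 N2 N3 m
    · exact step1 N1 N2 N3 m
    · exact step2 N1 N2 N3 m
    · exact step3 N1 N2 N3 m
    · exact step4 N1 N2 N3 m
    · exact step5 N1 N2 N3 m
    · exact step6 N1 N2 N3 m
end Stmt11Aux

set_option maxHeartbeats 1000000 in
/-- If `o` is a positive integer divisible by at least three distinct primes, then there is
a finite supersolvable group with an automorphism of order exactly `o` that has no regular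
cycle. -/
theorem stmt11 (o : ℕ) (ho : 0 < o) (h : 3 ≤ o.primeFactors.card) :
    ∃ (G : Type) (_ : Group G) (_ : Fintype G),
      IsSupersolvable G ∧
      ∃ α : MulAut G, orderOf α = o ∧
        ∀ g : G, Function.minimalPeriod (⇑α) g ≠ o := by
  classical
  obtain ⟨t, hts, hcard⟩ := Finset.exists_subset_card_eq h
  obtain ⟨p1, p2, p3, h12, h13, h23, rfl⟩ := Finset.card_eq_three.mp hcard
  have hm1 : p1 ∈ o.primeFactors := hts (by simp)
  have hm2 : p2 ∈ o.primeFactors := hts (by simp)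
  have hm3 : p3 ∈ o.primeFactors := hts (by simp)
  have hp1 : p1.Prime := Nat.prime_of_mem_primeFactors hm1
  have hp2 : p2.Prime := Nat.prime_of_mem_primeFactors hm2
  have hp3 : p3.Prime := Nat.prime_of_mem_primeFactors hm3
  have hd1 : p1 ∣ o := Nat.dvd_of_mem_primeFactors hm1
  have hd2 : p2 ∣ o := Nat.dvd_of_mem_primeFactors hm2
  have hd3 : p3 ∣ o := Nat.dvd_of_mem_primeFactors hm3
  set a1 := o.factorization p1 with ha1def
  set a2 := o.factorization p2 with ha2def
  set a3 := o.factorization p3 with ha3def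
  have ha1 : 0 < a1 := hp1.factorization_pos_of_dvd ho.ne' hd1
  have ha2 : 0 < a2 := hp2.factorization_pos_of_dvd ho.ne' hd2
  have ha3 : 0 < a3 := hp3.factorization_pos_of_dvd ho.ne' hd3
  have hP1 : p1 ^ a1 ∣ o := Nat.ordProj_dvd o p1
  have hP2 : p2 ^ a2 ∣ o := Nat.ordProj_dvd o p2
  have hP3 : p3 ^ a3 ∣ o := Nat.ordProj_dvd o p3
  have c12 : Nat.Coprime (p1 ^ a1) (p2 ^ a2) :=
    Nat.Coprime.pow a1 a2 ((Nat.coprime_primes hp1 hp2).mpr h12)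
  have c13 : Nat.Coprime (p1 ^ a1) (p3 ^ a3) :=
    Nat.Coprime.pow a1 a3 ((Nat.coprime_primes hp1 hp3).mpr h13)
  have c23 : Nat.Coprime (p2 ^ a2) (p3 ^ a3) :=
    Nat.Coprime.pow a2 a3 ((Nat.coprime_primes hp2 hp3).mpr h23)
  have cL3 : Nat.Coprime (p1 ^ a1 * p2 ^ a2) (p3 ^ a3) := Nat.Coprime.mul c13 c23
  have hL12 : p1 ^ a1 * p2 ^ a2 ∣ o := Nat.Coprime.mul_dvd_of_dvd_of_dvd c12 hP1 hP2
  have hLdvd : p1 ^ a1 * p2 ^ a2 * p3 ^ a3 ∣ o := Nat.Coprime.mul_dvd_of_dvd_of_dvd cL3 hL12 hP3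
  obtain ⟨m, hm⟩ := hLdvd
  have hm0 : 0 < m := Nat.pos_of_ne_zero (by rintro rfl; rw [mul_zero] at hm; omega)
  haveI : NeZero m := ⟨hm0.ne'⟩
  have hnd1 : ¬ p1 ∣ m := by
    intro hdvd
    have : p1 ^ (a1 + 1) ∣ o := by
      rw [hm, pow_succ]
      exact mul_dvd_mul ⟨p2 ^ a2 * p3 ^ a3, by ring⟩ hdvd
    exact Nat.pow_succ_factorization_not_dvd ho.ne' hp1 this
  have hnd2 : ¬ p2 ∣ m := by
    intro hdvd
    have : p2 ^ (a2 + 1) ∣ o := by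
      rw [hm, pow_succ]
      exact mul_dvd_mul ⟨p1 ^ a1 * p3 ^ a3, by ring⟩ hdvd
    exact Nat.pow_succ_factorization_not_dvd ho.ne' hp2 this
  have hnd3 : ¬ p3 ∣ m := by
    intro hdvd
    have : p3 ^ (a3 + 1) ∣ o := by
      rw [hm, pow_succ]
      exact mul_dvd_mul ⟨p1 ^ a1 * p2 ^ a2, by ring⟩ hdvd
    exact Nat.pow_succ_factorization_not_dvd ho.ne' hp3 this
  have cm1 : Nat.Coprime (p1 ^ a1) m :=
    Nat.Coprime.pow_left _ ((hp1.coprime_iff_not_dvd).mpr hnd1)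
  have cm2 : Nat.Coprime (p2 ^ a2) m :=
    Nat.Coprime.pow_left _ ((hp2.coprime_iff_not_dvd).mpr hnd2)
  have cm3 : Nat.Coprime (p3 ^ a3) m :=
    Nat.Coprime.pow_left _ ((hp3.coprime_iff_not_dvd).mpr hnd3)
  have cLm : Nat.Coprime (p1 ^ a1 * p2 ^ a2 * p3 ^ a3) m :=
    Nat.Coprime.mul (Nat.Coprime.mul cm1 cm2) cm3
  -- the dihedral parameters
  set N1 := if p1 = 2 then 2 * p1 ^ a1 else p1 ^ a1 with hN1def
  set N2 := if p2 = 2 then 2 * p2 ^ a2 else p2 ^ a2 with hN2def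
  set N3 := if p3 = 2 then 2 * p3 ^ a3 else p3 ^ a3 with hN3def
  have key : ∀ p a N : ℕ, p.Prime → (N = if p = 2 then 2 * p ^ a else p ^ a) →
      (0 < N ∧ ∀ n : ℕ, N ∣ 2 * n ↔ p ^ a ∣ n) := by
    intro p a N hp hN
    subst hN
    split_ifs with h2
    · refine ⟨by positivity, fun n => Nat.mul_dvd_mul_iff_left (by norm_num : 0 < 2)⟩
    · have hppos : 0 < p := hp.pos
      refine ⟨by positivity, fun n => ?_⟩
      constructor
      · intro hd
        have cop : Nat.Coprime (p ^ a) 2 :=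
          Nat.Coprime.pow_left _ ((Nat.coprime_primes hp Nat.prime_two).mpr h2)
        exact Nat.Coprime.dvd_of_dvd_mul_right cop (by rwa [mul_comm] at hd)
      · exact fun hd => Dvd.dvd.mul_left hd 2
  obtain ⟨hN1pos, k1⟩ := key p1 a1 N1 hp1 hN1def
  obtain ⟨hN2pos, k2⟩ := key p2 a2 N2 hp2 hN2def
  obtain ⟨hN3pos, k3⟩ := key p3 a3 N3 hp3 hN3def
  haveI : NeZero N1 := ⟨hN1pos.ne'⟩
  haveI : NeZero N2 := ⟨hN2pos.ne'⟩
  haveI : NeZero N3 := ⟨hN3pos.ne'⟩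
  refine ⟨Stmt11Aux.T N1 N2 N3 m, inferInstance, Fintype.ofFinite _,
    Stmt11Aux.supersolvable_T N1 N2 N3 m, ?_⟩
  set α : MulAut (Stmt11Aux.T N1 N2 N3 m) :=
    (MulEquiv.prodCongr (Stmt11Aux.aH N1 N2 N3) (Stmt11Aux.shear m) :
      MulAut (Stmt11Aux.T N1 N2 N3 m)) with hαdef
  have hiff : ∀ n : ℕ, α ^ n = 1 ↔ o ∣ n := by
    intro n
    rw [hαdef, Stmt11Aux.prodCongr_pow_eq_one_iff,
      Stmt11Aux.aH_pow_eq_one_iff N1 N2 N3 (p1 ^ a1) (p2 ^ a2) (p3 ^ a3) k1 k2 k3,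
      Stmt11Aux.shear_pow_eq_one_iff]
    constructor
    · rintro ⟨⟨u1, u2, u3⟩, um⟩
      rw [hm]
      exact Nat.Coprime.mul_dvd_of_dvd_of_dvd cLm
        (Nat.Coprime.mul_dvd_of_dvd_of_dvd cL3
          (Nat.Coprime.mul_dvd_of_dvd_of_dvd c12 u1 u2) u3) um
    · intro hd
      have hmo : m ∣ o := ⟨p1 ^ a1 * p2 ^ a2 * p3 ^ a3, by rw [hm, mul_comm]⟩
      exact ⟨⟨hP1.trans hd, hP2.trans hd, hP3.trans hd⟩, hmo.trans hd⟩
  refine ⟨α, Nat.dvd_antisymm (orderOf_dvd_of_pow_eq_one ((hiff o).mpr dvd_rfl))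
    ((hiff (orderOf α)).mp (pow_orderOf_eq_one α)), ?_⟩
  rintro ⟨g1, g2⟩ hEq
  -- the three candidate periods
  have e1 : p1 ^ a1 = p1 ^ (a1 - 1) * p1 := by rw [← pow_succ, Nat.sub_add_cancel ha1]
  have e2 : p2 ^ a2 = p2 ^ (a2 - 1) * p2 := by rw [← pow_succ, Nat.sub_add_cancel ha2]
  have e3 : p3 ^ a3 = p3 ^ (a3 - 1) * p3 := by rw [← pow_succ, Nat.sub_add_cancel ha3]
  have finish : ∀ nn p : ℕ, 0 < nn → p.Prime → o = p * nn → (α ^ nn) (g1, g2) = (g1, g2) →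
      False := by
    intro nn p hnn hp hop hfixtot
    have hper : Function.minimalPeriod ⇑α (g1, g2) ∣ nn :=
      Function.IsPeriodicPt.minimalPeriod_dvd
        (by show (⇑α)^[nn] (g1, g2) = (g1, g2); rw [Stmt11Aux.mulaut_iterate]; exact hfixtot)
    rw [hEq] at hper
    have hle := Nat.le_of_dvd hnn hper
    have h2n : 2 * nn ≤ o := by rw [hop]; exact Nat.mul_le_mul_right nn hp.two_le
    omega
  rcases Stmt11Aux.semifix N1 N2 N3 (p1 ^ a1) (p2 ^ a2) (p3 ^ a3) k1 k2 k3 g1 with hfix | hfix | hfix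
  · refine finish (p1 ^ (a1 - 1) * p2 ^ a2 * p3 ^ a3 * m) p1 (by have h1 := hp1.pos; have h2 := hp2.pos; have h3 := hp3.pos; positivity) hp1 ?_ ?_
    · rw [hm]; nth_rewrite 1 [e1]; ring
    · rw [hαdef, Stmt11Aux.prodCongr_pow_apply]
      exact Prod.ext (hfix _ ⟨p1 ^ (a1 - 1) * p3 ^ a3 * m, by ring⟩
          ⟨p1 ^ (a1 - 1) * p2 ^ a2 * m, by ring⟩)
        (Stmt11Aux.shear_pow_fix m ⟨p1 ^ (a1 - 1) * p2 ^ a2 * p3 ^ a3, by ring⟩ g2)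
  · refine finish (p1 ^ a1 * p2 ^ (a2 - 1) * p3 ^ a3 * m) p2 (by have h1 := hp1.pos; have h2 := hp2.pos; have h3 := hp3.pos; positivity) hp2 ?_ ?_
    · rw [hm]; nth_rewrite 1 [e2]; ring
    · rw [hαdef, Stmt11Aux.prodCongr_pow_apply]
      exact Prod.ext (hfix _ ⟨p2 ^ (a2 - 1) * p3 ^ a3 * m, by ring⟩
          ⟨p1 ^ a1 * p2 ^ (a2 - 1) * m, by ring⟩)
        (Stmt11Aux.shear_pow_fix m ⟨p1 ^ a1 * p2 ^ (a2 - 1) * p3 ^ a3, by ring⟩ g2)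
  · refine finish (p1 ^ a1 * p2 ^ a2 * p3 ^ (a3 - 1) * m) p3 (by have h1 := hp1.pos; have h2 := hp2.pos; have h3 := hp3.pos; positivity) hp3 ?_ ?_
    · rw [hm]; nth_rewrite 1 [e3]; ring
    · rw [hαdef, Stmt11Aux.prodCongr_pow_apply]
      exact Prod.ext (hfix _ ⟨p2 ^ a2 * p3 ^ (a3 - 1) * m, by ring⟩
          ⟨p1 ^ a1 * p3 ^ (a3 - 1) * m, by ring⟩)
        (Stmt11Aux.shear_pow_fix m ⟨p1 ^ a1 * p2 ^ a2 * p3 ^ (a3 - 1), by ring⟩ g2)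
end

section
/- Let G be a finite group and α an automorphism of G such that some cycle of α has length strictly greater than |G|/2. Then α is fixed-point free, i.e., the only element g ∈ G with α(g) = g is the identity. -/
section Stmt12Aux

variable {G : Type*} [Group G] [Fintype G]

/-- Counting lemma: if `φ : G →* A` is invariant under the automorphism `α` and `α` has a
cycle of length more than `|G|/2` at `g`, then `φ g = 1`. -/
private lemma stmt12_lemA {A : Type*} [Group A] (α : MulAut G) (g : G)
    (hcard : Fintype.card G < 2 * Function.minimalPeriod (⇑α) g)
    (φ : G →* A) (hφ : ∀ y, φ (α y) = φ y) : φ g = 1 := by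
  classical
  set m := Function.minimalPeriod (⇑α) g with hm
  by_contra hne
  have hx : ∀ t : ℕ, φ ((⇑α)^[t] g) = φ g := by
    intro t
    induction t with
    | zero => rfl
    | succ n ih => rw [Function.iterate_succ_apply', hφ, ih]
  have hxinj : ∀ {a b : ℕ}, a < m → b < m → (⇑α)^[a] g = (⇑α)^[b] g → a = b := by
    intro a b ha hb e
    exact Function.iterate_injOn_Iio_minimalPeriod (Set.mem_Iio.mpr ha) (Set.mem_Iio.mpr hb) e
  set A1 : Finset G := (Finset.range m).image (fun t => (⇑α)^[t] g) with hA1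
  set A2 : Finset G := (Finset.range m).image (fun t => g⁻¹ * (⇑α)^[t] g) with hA2
  have hc1 : A1.card = m := by
    rw [hA1, Finset.card_image_of_injOn, Finset.card_range]
    intro a ha b hb e
    exact hxinj (by simpa using ha) (by simpa using hb) e
  have hc2 : A2.card = m := by
    rw [hA2, Finset.card_image_of_injOn, Finset.card_range]
    intro a ha b hb e
    exact hxinj (by simpa using ha) (by simpa using hb) (mul_left_cancel e)
  have hdisj : Disjoint A1 A2 := by
    rw [Finset.disjoint_left]
    rintro y hy1 hy2
    obtain ⟨b, _, hb⟩ := Finset.mem_image.mp hy1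
    obtain ⟨a, _, ha⟩ := Finset.mem_image.mp hy2
    have e1 : φ y = φ g := by rw [← hb]; exact hx b
    have e2 : φ y = 1 := by
      rw [← ha, map_mul, map_inv, hx a, inv_mul_cancel]
    exact hne (by rw [← e1, e2])
  have := Finset.card_union_of_disjoint hdisj
  have hle := Finset.card_le_univ (A1 ∪ A2)
  rw [this, hc1, hc2] at hle
  omega

/-- Pigeonhole lemma: an injective map commuting with `α` acts as a shift on the long cycle. -/
private lemma stmt12_lemShift (α : MulAut G) (g : G)
    (hcard : Fintype.card G < 2 * Function.minimalPeriod (⇑α) g)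
    (F : G → G) (hinj : Function.Injective F)
    (hcomm : ∀ y, F (α y) = α (F y)) :
    ∃ c : ℕ, ∀ t, F ((⇑α)^[t] g) = (⇑α)^[t + c] g := by
  classical
  set m := Function.minimalPeriod (⇑α) g with hm
  have hm0 : 0 < m := by
    have := Fintype.card_pos (α := G); omega
  have hxinj : ∀ {a b : ℕ}, a < m → b < m → (⇑α)^[a] g = (⇑α)^[b] g → a = b := by
    intro a b ha hb e
    exact Function.iterate_injOn_Iio_minimalPeriod (Set.mem_Iio.mpr ha) (Set.mem_Iio.mpr hb) e
  set A1 : Finset G := (Finset.range m).image (fun t => (⇑α)^[t] g) with hA1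
  set A2 : Finset G := (Finset.range m).image (fun t => F ((⇑α)^[t] g)) with hA2
  have hc1 : A1.card = m := by
    rw [hA1, Finset.card_image_of_injOn, Finset.card_range]
    intro a ha b hb e
    exact hxinj (by simpa using ha) (by simpa using hb) e
  have hc2 : A2.card = m := by
    rw [hA2, Finset.card_image_of_injOn, Finset.card_range]
    intro a ha b hb e
    exact hxinj (by simpa using ha) (by simpa using hb) (hinj e)
  have hinter : (A1 ∩ A2).Nonempty := by
    by_contra hemp
    rw [Finset.not_nonempty_iff_eq_empty] at hemp
    have hdisj : Disjoint A1 A2 := Finset.disjoint_iff_inter_eq_empty.mpr hemp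
    have hcu := Finset.card_union_of_disjoint hdisj
    have hle := Finset.card_le_univ (A1 ∪ A2)
    rw [hcu, hc1, hc2] at hle
    omega
  obtain ⟨y, hy⟩ := hinter
  rw [Finset.mem_inter] at hy
  obtain ⟨hy1, hy2⟩ := hy
  obtain ⟨b, hbm, hb⟩ := Finset.mem_image.mp hy1
  obtain ⟨a, ham, ha⟩ := Finset.mem_image.mp hy2
  have hab : F ((⇑α)^[a] g) = (⇑α)^[b] g := by rw [ha, hb]
  have hFiter : ∀ (s : ℕ) (y : G), F ((⇑α)^[s] y) = (⇑α)^[s] (F y) := by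
    intro s
    induction s with
    | zero => intro y; rfl
    | succ n ih =>
      intro y
      rw [Function.iterate_succ_apply', hcomm, ih]
      exact (Function.iterate_succ_apply' (⇑α) n (F y)).symm
  have hshift : ∀ s : ℕ, F ((⇑α)^[s + a] g) = (⇑α)^[s + b] g := by
    intro s
    rw [Function.iterate_add_apply, Function.iterate_add_apply, hFiter, hab]
  have hgm : (⇑α)^[m] g = g := Function.iterate_minimalPeriod
  have hper : ∀ t : ℕ, (⇑α)^[t + m] g = (⇑α)^[t] g := by
    intro t
    rw [Function.iterate_add_apply, hgm]
  have ham' : a < m := Finset.mem_range.mp ham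
  refine ⟨m - a + b, fun t => ?_⟩
  have e1 : t + m = (t + (m - a)) + a := by omega
  calc F ((⇑α)^[t] g) = F ((⇑α)^[t + m] g) := by rw [hper]
    _ = F ((⇑α)^[(t + (m - a)) + a] g) := by rw [← e1]
    _ = (⇑α)^[(t + (m - a)) + b] g := hshift _
    _ = (⇑α)^[t + (m - a + b)] g := by
        congr 1
        omega

private lemma stmt12_lemArith {m p k k' : ℕ} (hm : 0 < m) (hp : p.Prime)
    (h1 : m ∣ p * k) (h2 : m ∣ p * k') (h3 : ¬ m ∣ k) :
    ∃ j : ℕ, j * k ≡ k' [MOD m] := by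
  haveI : Fact p.Prime := ⟨hp⟩
  haveI : NeZero p := ⟨hp.ne_zero⟩
  set d := Nat.gcd m k with hd
  have hd0 : 0 < d := Nat.gcd_pos_of_pos_left _ hm
  have hdm : d ∣ m := Nat.gcd_dvd_left m k
  have hdk : d ∣ k := Nat.gcd_dvd_right m k
  obtain ⟨m₁, hm₁⟩ := hdm
  obtain ⟨k₁, hk₁⟩ := hdk
  have hmd : m / d = m₁ := by rw [hm₁]; exact Nat.mul_div_cancel_left m₁ hd0
  have hkd : k / d = k₁ := by rw [hk₁]; exact Nat.mul_div_cancel_left k₁ hd0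
  have hcop : Nat.Coprime m₁ k₁ := by
    have := Nat.coprime_div_gcd_div_gcd (m := m) (n := k) hd0
    rwa [← hd, hmd, hkd] at this
  have hm₁p : m₁ ∣ p := by
    have h1' : d * m₁ ∣ d * (p * k₁) := by
      have : p * k = d * (p * k₁) := by rw [hk₁]; ring
      rw [← this, ← hm₁]; exact h1
    have h1'' : m₁ ∣ p * k₁ := (mul_dvd_mul_iff_left hd0.ne').mp h1'
    exact Nat.Coprime.dvd_of_dvd_mul_right hcop h1''
  have hm₁ne : m₁ ≠ 1 := by
    intro e
    apply h3
    rw [hm₁, e, mul_one, hk₁]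
    exact Dvd.intro k₁ rfl
  have hm₁eq : m₁ = p := by
    rcases (Nat.Prime.eq_one_or_self_of_dvd hp m₁ hm₁p) with e | e
    · exact absurd e hm₁ne
    · exact e
  have hmp : m = d * p := by rw [hm₁, hm₁eq]
  have hdk' : d ∣ k' := by
    obtain ⟨t, ht⟩ := h2
    have : p * k' = p * (d * t) := by rw [ht, hmp]; ring
    have e := Nat.eq_of_mul_eq_mul_left hp.pos this
    exact ⟨t, e⟩
  obtain ⟨k₂, hk₂⟩ := hdk'
  have hcopp : Nat.Coprime p k₁ := by rw [← hm₁eq]; exact hcop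
  have hk₁ne : ((k₁ : ZMod p)) ≠ 0 := by
    rw [Ne, ZMod.natCast_eq_zero_iff]
    intro hdvd
    have h1 : p ∣ Nat.gcd p k₁ := Nat.dvd_gcd dvd_rfl hdvd
    rw [hcopp] at h1
    exact hp.ne_one (Nat.dvd_one.mp h1)
  set u : ZMod p := (k₂ : ZMod p) * (k₁ : ZMod p)⁻¹ with hu
  refine ⟨u.val, ?_⟩
  have hcast : ((u.val * k₁ : ℕ) : ZMod p) = ((k₂ : ℕ) : ZMod p) := by
    push_cast
    rw [ZMod.natCast_val, ZMod.cast_id, hu, mul_assoc, inv_mul_cancel₀ hk₁ne, mul_one]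
  have hmodp : u.val * k₁ ≡ k₂ [MOD p] := (ZMod.natCast_eq_natCast_iff _ _ _).mp hcast
  have hmodm := Nat.ModEq.mul_right' (c := d) hmodp
  have e1 : u.val * k = u.val * k₁ * d := by rw [hk₁]; ring
  have e2 : k' = k₂ * d := by rw [hk₂]; ring
  have e3 : m = p * d := by rw [hmp]; ring
  rw [e1, e2, e3]
  exact hmodm

end Stmt12Aux

/-- If an automorphism `α` of a finite group `G` has a cycle of length strictly greater than
`|G|/2`, then `α` is fixed-point free. -/
theorem stmt12 {G : Type*} [Group G] [Fintype G] (α : MulAut G)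
    (h : ∃ g : G, Fintype.card G < 2 * Function.minimalPeriod (⇑α) g) :
    ∀ g : G, α g = g → g = 1 := by
  classical
  obtain ⟨g, hg⟩ := h
  intro y hy
  by_contra hy1
  -- replace y by an element h of prime order p
  set q := orderOf y with hq
  have hq0 : 0 < q := orderOf_pos y
  have hq1 : q ≠ 1 := fun e => hy1 (orderOf_eq_one_iff.mp e)
  set p := q.minFac with hpdef
  have hp : p.Prime := Nat.minFac_prime hq1
  haveI : Fact p.Prime := ⟨hp⟩
  haveI : NeZero p := ⟨hp.ne_zero⟩
  set h : G := y ^ (q / p) with hhdef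
  have hpq : p ∣ q := by rw [hpdef]; exact Nat.minFac_dvd q
  have hhp : h ^ p = 1 := by
    rw [hhdef, ← pow_mul, Nat.div_mul_cancel hpq, hq, pow_orderOf_eq_one]
  have hne : h ≠ 1 := by
    intro e
    have hdvd : q ∣ q / p := orderOf_dvd_of_pow_eq_one (by rw [← hhdef, e])
    have hlt : q / p < q := Nat.div_lt_self hq0 hp.one_lt
    have hpos : 0 < q / p := Nat.div_pos (Nat.minFac_le hq0) hp.pos
    exact absurd (Nat.le_of_dvd hpos hdvd) (not_le.mpr hlt)
  have hfix : α h = h := by rw [hhdef, map_pow, hy]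
  set m := Function.minimalPeriod (⇑α) g with hmdef
  have hm0 : 0 < m := by
    have := Fintype.card_pos (α := G); omega
  have hfixiter : ∀ t : ℕ, (⇑α)^[t] h = h := fun t => Function.iterate_fixed hfix t
  -- basic orbit facts
  have hxinj : ∀ {a b : ℕ}, a < m → b < m → (⇑α)^[a] g = (⇑α)^[b] g → a = b := by
    intro a b ha hb e
    exact Function.iterate_injOn_Iio_minimalPeriod (Set.mem_Iio.mpr ha) (Set.mem_Iio.mpr hb) e
  have hxiff : ∀ a b : ℕ, (⇑α)^[a] g = (⇑α)^[b] g ↔ a % m = b % m := by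
    intro a b
    constructor
    · intro e
      have ea : (⇑α)^[a % m] g = (⇑α)^[b % m] g := by
        rw [Function.iterate_mod_minimalPeriod_eq, Function.iterate_mod_minimalPeriod_eq, e]
      exact hxinj (Nat.mod_lt _ hm0) (Nat.mod_lt _ hm0) ea
    · intro e
      rw [← Function.iterate_mod_minimalPeriod_eq (n := a), e,
        Function.iterate_mod_minimalPeriod_eq]
  -- left and right shifts
  obtain ⟨k, hkL'⟩ := stmt12_lemShift α g hg (fun z => h * z) (mul_right_injective h)
    (fun z => by show h * α z = α (h * z); rw [map_mul, hfix])
  have hkL : ∀ t, h * (⇑α)^[t] g = (⇑α)^[t + k] g := hkL'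
  obtain ⟨k', hkR'⟩ := stmt12_lemShift α g hg (fun z => z * h) (mul_left_injective h)
    (fun z => by show α z * h = α (z * h); rw [map_mul, hfix])
  have hkR : ∀ t, (⇑α)^[t] g * h = (⇑α)^[t + k'] g := hkR'
  -- iterated shifts
  have hkiter : ∀ (j t : ℕ), h ^ j * (⇑α)^[t] g = (⇑α)^[t + j * k] g := by
    intro j
    induction j with
    | zero => intro t; simp
    | succ n ih =>
      intro t
      have e : h ^ (n + 1) * (⇑α)^[t] g = h ^ n * ((⇑α)^[t + k] g) := by
        rw [pow_succ, mul_assoc, hkL t]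
      rw [e, ih (t + k)]
      congr 1
      ring
  have hk'iter : ∀ (j t : ℕ), (⇑α)^[t] g * h ^ j = (⇑α)^[t + j * k'] g := by
    intro j
    induction j with
    | zero => intro t; simp
    | succ n ih =>
      intro t
      have e : (⇑α)^[t] g * h ^ (n + 1) = ((⇑α)^[t + n * k'] g) * h := by
        rw [pow_succ, ← mul_assoc, ih t]
      rw [e, hkR]
      congr 1
      ring
  -- divisibility facts
  have hmk : m ∣ p * k := by
    have e := hkiter p 0
    rw [hhp, one_mul] at e
    have := (hxiff 0 (0 + p * k)).mp e
    simp only [Nat.zero_mod, zero_add] at this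
    exact Nat.dvd_of_mod_eq_zero this.symm
  have hmk' : m ∣ p * k' := by
    have e := hk'iter p 0
    rw [hhp, mul_one] at e
    have := (hxiff 0 (0 + p * k')).mp e
    simp only [Nat.zero_mod, zero_add] at this
    exact Nat.dvd_of_mod_eq_zero this.symm
  have hmknd : ¬ m ∣ k := by
    intro e
    have hk0 : k % m = 0 % m := by
      simp [Nat.eq_zero_of_dvd_of_lt, Nat.mod_eq_zero_of_dvd e]
    have e2 : (⇑α)^[0 + k] g = (⇑α)^[0] g := by
      apply (hxiff _ _).mpr
      simpa using hk0
    have e3 : h * (⇑α)^[0] g = (⇑α)^[0] g := by rw [hkL 0, e2]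
    apply hne
    have : h * (⇑α)^[0] g = 1 * (⇑α)^[0] g := by rw [one_mul, e3]
    exact mul_right_cancel this
  obtain ⟨j, hj⟩ := stmt12_lemArith hm0 hp hmk hmk' hmknd
  -- conjugation relation: g * h = h ^ j * g
  have hgmul : g * h = h ^ j * g := by
    have e1 : (⇑α)^[0] g * h = (⇑α)^[0 + k'] g := hkR 0
    have e2 : h ^ j * (⇑α)^[0] g = (⇑α)^[0 + j * k] g := hkiter j 0
    have e3 : (⇑α)^[0 + k'] g = (⇑α)^[0 + j * k] g := by
      apply (hxiff _ _).mpr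
      simp only [zero_add]
      exact hj.symm
    have := e1.trans (e3.trans e2.symm)
    simpa using this
  have hconjall : ∀ t, (⇑α)^[t] g * h = h ^ j * (⇑α)^[t] g := by
    intro t
    have e := congrArg ((⇑α)^[t]) hgmul
    simpa [iterate_map_mul, iterate_map_pow, hfixiter t] using e
  -- the orbit generates G
  set S : Set G := Set.range (fun t : ℕ => (⇑α)^[t] g) with hS
  set K : Subgroup G := Subgroup.closure S with hK
  have hmemS : ∀ t : ℕ, (⇑α)^[t] g ∈ K := fun t => Subgroup.subset_closure ⟨t, rfl⟩
  have hKtop : K = ⊤ := by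
    have hmK : m ≤ Nat.card K := by
      have hinj : Function.Injective (fun i : Fin m => (⟨(⇑α)^[i] g, hmemS i⟩ : K)) := by
        intro a b e
        have := Subtype.ext_iff.mp e
        exact Fin.ext (hxinj a.isLt b.isLt this)
      have := Nat.card_le_card_of_injective _ hinj
      simpa using this
    have hKdvd : Nat.card K ∣ Fintype.card G := by
      have := Subgroup.card_subgroup_dvd_card K
      rwa [Nat.card_eq_fintype_card (α := G)] at this
    obtain ⟨c, hcc⟩ := hKdvd
    have hc1 : c = 1 := by
      rcases Nat.lt_or_ge c 2 with hc | hc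
      · interval_cases c
        · exfalso
          have := Fintype.card_pos (α := G)
          omega
        · rfl
      · exfalso
        have h2 : Nat.card K * 2 ≤ Nat.card K * c := Nat.mul_le_mul_left _ hc
        omega
    apply Subgroup.eq_top_of_card_eq
    rw [Nat.card_eq_fintype_card (α := G)]
    rw [hc1, mul_one] at hcc
    omega
  have hmemtop : ∀ z : G, z ∈ K := fun z => hKtop ▸ Subgroup.mem_top z
  by_cases hc : h ^ j = h
  · -- commuting case: h is central
    have hcommA : ∀ t, (⇑α)^[t] g * h = h * (⇑α)^[t] g := fun t => by
      rw [hconjall t, hc]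
    have hcent : ∀ z : G, h * z = z * h := by
      intro z
      have hle : K ≤ Subgroup.centralizer {h} := by
        rw [hK, Subgroup.closure_le]
        rintro w ⟨t, rfl⟩
        rw [SetLike.mem_coe, Subgroup.mem_centralizer_iff]
        intro u hu
        rw [Set.mem_singleton_iff] at hu
        subst hu
        exact (hcommA t).symm
      exact Subgroup.mem_centralizer_iff.mp (hle (hmemtop z)) h rfl
    have hcentz : ∀ w ∈ Subgroup.zpowers h, ∀ z : G, z * w = w * z := by
      intro w hw z
      obtain ⟨i, hi⟩ := Subgroup.mem_zpowers_iff.mp hw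
      rw [← hi]
      exact Commute.zpow_right ((hcent z).symm) i
    have hP : ∀ z : G, (⇑α)^[k] z * z⁻¹ ∈ Subgroup.zpowers h := by
      intro z
      refine Subgroup.closure_induction
        (p := fun w _ => (⇑α)^[k] w * w⁻¹ ∈ Subgroup.zpowers h) ?_ ?_ ?_ ?_ (hmemtop z)
      · rintro w ⟨t, rfl⟩
        have e : (⇑α)^[k] ((⇑α)^[t] g) = h * (⇑α)^[t] g := by
          rw [← Function.iterate_add_apply, Nat.add_comm k t, ← hkL t]
        rw [e, mul_inv_cancel_right]
        exact Subgroup.mem_zpowers h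
      · simpa using Subgroup.one_mem (Subgroup.zpowers h)
      · intro u v _ _ ihu ihv
        have hcv := hcentz _ ihv
        have e : (⇑α)^[k] (u * v) * (u * v)⁻¹ =
            ((⇑α)^[k] u * u⁻¹) * ((⇑α)^[k] v * v⁻¹) := by
          rw [iterate_map_mul, mul_inv_rev]
          calc (⇑α)^[k] u * (⇑α)^[k] v * (v⁻¹ * u⁻¹)
              = (⇑α)^[k] u * (((⇑α)^[k] v * v⁻¹) * u⁻¹) := by group
            _ = (⇑α)^[k] u * (u⁻¹ * ((⇑α)^[k] v * v⁻¹)) := by rw [← hcv u⁻¹]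
            _ = ((⇑α)^[k] u * u⁻¹) * ((⇑α)^[k] v * v⁻¹) := by group
        rw [e]
        exact mul_mem ihu ihv
      · intro u _ ihu
        have hcu := hcentz _ ihu
        have h2 : Commute u ((⇑α)^[k] u) := by
          have h1 := hcu u
          rw [inv_mul_cancel_right] at h1
          have h1' : u * (⇑α)^[k] u * u⁻¹ = (⇑α)^[k] u := by
            rw [mul_assoc]; exact h1
          exact mul_inv_eq_iff_eq_mul.mp h1'
        have e : (⇑α)^[k] u⁻¹ * (u⁻¹)⁻¹ = ((⇑α)^[k] u * u⁻¹)⁻¹ := by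
          rw [iterate_map_inv, inv_inv, mul_inv_rev, inv_inv]
          exact h2.inv_right.symm
        rw [e]
        exact inv_mem ihu
    have hmul : ∀ u v : G, (⇑α)^[k] (u * v) * (u * v)⁻¹ =
        ((⇑α)^[k] u * u⁻¹) * ((⇑α)^[k] v * v⁻¹) := by
      intro u v
      have hcv := hcentz _ (hP v)
      rw [iterate_map_mul, mul_inv_rev]
      calc (⇑α)^[k] u * (⇑α)^[k] v * (v⁻¹ * u⁻¹)
          = (⇑α)^[k] u * (((⇑α)^[k] v * v⁻¹) * u⁻¹) := by group
        _ = (⇑α)^[k] u * (u⁻¹ * ((⇑α)^[k] v * v⁻¹)) := by rw [← hcv u⁻¹]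
        _ = ((⇑α)^[k] u * u⁻¹) * ((⇑α)^[k] v * v⁻¹) := by group
    set φ : G →* G :=
      { toFun := fun z => (⇑α)^[k] z * z⁻¹,
        map_one' := by simp,
        map_mul' := fun u v => hmul u v } with hφdef
    have hφα : ∀ z, φ (α z) = φ z := by
      intro z
      show (⇑α)^[k] (α z) * (α z)⁻¹ = (⇑α)^[k] z * z⁻¹
      have e1 : (⇑α)^[k] (α z) = α ((⇑α)^[k] z) := by
        rw [← Function.iterate_succ_apply, Function.iterate_succ_apply']
      rw [e1, ← map_inv, ← map_mul]
      obtain ⟨i, hi⟩ := Subgroup.mem_zpowers_iff.mp (hP z)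
      rw [← hi, map_zpow, hfix]
    have hφg := stmt12_lemA α g hg φ hφα
    apply hne
    have e : (⇑α)^[k] g * g⁻¹ = h := by
      have e0 := hkL 0
      simp only [Function.iterate_zero_apply, zero_add] at e0
      rw [← e0, mul_inv_cancel_right]
    rw [← e]
    exact hφg
  · -- noncommuting case: ⟨h⟩ is normal and conjugation gives the invariant hom
    have hj1 : h ^ j ≠ 1 := by
      intro e
      apply hne
      have : g * h * g⁻¹ = h ^ j := by rw [hgmul, mul_inv_cancel_right]
      rw [e] at this
      have := this
      calc h = g⁻¹ * (g * h * g⁻¹) * g := by group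
        _ = g⁻¹ * 1 * g := by rw [this]
        _ = 1 := by group
    have hpj : ¬ p ∣ j := by
      rintro ⟨t, rfl⟩
      exact hj1 (by rw [pow_mul, hhp, one_pow])
    have hordh : orderOf h = p := by
      have hdvd : orderOf h ∣ p := orderOf_dvd_of_pow_eq_one hhp
      rcases Nat.Prime.eq_one_or_self_of_dvd hp _ hdvd with e | e
      · exact absurd (orderOf_eq_one_iff.mp e) hne
      · exact e
    set j' : ℕ := ((j : ZMod p)⁻¹).val with hj'def
    have hjne : (j : ZMod p) ≠ 0 := by
      rw [Ne, ZMod.natCast_eq_zero_iff]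
      exact hpj
    have hinvrel : h ^ (j * j') = h := by
      have h1 : ((j * j' : ℕ) : ZMod p) = ((1 : ℕ) : ZMod p) := by
        push_cast
        rw [hj'def, ZMod.natCast_val, ZMod.cast_id, mul_inv_cancel₀ hjne]
      have h2 : (j * j') % p = 1 % p := (ZMod.natCast_eq_natCast_iff _ _ _).mp h1
      calc h ^ (j * j') = h ^ ((j * j') % p) := by rw [← hordh, pow_mod_orderOf]
        _ = h ^ (1 % p) := by rw [h2]
        _ = h := by rw [Nat.mod_eq_of_lt hp.one_lt, pow_one]
    have hconjt : ∀ t, (⇑α)^[t] g * h * ((⇑α)^[t] g)⁻¹ = h ^ j := by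
      intro t
      rw [hconjall t, mul_inv_cancel_right]
    have hconjt' : ∀ t, ((⇑α)^[t] g)⁻¹ * h * (⇑α)^[t] g = h ^ j' := by
      intro t
      have e1 : (⇑α)^[t] g * h ^ j' * ((⇑α)^[t] g)⁻¹ = h := by
        calc (⇑α)^[t] g * h ^ j' * ((⇑α)^[t] g)⁻¹
            = ((⇑α)^[t] g * h * ((⇑α)^[t] g)⁻¹) ^ j' := by rw [conj_pow]
          _ = (h ^ j) ^ j' := by rw [hconjt t]
          _ = h := by rw [← pow_mul, hinvrel]
      have e2 : ((⇑α)^[t] g)⁻¹ * ((⇑α)^[t] g * h ^ j' * ((⇑α)^[t] g)⁻¹) * (⇑α)^[t] g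
          = h ^ j' := by group
      rw [e1] at e2
      exact e2
    set N : Subgroup G := Subgroup.zpowers h with hN
    have hxnorm : ∀ t : ℕ, (⇑α)^[t] g ∈ Subgroup.normalizer (N : Set G) := by
      intro t
      rw [Subgroup.mem_normalizer_iff]
      intro z
      constructor
      · intro hz
        obtain ⟨i, hi⟩ := Subgroup.mem_zpowers_iff.mp hz
        refine Subgroup.mem_zpowers_iff.mpr ⟨(j : ℤ) * i, ?_⟩
        rw [← hi, ← conj_zpow, hconjt t, ← zpow_natCast h j, ← zpow_mul]
      · intro hz
        obtain ⟨i, hi⟩ := Subgroup.mem_zpowers_iff.mp hz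
        have hz' : z = ((⇑α)^[t] g)⁻¹ * h ^ i * (⇑α)^[t] g := by
          rw [hi]; group
        rw [hz']
        have hcz := conj_zpow (i := i) (a := ((⇑α)^[t] g)⁻¹) (b := h)
        simp only [inv_inv] at hcz
        refine Subgroup.mem_zpowers_iff.mpr ⟨(j' : ℤ) * i, ?_⟩
        rw [← hcz, hconjt' t, ← zpow_natCast h j', ← zpow_mul]
    have hNormTop : Subgroup.normalizer (N : Set G) = ⊤ := by
      rw [eq_top_iff, ← hKtop, hK, Subgroup.closure_le]
      rintro w ⟨t, rfl⟩
      exact hxnorm t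
    haveI hNn : N.Normal := Subgroup.normalizer_eq_top_iff.mp hNormTop
    have hαfixN : ∀ z : G, z ∈ N → α z = z := by
      intro z hz
      obtain ⟨i, hi⟩ := Subgroup.mem_zpowers_iff.mp hz
      rw [← hi, map_zpow, hfix]
    have hφα : ∀ z, (MulAut.conjNormal (α z) : MulAut N) = MulAut.conjNormal z := by
      intro z
      apply MulEquiv.ext
      intro w
      apply Subtype.ext
      rw [MulAut.conjNormal_apply, MulAut.conjNormal_apply]
      have hw : α (w : G) = w := hαfixN _ w.2
      have hin : (z * w * z⁻¹ : G) ∈ N := hNn.conj_mem _ w.2 z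
      calc α z * (w : G) * (α z)⁻¹ = α (z * w * z⁻¹) := by
            rw [map_mul, map_mul, map_inv, hw]
        _ = z * w * z⁻¹ := hαfixN _ hin
    have hφg := stmt12_lemA α g hg (MulAut.conjNormal : G →* MulAut N) hφα
    have hmemh : h ∈ N := Subgroup.mem_zpowers h
    have e := congrArg (fun ψ : MulAut N => ((ψ ⟨h, hmemh⟩ : N) : G)) hφg
    simp only [MulAut.conjNormal_apply, MulAut.one_apply] at e
    apply hc
    have e2 : h ^ j = g * h * g⁻¹ := by rw [hgmul, mul_inv_cancel_right]
    rw [e2]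
    exact e
end

section
/- Let G be a finite abelian group, α an automorphism of G, and g ∈ G. Let o₁ be the order of α and let o₂ be the maximum order of an element of G fixed by α. Then the order of the affine map A_{α,g} : G → G, x ↦ g·α(x), as a permutation of G, divides o₁ · o₂. -/
/-- Let `G` be a finite abelian group, `α` an automorphism of `G` and `g ∈ G`. If `o₂` is
the maximum order of a fixed point of `α`, then the order of the affine map
`x ↦ g·α(x)` (as a permutation of `G`) divides `orderOf α · o₂`. -/
theorem stmt13 {G : Type*} [CommGroup G] [Fintype G] (α : MulAut G) (g : G) (o₂ : ℕ)
    (ho₂ : IsGreatest {n : ℕ | ∃ h : G, α h = h ∧ orderOf h = n} o₂) :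
    orderOf ((α.toEquiv.trans (Equiv.mulLeft g)) : Equiv.Perm G) ∣ orderOf α * o₂ := by
  obtain ⟨⟨h, hαh, hho⟩, hmax⟩ := ho₂
  set π : Equiv.Perm G := α.toEquiv.trans (Equiv.mulLeft g) with hπdef
  set o₁ := orderOf α with ho₁def
  have ho₁pos : 0 < o₁ := orderOf_pos α
  set c : G := ∏ i ∈ Finset.range o₁, (α ^ i) g with hc
  -- iterate formula
  have hpow : ∀ n x, (π ^ n) x = (∏ i ∈ Finset.range n, (α ^ i) g) * (α ^ n) x := by
    intro n
    induction n with
    | zero => intro x; simp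
    | succ n ih =>
      intro x
      rw [pow_succ', Equiv.Perm.mul_apply, ih]
      show g * α _ = _
      rw [map_mul, map_prod, Finset.prod_range_succ']
      simp only [← MulAut.mul_apply, ← pow_succ', pow_zero, MulAut.one_apply]
      rw [mul_comm (∏ i ∈ Finset.range n, (α ^ (i+1)) g) g, mul_assoc]
  -- c is fixed by α
  have hαc : α c = c := by
    obtain ⟨m, hm⟩ : ∃ m, o₁ = m + 1 := ⟨o₁ - 1, (Nat.succ_pred_eq_of_pos ho₁pos).symm⟩
    rw [hc, map_prod]
    simp only [← MulAut.mul_apply, ← pow_succ']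
    rw [hm, Finset.prod_range_succ, Finset.prod_range_succ']
    have h1 : (α ^ (m + 1)) g = g := by
      rw [← hm, ho₁def, pow_orderOf_eq_one]; rfl
    have h0 : (α ^ (0 : ℕ)) g = g := by simp
    rw [h1, h0]
  -- order of c divides o₂
  have hc2 : orderOf c ∣ o₂ := by
    have hccomm : Commute c h := mul_comm c h
    have hcne : orderOf c ≠ 0 := (orderOf_pos c).ne'
    have hhne : orderOf h ≠ 0 := (orderOf_pos h).ne'
    have hlcm := hccomm.orderOf_mul_pow_eq_lcm hcne hhne
    set z := c ^ (orderOf c / Nat.factorizationLCMLeft (orderOf c) (orderOf h)) *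
      h ^ (orderOf h / Nat.factorizationLCMRight (orderOf c) (orderOf h)) with hz
    have hαz : α z = z := by
      rw [hz, map_mul, map_pow, map_pow, hαc, hαh]
    have hmem : orderOf z ∈ {n : ℕ | ∃ h : G, α h = h ∧ orderOf h = n} := ⟨z, hαz, rfl⟩
    have hle : orderOf z ≤ o₂ := hmax hmem
    rw [hlcm, hho] at hle
    have hdvd : o₂ ∣ Nat.lcm (orderOf c) o₂ := Nat.dvd_lcm_right _ _
    have ho₂pos : 0 < o₂ := hho ▸ orderOf_pos h
    have : Nat.lcm (orderOf c) o₂ = o₂ :=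
      Nat.le_antisymm hle
        (Nat.le_of_dvd (Nat.pos_of_ne_zero (Nat.lcm_ne_zero hcne ho₂pos.ne')) hdvd)
    exact this ▸ Nat.dvd_lcm_left _ _
  -- conclude
  apply orderOf_dvd_of_pow_eq_one
  ext x
  have key : ∀ k x, (π ^ (o₁ * k)) x = c ^ k * x := by
    intro k
    induction k with
    | zero => intro x; simp
    | succ k ih =>
      intro x
      rw [Nat.mul_succ, pow_add, Equiv.Perm.mul_apply, ih, hpow, ho₁def, pow_orderOf_eq_one]
      show c ^ k * (c * x) = c ^ (k + 1) * x
      rw [pow_succ, mul_assoc]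
  rw [key o₂ x]
  obtain ⟨m, hm⟩ := hc2
  rw [hm, pow_mul, pow_orderOf_eq_one, one_pow, one_mul]
  rfl
end

section
/- Let G be a finite group and α an automorphism of G such that some cycle of α has length at least |G|/3. Then α has a regular cycle, i.e., some element of G has cycle length under α equal to the order of α. -/
open Function Subgroup

private lemma mulAut_pow_apply {H : Type*} [Group H] (β : MulAut H) :
    ∀ (k : ℕ) (x : H), (β ^ k) x = (⇑β)^[k] x := by
  intro k
  induction k with
  | zero => intro x; rfl
  | succ k ih =>
    intro x
    rw [pow_succ, Function.iterate_succ_apply]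
    exact ih (β x)

private theorem stmt14_aux : ∀ (N : ℕ) (G : Type u) [Group G] [Fintype G] (α : MulAut G),
    Fintype.card G ≤ N → (∃ g : G, Fintype.card G ≤ 3 * Function.minimalPeriod (⇑α) g) →
    ∃ g : G, Function.minimalPeriod (⇑α) g = orderOf α := by
  intro N
  induction N using Nat.strong_induction_on with
  | _ N IH =>
  intro G _ _ α hcardN hhyp
  classical
  haveI : Finite (MulAut G) :=
    Finite.of_injective (fun e : MulAut G => (e : G → G)) DFunLike.coe_injective
  set A : G → G := ⇑α with hA
  obtain ⟨g₁, hg₁⟩ := hhyp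
  obtain ⟨g₀, -, hmax⟩ := Finset.exists_max_image Finset.univ
    (fun g : G => Function.minimalPeriod A g) ⟨g₁, Finset.mem_univ _⟩
  set d := Function.minimalPeriod A g₀ with hd
  have hcard3 : Fintype.card G ≤ 3 * d :=
    le_trans hg₁ (by have := hmax g₁ (Finset.mem_univ _); omega)
  set n := orderOf α with hn
  have hnpos : 0 < n := orderOf_pos α
  have hperiodic : ∀ x : G, Function.IsPeriodicPt A n x := by
    intro x
    show A^[n] x = x
    rw [hA, ← mulAut_pow_apply, pow_orderOf_eq_one]
    rfl
  have hdvd : ∀ x : G, Function.minimalPeriod A x ∣ n :=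
    fun x => (hperiodic x).minimalPeriod_dvd
  have hdpos : 0 < d := (hperiodic g₀).minimalPeriod_pos hnpos
  have hdn : d ∣ n := hdvd g₀
  have hAd : A^[d] g₀ = g₀ := Function.iterate_minimalPeriod
  -- multiplicativity of iterates
  have hmul' : ∀ (k : ℕ) (a b : G), A^[k] (a * b) = A^[k] a * A^[k] b := by
    intro k a b
    rw [hA, ← mulAut_pow_apply, ← mulAut_pow_apply, ← mulAut_pow_apply, map_mul]
  have hinv' : ∀ (k : ℕ) (a : G), A^[k] a⁻¹ = (A^[k] a)⁻¹ := by
    intro k a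
    rw [hA, ← mulAut_pow_apply, ← mulAut_pow_apply, map_inv]
  have hone' : ∀ k : ℕ, A^[k] (1 : G) = 1 := by
    intro k
    rw [hA, ← mulAut_pow_apply, map_one]
  -- trivial case : d = 1
  by_cases hd1 : d ≤ 1
  · have hall : ∀ x : G, A x = x := by
      intro x
      have h1 : Function.minimalPeriod A x = 1 :=
        le_antisymm (le_trans (hmax x (Finset.mem_univ _)) hd1)
          ((hperiodic x).minimalPeriod_pos hnpos)
      have := Function.iterate_minimalPeriod (f := A) (x := x)
      rw [h1] at this
      simpa using this
    have hα1 : α = 1 := by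
      apply MulEquiv.ext
      intro x
      exact hall x
    refine ⟨g₀, ?_⟩
    rw [hn, hα1, orderOf_one]
    have := hall g₀
    rw [← hd]
    omega
  have hd2 : 2 ≤ d := by omega
  -- whether α^d = 1
  by_cases hcase : ∀ x : G, A^[d] x = x
  · have hpow1 : α ^ d = 1 := by
      apply MulEquiv.ext
      intro x
      rw [mulAut_pow_apply]
      exact hcase x
    exact ⟨g₀, Nat.dvd_antisymm hdn (orderOf_dvd_of_pow_eq_one hpow1)⟩
  push_neg at hcase
  obtain ⟨x₀, hx₀⟩ := hcase
  -- the subgroup of points fixed by α^d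
  let F : Subgroup G :=
    { carrier := {x : G | A^[d] x = x}
      one_mem' := hone' d
      mul_mem' := by
        intro a b ha hb
        show A^[d] (a * b) = a * b
        rw [hmul']
        rw [Set.mem_setOf_eq] at ha hb
        rw [ha, hb]
      inv_mem' := by
        intro a ha
        show A^[d] a⁻¹ = a⁻¹
        rw [hinv']
        rw [Set.mem_setOf_eq] at ha
        rw [ha] }
  have hFmem : ∀ x : G, x ∈ F ↔ A^[d] x = x := fun x => Iff.rfl
  have hx₀F : x₀ ∉ F := hx₀
  have hFg₀ : g₀ ∈ F := hAd
  have hFiter : ∀ (i : ℕ) (x : G), x ∈ F → A^[i] x ∈ F := by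
    intro i x hx
    rw [hFmem] at hx ⊢
    rw [← Function.iterate_add_apply, Nat.add_comm, Function.iterate_add_apply, hx]
  have hFout : ∀ (i : ℕ) (x : G), x ∉ F → A^[i] x ∉ F := by
    intro i x hx hmem
    apply hx
    rw [hFmem] at hmem ⊢
    have : A^[i] (A^[d] x) = A^[i] x := by
      rw [← Function.iterate_add_apply, Nat.add_comm, Function.iterate_add_apply, hmem]
    exact Function.Injective.iterate (MulEquiv.injective α) i this
  -- injectivity of the orbit of g₀
  have hinj : ∀ i j : ℕ, i < d → j < d → A^[i] g₀ = A^[j] g₀ → i = j := by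
    intro i j hi hj h
    exact Function.iterate_injOn_Iio_minimalPeriod (Set.mem_Iio.mpr hi) (Set.mem_Iio.mpr hj) h
  have hchain : ∀ i : ℕ, i ≤ d → A^[i] g₀ = 1 → g₀ = 1 := by
    intro i hi h1
    have h2 : A^[d - i] (A^[i] g₀) = A^[d - i] (1 : G) := congrArg _ h1
    rw [← Function.iterate_add_apply, Nat.sub_add_cancel hi, hAd, hone'] at h2
    exact h2
  have hg₀1 : g₀ ≠ 1 := by
    intro h
    have : Function.minimalPeriod A g₀ ∣ 1 := by
      apply Function.IsPeriodicPt.minimalPeriod_dvd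
      show A^[1] g₀ = g₀
      rw [h]
      simpa using hone' 1
    have h1 := Nat.dvd_one.mp this
    rw [← hd] at h1
    omega
  -- |F| ≥ d + 1
  have hcardF : d + 1 ≤ Fintype.card F := by
    have hsub : (Finset.image (fun i => A^[i] g₀) (Finset.range d)) ∪ {1} ⊆
        (F : Set G).toFinset := by
      intro y hy
      rw [Finset.mem_union] at hy
      rw [Set.mem_toFinset]
      rcases hy with hy | hy
      · obtain ⟨i, hi, rfl⟩ := Finset.mem_image.mp hy
        exact hFiter i g₀ hFg₀
      · rw [Finset.mem_singleton] at hy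
        rw [hy]
        exact F.one_mem
    have hcard1 : (Finset.image (fun i => A^[i] g₀) (Finset.range d)).card = d := by
      rw [Finset.card_image_of_injOn, Finset.card_range]
      intro i hi j hj h
      exact hinj i j (Finset.mem_range.mp hi) (Finset.mem_range.mp hj) h
    have h1notin : (1 : G) ∉ Finset.image (fun i => A^[i] g₀) (Finset.range d) := by
      intro hmem
      obtain ⟨i, hi, h⟩ := Finset.mem_image.mp hmem
      exact hg₀1 (hchain i (le_of_lt (Finset.mem_range.mp hi)) h)
    have := Finset.card_le_card hsub
    rw [Finset.card_union_of_disjoint (Finset.disjoint_singleton_right.mpr h1notin),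
      hcard1, Finset.card_singleton, Set.toFinset_card] at this
    simpa using this
  -- Lagrange : index of F is 2
  have hFdvd : Fintype.card F ∣ Fintype.card G := by
    have := Subgroup.card_subgroup_dvd_card F
    simpa [Nat.card_eq_fintype_card] using this
  obtain ⟨t, ht⟩ := hFdvd
  have htne : t = 2 := by
    have ht0 : t ≠ 0 := by
      intro h
      rw [h, Nat.mul_zero] at ht
      have := Fintype.card_pos (α := G)
      omega
    have ht1 : t ≠ 1 := by
      intro h
      rw [h, Nat.mul_one] at ht
      have : F = ⊤ := by
        apply Subgroup.eq_top_of_card_eq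
        simpa [Nat.card_eq_fintype_card] using ht.symm
      exact hx₀F (this ▸ Subgroup.mem_top x₀)
    by_contra hne
    have ht3 : 3 ≤ t := by omega
    have hle : (d + 1) * 3 ≤ Fintype.card G := by
      rw [ht]; exact Nat.mul_le_mul hcardF ht3
    omega
  rw [htne] at ht
  -- product of two non-members (modulo inverse) is in F
  have hmulF : ∀ x : G, x ∉ F → ∀ y : G, y ∉ F → y * x⁻¹ ∈ F := by
    intro x hx y hy
    have hdisj : Disjoint ((F : Set G).toFinset) (((F : Set G).toFinset).image (· * x)) := by
      rw [Finset.disjoint_left]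
      intro a haF haI
      obtain ⟨h, hh, rfl⟩ := Finset.mem_image.mp haI
      rw [Set.mem_toFinset] at haF hh
      apply hx
      have := F.mul_mem (F.inv_mem hh) haF
      rwa [inv_mul_cancel_left] at this
    have hcardU : ((F : Set G).toFinset ∪ ((F : Set G).toFinset).image (· * x)).card =
        Fintype.card G := by
      rw [Finset.card_union_of_disjoint hdisj,
        Finset.card_image_of_injective _ (mul_left_injective x), Set.toFinset_card]
      simp only [SetLike.coe_sort_coe]
      omega
    have huniv : ((F : Set G).toFinset ∪ ((F : Set G).toFinset).image (· * x)) =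
        Finset.univ := Finset.eq_univ_of_card _ hcardU
    have hymem : y ∈ ((F : Set G).toFinset ∪ ((F : Set G).toFinset).image (· * x)) := by
      rw [huniv]; exact Finset.mem_univ y
    rw [Finset.mem_union] at hymem
    rcases hymem with h | h
    · rw [Set.mem_toFinset] at h
      exact absurd h hy
    · obtain ⟨h', hh', heq⟩ := Finset.mem_image.mp h
      rw [Set.mem_toFinset] at hh'
      have : y * x⁻¹ = h' := by rw [← heq, mul_inv_cancel_right]
      rwa [this]
  -- the element f
  set f : G := x₀⁻¹ * A^[d] x₀ with hfdef
  have hx₀f : A^[d] x₀ = x₀ * f := by rw [hfdef, mul_inv_cancel_left]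
  have hcoset : ∀ x : G, x ∉ F → A^[d] x = x * f := by
    intro x hx
    have hh : x * x₀⁻¹ ∈ F := hmulF x₀ hx₀F x hx
    have hh' : A^[d] (x * x₀⁻¹) = x * x₀⁻¹ := hh
    have hxe : x = x * x₀⁻¹ * x₀ := by rw [inv_mul_cancel_right]
    calc A^[d] x = A^[d] (x * x₀⁻¹ * x₀) := by rw [← hxe]
      _ = A^[d] (x * x₀⁻¹) * A^[d] x₀ := hmul' d _ _
      _ = x * x₀⁻¹ * (x₀ * f) := by rw [hh', hx₀f]
      _ = x * f := by rw [mul_assoc, inv_mul_cancel_left]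
  have hf1 : f ≠ 1 := by
    intro h
    exact hx₀ (by rw [hx₀f, h, mul_one])
  have hAdx₀out : A^[d] x₀ ∉ F := hFout d x₀ hx₀F
  have hfF : f ∈ F := by
    rw [hFmem, hfdef, hmul', hinv', hcoset _ hAdx₀out, inv_mul_cancel_left]
  have hαf : A f = f := by
    have hAx₀out : A x₀ ∉ F := by
      have := hFout 1 x₀ hx₀F
      simpa using this
    have h2 : A^[d] (A x₀) = A x₀ * f := hcoset _ hAx₀out
    have h3 : A f = (A x₀)⁻¹ * A (A^[d] x₀) := by
      rw [hfdef]
      rw [show A (x₀⁻¹ * A^[d] x₀) = A x₀⁻¹ * A (A^[d] x₀) from map_mul α _ _]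
      rw [show A x₀⁻¹ = (A x₀)⁻¹ from map_inv α x₀]
    rw [h3, show A (A^[d] x₀) = A^[d] (A x₀) by
        rw [← Function.iterate_succ_apply' A d x₀, Function.iterate_succ_apply A d x₀],
      h2, inv_mul_cancel_left]
  have hitf : ∀ k : ℕ, A^[k] f = f := by
    intro k
    induction k with
    | zero => rfl
    | succ k ih => rw [Function.iterate_succ_apply', ih, hαf]
  have hitfz : ∀ (k : ℕ) (m : ℤ), A^[k] (f ^ m) = f ^ m := by
    intro k m
    have h1 : (α ^ k) (f ^ m) = ((α ^ k) f) ^ m := map_zpow (α ^ k) f m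
    rw [mulAut_pow_apply, mulAut_pow_apply] at h1
    show (⇑α)^[k] (f ^ m) = f ^ m
    rw [h1, show (⇑α)^[k] f = f from hitf k]
  have hcomm : ∀ h : G, h ∈ F → f * h = h * f := by
    intro h hh
    have hh' : A^[d] h = h := hh
    have hxh : x₀ * h ∉ F := by
      intro hmem
      apply hx₀F
      have := F.mul_mem hmem (F.inv_mem hh)
      rwa [mul_inv_cancel_right] at this
    have e1 : A^[d] (x₀ * h) = x₀ * h * f := hcoset _ hxh
    have e2 : A^[d] (x₀ * h) = x₀ * f * h := by rw [hmul', hh', hx₀f]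
    have e25 : x₀ * h * f = x₀ * f * h := by rw [← e1, e2]
    have e3 : x₀ * (h * f) = x₀ * (f * h) := by
      calc x₀ * (h * f) = x₀ * h * f := (mul_assoc _ _ _).symm
        _ = x₀ * f * h := e25
        _ = x₀ * (f * h) := mul_assoc _ _ _
    exact (mul_left_cancel e3).symm
  have hconj : ∀ g : G, g ∉ F → g * f * g⁻¹ = f⁻¹ := by
    intro g hg
    have hginv : g⁻¹ ∉ F := by
      intro h
      apply hg
      have := F.inv_mem h
      rwa [inv_inv] at this
    have hgg : g * g ∈ F := by
      have := hmulF g⁻¹ hginv g hg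
      rwa [inv_inv] at this
    have hgg' : A^[d] (g * g) = g * g := hgg
    have e2 : A^[d] (g * g) = g * f * (g * f) := by
      rw [hmul', hcoset g hg]
    have e3 : g * g = g * (f * (g * f)) := by
      calc g * g = A^[d] (g * g) := hgg'.symm
        _ = g * f * (g * f) := e2
        _ = g * (f * (g * f)) := mul_assoc _ _ _
    have e4 : g = f * (g * f) := mul_left_cancel e3
    have e5 : f⁻¹ * g = g * f := by
      conv_lhs => rw [e4]
      rw [inv_mul_cancel_left]
    calc g * f * g⁻¹ = f⁻¹ * g * g⁻¹ := by rw [show g * f = f⁻¹ * g from e5.symm]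
      _ = f⁻¹ := by rw [mul_inv_cancel_right]
  -- the cyclic normal subgroup Z = <f>
  set Z : Subgroup G := Subgroup.zpowers f with hZdef
  have hfZ : f ∈ Z := Subgroup.mem_zpowers f
  have hZN : Z.Normal := by
    constructor
    intro z hz g
    obtain ⟨k, rfl⟩ := Subgroup.mem_zpowers_iff.mp hz
    have hconjz : g * f ^ k * g⁻¹ = (g * f * g⁻¹) ^ k := by
      have := map_zpow (MulAut.conj g) f k
      simpa [MulAut.conj_apply] using this.symm
    rw [hconjz]
    by_cases hgF : g ∈ F
    · have : g * f * g⁻¹ = f := by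
        rw [← hcomm g hgF, mul_inv_cancel_right]
      rw [this]
      exact Subgroup.zpow_mem Z hfZ k
    · rw [hconj g hgF]
      exact Subgroup.zpow_mem Z (Subgroup.inv_mem Z hfZ) k
  haveI : Z.Normal := hZN
  set r : ℕ := orderOf f with hrdef
  have hrpos : 0 < r := orderOf_pos f
  have hr2 : 2 ≤ r := by
    by_contra hcon
    push_neg at hcon
    have hr1 : orderOf f = 1 := by omega
    exact hf1 (orderOf_eq_one_iff.mp hr1)
  -- iterating the shift
  have hshift : ∀ (s : ℕ) (x : G) (m : ℤ), A^[s] x = x * f ^ m →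
      ∀ k : ℕ, A^[s * k] x = x * f ^ (m * k) := by
    intro s x m hsx k
    induction k with
    | zero => simp
    | succ k ih =>
      have hexp : s * (k + 1) = s + s * k := by ring
      rw [hexp, Function.iterate_add_apply, ih, hmul', hitfz, hsx]
      rw [mul_assoc, ← zpow_add]
      congr 1
      push_cast
      ring
  have hAdk : ∀ x : G, x ∉ F → ∀ k : ℕ, A^[d * k] x = x * f ^ (k : ℤ) := by
    intro x hx k
    have h0 : A^[d] x = x * f ^ (1 : ℤ) := by rw [zpow_one]; exact hcoset x hx
    have := hshift d x 1 h0 k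
    rwa [one_mul] at this
  have hFdk : ∀ x : G, x ∈ F → ∀ k : ℕ, A^[d * k] x = x := by
    intro x hx k
    induction k with
    | zero => simp
    | succ k ih =>
      have hexp : d * (k + 1) = d + d * k := by ring
      rw [hexp, Function.iterate_add_apply, ih]
      exact hx
  -- n = d * r
  have hn_eq : n = d * r := by
    have h1 : α ^ (d * r) = 1 := by
      apply MulEquiv.ext
      intro x
      rw [mulAut_pow_apply]
      show A^[d * r] x = x
      by_cases hxF : x ∈ F
      · exact hFdk x hxF r
      · rw [hAdk x hxF r, zpow_natCast, pow_orderOf_eq_one, mul_one]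
    have hn_dvd : n ∣ d * r := orderOf_dvd_of_pow_eq_one h1
    have h2 : f ^ (n / d) = 1 := by
      have hx : A^[n] x₀ = x₀ := hperiodic x₀
      have h3 : A^[d * (n / d)] x₀ = x₀ * f ^ ((n / d : ℕ) : ℤ) := hAdk x₀ hx₀F (n / d)
      rw [Nat.mul_div_cancel' hdn, hx] at h3
      have h4 : f ^ ((n / d : ℕ) : ℤ) = 1 := by
        have := mul_left_cancel (a := x₀) (by rw [mul_one, ← h3] : x₀ * 1 = x₀ * f ^ ((n / d : ℕ) : ℤ))
        exact this.symm
      rw [← zpow_natCast, h4]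
    have hr_dvd : r ∣ n / d := orderOf_dvd_of_pow_eq_one h2
    have hdr_dvd : d * r ∣ n := by
      have := Nat.mul_dvd_mul_left d hr_dvd
      rwa [Nat.mul_div_cancel' hdn] at this
    exact Nat.dvd_antisymm hn_dvd hdr_dvd
  -- the quotient group
  haveI : Finite (G ⧸ Z) := Quotient.finite _
  haveI : Fintype (G ⧸ Z) := Fintype.ofFinite _
  have hαinvf : (α⁻¹ : MulAut G) f = f := by
    have h1 : (α⁻¹ : MulAut G) (α f) = f := MulAut.inv_apply_self G α f
    rw [show α f = f from hαf] at h1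
    exact h1
  have hαZ : ∀ z ∈ Z, α z ∈ Z := by
    intro z hz
    obtain ⟨k, rfl⟩ := Subgroup.mem_zpowers_iff.mp hz
    rw [map_zpow, show α f = f from hαf]
    exact Subgroup.zpow_mem Z hfZ k
  have hαZ' : ∀ z ∈ Z, (α⁻¹ : MulAut G) z ∈ Z := by
    intro z hz
    obtain ⟨k, rfl⟩ := Subgroup.mem_zpowers_iff.mp hz
    rw [map_zpow, hαinvf]
    exact Subgroup.zpow_mem Z hfZ k
  have hker : ∀ (β : MulAut G), (∀ z ∈ Z, β z ∈ Z) →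
      Z ≤ ((QuotientGroup.mk' Z).comp β.toMonoidHom).ker := by
    intro β hβ z hz
    rw [MonoidHom.mem_ker, MonoidHom.comp_apply]
    rw [show (QuotientGroup.mk' Z) (β.toMonoidHom z) = ((β z : G) : G ⧸ Z) from rfl]
    rw [QuotientGroup.eq_one_iff]
    exact hβ z hz
  set φ : G ⧸ Z →* G ⧸ Z :=
    QuotientGroup.lift Z ((QuotientGroup.mk' Z).comp α.toMonoidHom) (hker α hαZ) with hφdef
  set ψ : G ⧸ Z →* G ⧸ Z :=
    QuotientGroup.lift Z ((QuotientGroup.mk' Z).comp (α⁻¹ : MulAut G).toMonoidHom)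
      (hker α⁻¹ hαZ') with hψdef
  have hφmk : ∀ x : G, φ ((x : G ⧸ Z)) = ((α x : G) : G ⧸ Z) := by
    intro x
    rw [hφdef]
    rfl
  have hψmk : ∀ x : G, ψ ((x : G ⧸ Z)) = (((α⁻¹ : MulAut G) x : G) : G ⧸ Z) := by
    intro x
    rw [hψdef]
    rfl
  set β : MulAut (G ⧸ Z) :=
    { toFun := φ
      invFun := ψ
      left_inv := by
        intro q
        refine QuotientGroup.induction_on q ?_
        intro x
        rw [hφmk, hψmk, MulAut.inv_apply_self]
      right_inv := by
        intro q
        refine QuotientGroup.induction_on q ?_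
        intro x
        rw [hψmk, hφmk, MulAut.apply_inv_self]
      map_mul' := φ.map_mul } with hβdef
  have hβmk : ∀ x : G, β ((x : G ⧸ Z)) = ((α x : G) : G ⧸ Z) := hφmk
  have hβit : ∀ (k : ℕ) (x : G), (⇑β)^[k] ((x : G ⧸ Z)) = ((A^[k] x : G) : G ⧸ Z) := by
    intro k
    induction k with
    | zero => intro x; rfl
    | succ k ih =>
      intro x
      rw [Function.iterate_succ_apply, Function.iterate_succ_apply]
      rw [show β ((x : G ⧸ Z)) = ((A x : G) : G ⧸ Z) from hβmk x]
      exact ih (A x)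
  -- cardinalities
  have hcardGQ : Fintype.card G = Fintype.card (G ⧸ Z) * r := by
    have h1 := Subgroup.card_eq_card_quotient_mul_card_subgroup Z
    have h2 : Nat.card Z = r := Nat.card_zpowers f
    rw [h2, Nat.card_eq_fintype_card, Nat.card_eq_fintype_card] at h1
    exact h1
  have hmkf : ∀ (u : G) (k : ℕ), ((u * f ^ k : G) : G ⧸ Z) = ((u : G) : G ⧸ Z) := by
    intro u k
    refine QuotientGroup.eq.mpr ?_
    have h1 : (u * f ^ k)⁻¹ * u = (f ^ k)⁻¹ := by
      rw [mul_inv_rev, mul_assoc, inv_mul_cancel, mul_one]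
    rw [h1]
    exact Subgroup.inv_mem Z (Subgroup.pow_mem Z hfZ k)
  -- the period of g₀ in the quotient
  set s : ℕ := Function.minimalPeriod (⇑β) ((g₀ : G ⧸ Z)) with hsdef
  have hQper : Function.IsPeriodicPt (⇑β) d ((g₀ : G ⧸ Z)) := by
    show (⇑β)^[d] _ = _
    rw [hβit, hAd]
  have hsper : (⇑β)^[s] ((g₀ : G ⧸ Z)) = (g₀ : G ⧸ Z) := Function.iterate_minimalPeriod
  have hQeq : ((g₀ : G ⧸ Z)) = ((A^[s] g₀ : G) : G ⧸ Z) := by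
    rw [← hβit s g₀]
    exact hsper.symm
  have hmem : g₀⁻¹ * A^[s] g₀ ∈ Z := QuotientGroup.eq.mp hQeq
  obtain ⟨m, hm⟩ := Subgroup.mem_zpowers_iff.mp hmem
  have hsg : A^[s] g₀ = g₀ * f ^ m := by rw [hm, mul_inv_cancel_left]
  have hsr : A^[s * r] g₀ = g₀ := by
    rw [hshift s g₀ m hsg r, mul_comm m (r : ℤ), zpow_mul, zpow_natCast,
      pow_orderOf_eq_one, one_zpow, mul_one]
  have hd_sr : d ∣ s * r := Function.IsPeriodicPt.minimalPeriod_dvd hsr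
  have hspos : 0 < s := hQper.minimalPeriod_pos hdpos
  have hcardQ3 : Fintype.card (G ⧸ Z) ≤ 3 * s := by
    have h1 : Fintype.card (G ⧸ Z) * r ≤ 3 * (s * r) := by
      rw [← hcardGQ]
      exact le_trans hcard3 (Nat.mul_le_mul_left 3 (Nat.le_of_dvd (by positivity) hd_sr))
    have h2 : 3 * (s * r) = 3 * s * r := by ring
    rw [h2] at h1
    exact Nat.le_of_mul_le_mul_right h1 hrpos
  have hQcard_lt : Fintype.card (G ⧸ Z) < Fintype.card G := by
    have hQpos : 0 < Fintype.card (G ⧸ Z) := Fintype.card_pos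
    calc Fintype.card (G ⧸ Z) < Fintype.card (G ⧸ Z) * 2 := by omega
      _ ≤ Fintype.card (G ⧸ Z) * r := Nat.mul_le_mul_left _ hr2
      _ = Fintype.card G := hcardGQ.symm
  obtain ⟨zb, hzb⟩ := IH (Fintype.card (G ⧸ Z)) (lt_of_lt_of_le hQcard_lt hcardN)
    (G ⧸ Z) β le_rfl ⟨(g₀ : G ⧸ Z), hcardQ3⟩
  -- the order of β is d
  have hβd : β ^ d = 1 := by
    apply MulEquiv.ext
    intro q
    refine QuotientGroup.induction_on q ?_
    intro x
    rw [mulAut_pow_apply, MulAut.one_apply, hβit]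
    by_cases hxF : x ∈ F
    · rw [(hFmem x).mp hxF]
    · rw [hcoset x hxF]
      have := hmkf x 1
      rwa [pow_one] at this
  have hβdvd : orderOf β ∣ d := orderOf_dvd_of_pow_eq_one hβd
  have hd_dvd_β : d ∣ orderOf β := by
    set nb := orderOf β with hnbdef
    have h1 : ∀ x : G, A^[nb * r] x = x := by
      intro x
      have hq : (⇑β)^[nb] ((x : G ⧸ Z)) = (x : G ⧸ Z) := by
        rw [← mulAut_pow_apply, pow_orderOf_eq_one, MulAut.one_apply]
      have hQeq2 : ((x : G ⧸ Z)) = ((A^[nb] x : G) : G ⧸ Z) := by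
        rw [← hβit]
        exact hq.symm
      have hmem2 : x⁻¹ * A^[nb] x ∈ Z := QuotientGroup.eq.mp hQeq2
      obtain ⟨m2, hm2⟩ := Subgroup.mem_zpowers_iff.mp hmem2
      have hx2 : A^[nb] x = x * f ^ m2 := by rw [hm2, mul_inv_cancel_left]
      rw [hshift nb x m2 hx2 r, mul_comm m2 (r : ℤ), zpow_mul, zpow_natCast,
        pow_orderOf_eq_one, one_zpow, mul_one]
    have h2 : α ^ (nb * r) = 1 := by
      apply MulEquiv.ext
      intro x
      rw [mulAut_pow_apply, MulAut.one_apply]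
      exact h1 x
    have h3 : n ∣ nb * r := orderOf_dvd_of_pow_eq_one h2
    rw [hn_eq] at h3
    exact (Nat.mul_dvd_mul_iff_right hrpos).mp h3
  have hnb_eq : orderOf β = d := Nat.dvd_antisymm hβdvd hd_dvd_β
  -- pick a representative z of the regular element of the quotient
  obtain ⟨z, hz⟩ := QuotientGroup.mk'_surjective Z zb
  have hzper : Function.minimalPeriod (⇑β) ((z : G ⧸ Z)) = d := by
    rw [show ((z : G ⧸ Z)) = zb from hz, hzb, hnb_eq]
  -- z is not in F
  have hzF : z ∉ F := by
    intro hzF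
    have hinj2 : Function.Injective (fun p : Fin d × Fin r =>
        (⟨A^[(p.1 : ℕ)] z * f ^ ((p.2 : ℕ)), F.mul_mem (hFiter _ z hzF) (F.pow_mem hfF _)⟩ : F)) := by
      intro p q hpq
      have hpq' : A^[(p.1 : ℕ)] z * f ^ ((p.2 : ℕ)) = A^[(q.1 : ℕ)] z * f ^ ((q.2 : ℕ)) :=
        congrArg Subtype.val hpq
      have hQ : (⇑β)^[(p.1 : ℕ)] ((z : G ⧸ Z)) = (⇑β)^[(q.1 : ℕ)] ((z : G ⧸ Z)) := by
        rw [hβit, hβit, ← hmkf (A^[(p.1 : ℕ)] z) ((p.2 : ℕ)), ← hmkf (A^[(q.1 : ℕ)] z) ((q.2 : ℕ))]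
        exact congrArg _ hpq'
      have hp1 : (p.1 : ℕ) = (q.1 : ℕ) :=
        Function.iterate_injOn_Iio_minimalPeriod
          (Set.mem_Iio.mpr (lt_of_lt_of_eq p.1.isLt hzper.symm))
          (Set.mem_Iio.mpr (lt_of_lt_of_eq q.1.isLt hzper.symm)) hQ
      rw [hp1] at hpq'
      have hp2 : f ^ ((p.2 : ℕ)) = f ^ ((q.2 : ℕ)) := mul_left_cancel hpq'
      have hp2' : (p.2 : ℕ) = (q.2 : ℕ) :=
        pow_injOn_Iio_orderOf (Set.mem_Iio.mpr p.2.isLt) (Set.mem_Iio.mpr q.2.isLt) hp2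
      exact Prod.ext (Fin.ext hp1) (Fin.ext hp2')
    have hle := Fintype.card_le_of_injective _ hinj2
    rw [Fintype.card_prod, Fintype.card_fin, Fintype.card_fin] at hle
    have h2 : 2 * (d * r) ≤ Fintype.card G := by
      calc 2 * (d * r) = d * r * 2 := by ring
        _ ≤ Fintype.card F * 2 := Nat.mul_le_mul_right 2 hle
        _ = Fintype.card G := ht.symm
    have h3 : 4 * d ≤ 2 * (d * r) := by
      calc 4 * d = 2 * (d * 2) := by ring
        _ ≤ 2 * (d * r) := Nat.mul_le_mul_left 2 (Nat.mul_le_mul_left d hr2)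
    omega
  -- conclusion : z is a regular element
  have hzQpt : Function.IsPeriodicPt (⇑β) (Function.minimalPeriod A z) ((z : G ⧸ Z)) := by
    show (⇑β)^[_] _ = _
    rw [hβit, Function.iterate_minimalPeriod]
  have hd_dvd_e : d ∣ Function.minimalPeriod A z := by
    have := hzQpt.minimalPeriod_dvd
    rwa [hzper] at this
  obtain ⟨m3, hm3⟩ := hd_dvd_e
  have heit : A^[Function.minimalPeriod A z] z = z := Function.iterate_minimalPeriod
  have hfm : f ^ ((m3 : ℕ) : ℤ) = 1 := by
    have h1 : A^[d * m3] z = z * f ^ ((m3 : ℕ) : ℤ) := hAdk z hzF m3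
    rw [← hm3, heit] at h1
    have h2 : z * 1 = z * f ^ ((m3 : ℕ) : ℤ) := by
      rw [mul_one]
      exact h1
    exact (mul_left_cancel h2).symm
  have hr_m : r ∣ m3 := by
    apply orderOf_dvd_of_pow_eq_one
    rw [← zpow_natCast]
    exact hfm
  have hfinal : n ∣ Function.minimalPeriod A z := by
    rw [hn_eq, hm3]
    exact Nat.mul_dvd_mul_left d hr_m
  exact ⟨z, Nat.dvd_antisymm (hdvd z) hfinal⟩


/-- If an automorphism `α` of a finite group `G` has a cycle of length at least `|G|/3`,
then `α` has a regular cycle. -/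
theorem stmt14 {G : Type*} [Group G] [Fintype G] (α : MulAut G)
    (h : ∃ g : G, Fintype.card G ≤ 3 * Function.minimalPeriod (⇑α) g) :
    ∃ g : G, Function.minimalPeriod (⇑α) g = orderOf α := by
  exact stmt14_aux (Fintype.card G) G α le_rfl h
end
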